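/- arXiv:2207.01421 — 6 statements merged into one kernel-verified Lean document; each statement's English description precedes it below -/
import Mathlib

section
/- For every fixed L > 0, the function ν ↦ J_ν(2L) is differentiable on ℝ and, as k → +∞ through positive integers, its derivative evaluated at negative integer order satisfies (d/dν)J_ν(2L)|_{ν=−k} ~ (−1)^{k+1}·√(2π/k)·(k/(eL))^k, i.e., the ratio of the two sides tends to 1. -/
/-!
Bessel function of the first kind of real order `ν` and argument `2L`, defined by its
absolutely convergent series, with `1/Γ` interpreted as `0` at nonpositive integers
(`Real.Gamma` vanishes there).
-/
noncomputable def besselJ (L ν : ℝ) : ℝ :=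
  ∑' j : ℕ, (-1 : ℝ) ^ j * L ^ (2 * (j : ℝ) + ν) * (Real.Gamma (ν + j + 1))⁻¹ / (Nat.factorial j)

open Real Filter Topology Finset

namespace BesselAux

noncomputable def Gc : ℂ → ℂ := fun z => (Complex.Gamma z)⁻¹

lemma hGc : Differentiable ℂ Gc := Complex.differentiable_one_div_Gamma

noncomputable def G : ℝ → ℝ := fun x => (Real.Gamma x)⁻¹

noncomputable def dG : ℝ → ℝ := fun x => (deriv Gc x).re

lemma G_eq (x : ℝ) : G x = (Gc x).re := by
  simp [G, Gc, Complex.Gamma_ofReal, ← Complex.ofReal_inv]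

lemma hG_deriv (x : ℝ) : HasDerivAt G (dG x) x := by
  have h : HasDerivAt Gc (deriv Gc x) (x : ℂ) := (hGc (x : ℂ)).hasDerivAt
  have h2 := h.real_of_complex
  refine h2.congr_of_eventuallyEq ?_
  filter_upwards with y using (G_eq y)

lemma G_cont : Continuous G := by
  have : Differentiable ℝ G := fun x => (hG_deriv x).differentiableAt
  exact this.continuous

lemma dG_cont : Continuous dG := by
  have h : AnalyticOnNhd ℂ Gc Set.univ := fun z _ => hGc.analyticAt z
  have h2 : AnalyticOnNhd ℂ (deriv Gc) Set.univ := h.deriv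
  have h3 : Continuous (deriv Gc) := by
    rw [← continuousOn_univ]
    exact fun z hz => ((h2 z hz).continuousAt).continuousWithinAt
  exact Complex.continuous_re.comp (h3.comp Complex.continuous_ofReal)

lemma G_rec (x : ℝ) : G x = x * G (x + 1) := by
  by_cases hx : Real.Gamma x = 0
  · rw [Real.Gamma_eq_zero_iff] at hx
    obtain ⟨m, rfl⟩ := hx
    cases m with
    | zero => simp [G, Real.Gamma_zero]
    | succ n =>
      have h1 : Real.Gamma (-((n + 1 : ℕ) : ℝ)) = 0 := Real.Gamma_neg_nat_eq_zero (n + 1)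
      have h2 : (-((n + 1 : ℕ) : ℝ)) + 1 = -((n : ℕ) : ℝ) := by push_cast; ring
      simp only [G, h1, h2, Real.Gamma_neg_nat_eq_zero n, inv_zero, mul_zero]
  · have hx0 : x ≠ 0 := by
      intro h; rw [h, Real.Gamma_zero] at hx; exact hx rfl
    have := Real.Gamma_add_one hx0
    rw [G, G, this, mul_inv]
    field_simp

lemma dG_rec (x : ℝ) : dG x = G (x + 1) + x * dG (x + 1) := by
  have h1 : HasDerivAt (fun y : ℝ => y * G (y + 1)) (1 * G (x + 1) + x * (dG (x + 1) * 1)) x := by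
    exact (hasDerivAt_id x).mul ((hG_deriv (x + 1)).comp (h₂ := G) (h := fun y : ℝ => y + 1) x ((hasDerivAt_id x).add_const 1))
  have h2 : HasDerivAt G (1 * G (x + 1) + x * (dG (x + 1) * 1)) x := by
    refine h1.congr_of_eventuallyEq ?_
    filter_upwards with y using (G_rec y).symm ▸ rfl
  have := (hG_deriv x).unique h2
  rw [this]; ring

lemma G_neg_nat (n : ℕ) : G (-(n : ℝ)) = 0 := by
  simp [G, Real.Gamma_neg_nat_eq_zero]

lemma G_one : G 1 = 1 := by simp [G, Real.Gamma_one]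

lemma G_nat_add_one (n : ℕ) : G ((n : ℝ) + 1) = ((Nat.factorial n : ℕ) : ℝ)⁻¹ := by
  simp [G, Real.Gamma_nat_eq_factorial]

lemma dG_neg_nat (n : ℕ) : dG (-(n : ℝ)) = (-1) ^ n * (Nat.factorial n : ℕ) := by
  induction n with
  | zero =>
    have := dG_rec 0
    simpa [G_one] using this
  | succ n ih =>
    have h := dG_rec (-((n + 1 : ℕ) : ℝ))
    have h2 : (-((n + 1 : ℕ) : ℝ)) + 1 = -((n : ℕ) : ℝ) := by push_cast; ring
    rw [h2] at h
    rw [h, G_neg_nat, ih, Nat.factorial_succ]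
    push_cast
    ring

lemma growth : ∃ C : ℝ, 0 < C ∧ ∀ x : ℝ, 1 ≤ x → |G x| ≤ C ∧ |dG x| ≤ C * x := by
  obtain ⟨C₁, hC₁⟩ := isCompact_Icc.exists_bound_of_continuousOn (s := Set.Icc (1:ℝ) 2)
    G_cont.continuousOn
  obtain ⟨C₂, hC₂⟩ := isCompact_Icc.exists_bound_of_continuousOn (s := Set.Icc (1:ℝ) 2)
    dG_cont.continuousOn
  set C := max C₁ C₂ + 1 with hC
  have hCpos : 0 < C := by
    have : (0:ℝ) ≤ C₁ := le_trans (abs_nonneg _) (hC₁ 1 (by norm_num))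
    have h1 : (0:ℝ) ≤ max C₁ C₂ := le_trans this (le_max_left _ _)
    linarith
  have hGC : ∀ x ∈ Set.Icc (1:ℝ) 2, |G x| ≤ C := fun x hx =>
    le_trans (hC₁ x hx) (by simp [hC]; nlinarith [le_max_left C₁ C₂])
  have hdGC : ∀ x ∈ Set.Icc (1:ℝ) 2, |dG x| ≤ C := fun x hx =>
    le_trans (hC₂ x hx) (by simp [hC]; nlinarith [le_max_right C₁ C₂])
  have key : ∀ n : ℕ, ∀ x ∈ Set.Icc (1:ℝ) 2, |G (x + n)| ≤ C ∧ |dG (x + n)| ≤ C * (n + 1) := by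
    intro n
    induction n with
    | zero =>
      intro x hx
      simpa using ⟨hGC x hx, by simpa using hdGC x hx⟩
    | succ n ih =>
      intro x hx
      obtain ⟨ihG, ihdG⟩ := ih x hx
      set y := x + (n : ℝ) with hy
      have hy1 : 1 ≤ y := by
        have := hx.1
        have : (0:ℝ) ≤ n := Nat.cast_nonneg n
        simp only [hy]; linarith [hx.1]
      have hyne : y ≠ 0 := by linarith
      have hGrec : G (y + 1) = G y / y := by
        have := G_rec y
        field_simp [this]
        linarith
      have hdGrec : dG (y + 1) = (dG y - G (y + 1)) / y := by
        have := dG_rec y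
        rw [this]; field_simp
        ring
      have hy1' : 1 ≤ |y| := by rwa [abs_of_pos (by linarith)]
      have hGle : |G (y + 1)| ≤ C := by
        rw [hGrec, abs_div]
        exact le_trans (div_le_self (abs_nonneg _) hy1') ihG
      have hdGle : |dG (y + 1)| ≤ C * ((n + 1 : ℕ) + 1) := by
        rw [hdGrec, abs_div]
        have h1 : |dG y - G (y + 1)| ≤ C * (n + 1) + C := by
          refine le_trans (abs_sub _ _) ?_
          exact add_le_add ihdG hGle
        refine le_trans (div_le_self (abs_nonneg _) hy1') (le_trans h1 ?_)
        push_cast; nlinarith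
      have hx1 : x + ((n + 1 : ℕ) : ℝ) = y + 1 := by push_cast [hy]; ring
      rw [hx1]
      exact ⟨hGle, hdGle⟩
  refine ⟨C, hCpos, fun x hx => ?_⟩
  set n := ⌊x - 1⌋₊ with hn
  have h0 : (0:ℝ) ≤ x - 1 := by linarith
  have h1 : (n : ℝ) ≤ x - 1 := Nat.floor_le h0
  have h2 : x - 1 < n + 1 := Nat.lt_floor_add_one (x - 1)
  have hmem : x - n ∈ Set.Icc (1:ℝ) 2 := ⟨by linarith, by linarith⟩
  have := key n (x - n) hmem
  rw [sub_add_cancel] at this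
  refine ⟨this.1, le_trans this.2 ?_⟩
  have : (n : ℝ) + 1 ≤ x := by linarith
  nlinarith

lemma bound_right (a : ℝ) :
    ∃ D : ℝ, 0 < D ∧ ∀ x : ℝ, a ≤ x → |G x| ≤ D ∧ |dG x| ≤ D * (|x| + 1) := by
  obtain ⟨C, hC, hbd⟩ := growth
  obtain ⟨C₁, hC₁⟩ := isCompact_Icc.exists_bound_of_continuousOn (s := Set.Icc a 2)
    G_cont.continuousOn
  obtain ⟨C₂, hC₂⟩ := isCompact_Icc.exists_bound_of_continuousOn (s := Set.Icc a 2)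
    dG_cont.continuousOn
  have hD : 0 < max C (max C₁ C₂) + 1 := by
    have : C ≤ max C (max C₁ C₂) := le_max_left _ _
    linarith
  refine ⟨max C (max C₁ C₂) + 1, hD, fun x hx => ?_⟩
  set D := max C (max C₁ C₂) + 1 with hDdef
  have hCD : C ≤ D := by have := le_max_left C (max C₁ C₂); linarith
  have hC₁D : C₁ ≤ D := by
    have := le_max_right C (max C₁ C₂); have := le_max_left C₁ C₂; simp only [hDdef]; linarith [le_max_right C (max C₁ C₂), le_max_left C₁ C₂]
  have hC₂D : C₂ ≤ D := by
    simp only [hDdef]; linarith [le_max_right C (max C₁ C₂), le_max_right C₁ C₂]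
  have habs : (1:ℝ) ≤ |x| + 1 := by have := abs_nonneg x; linarith
  by_cases h2 : x ≤ 2
  · have hmem : x ∈ Set.Icc a 2 := ⟨hx, h2⟩
    constructor
    · exact le_trans (hC₁ x hmem) hC₁D
    · refine le_trans (hC₂ x hmem) ?_
      nlinarith
  · push_neg at h2
    have h1 : 1 ≤ x := by linarith
    obtain ⟨hG1, hdG1⟩ := hbd x h1
    constructor
    · exact le_trans hG1 hCD
    · refine le_trans hdG1 ?_
      have : |x| = x := abs_of_pos (by linarith)
      nlinarith

noncomputable def term (L : ℝ) (j : ℕ) (ν : ℝ) : ℝ :=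
  (-1) ^ j * (L ^ 2) ^ j * G (ν + j + 1) / (Nat.factorial j)

noncomputable def term' (L : ℝ) (j : ℕ) (ν : ℝ) : ℝ :=
  (-1) ^ j * (L ^ 2) ^ j * dG (ν + j + 1) / (Nat.factorial j)

noncomputable def FF (L ν : ℝ) : ℝ := ∑' j : ℕ, term L j ν

noncomputable def FF' (L ν : ℝ) : ℝ := ∑' j : ℕ, term' L j ν

lemma hasDerivAt_term (L : ℝ) (n : ℕ) (y : ℝ) :
    HasDerivAt (fun z => term L n z) (term' L n y) y := by
  have h : HasDerivAt (fun z : ℝ => G (z + ((n : ℝ) + 1))) (dG (y + ((n:ℝ) + 1)) * 1) y :=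
    (hG_deriv (y + ((n:ℝ) + 1))).comp (h₂ := G) (h := fun z : ℝ => z + ((n:ℝ) + 1)) y ((hasDerivAt_id y).add_const ((n:ℝ) + 1))
  have h2 := (h.const_mul ((-1 : ℝ) ^ n * (L ^ 2) ^ n)).div_const ((Nat.factorial n : ℕ) : ℝ)
  have heq : (fun z => term L n z) =ᶠ[nhds y]
      (fun x : ℝ => (-1 : ℝ) ^ n * (L ^ 2) ^ n * G (x + ((n:ℝ) + 1)) /
        ((Nat.factorial n : ℕ) : ℝ)) :=
    Filter.Eventually.of_forall fun z => by simp only [term, add_assoc]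
  have h3 := h2.congr_of_eventuallyEq heq
  have hval : term' L n y = (-1 : ℝ) ^ n * (L ^ 2) ^ n * (dG (y + ((n:ℝ) + 1)) * 1) /
      ((Nat.factorial n : ℕ) : ℝ) := by
    simp only [term', add_assoc, mul_one]
  rw [hval]
  exact h3

lemma two_pow_ge (n : ℕ) : ((n : ℝ)) + 1 ≤ 2 ^ n := by
  exact_mod_cast Nat.succ_le_of_lt (Nat.lt_two_pow_self (n := n))

lemma abs_term' (L : ℝ) (n : ℕ) (y : ℝ) :
    ‖term' L n y‖ = (L ^ 2) ^ n * |dG (y + n + 1)| / (Nat.factorial n) := by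
  rw [Real.norm_eq_abs, term', abs_div, abs_mul, abs_mul, abs_pow, abs_pow, abs_neg,
    abs_one, one_pow, one_mul]
  rw [abs_of_nonneg (sq_nonneg L), Nat.abs_cast]

lemma abs_term (L : ℝ) (n : ℕ) (y : ℝ) :
    ‖term L n y‖ = (L ^ 2) ^ n * |G (y + n + 1)| / (Nat.factorial n) := by
  rw [Real.norm_eq_abs, term, abs_div, abs_mul, abs_mul, abs_pow, abs_pow, abs_neg,
    abs_one, one_pow, one_mul]
  rw [abs_of_nonneg (sq_nonneg L), Nat.abs_cast]

lemma hasDerivAt_FF (L ν₀ : ℝ) : HasDerivAt (FF L) (FF' L ν₀) ν₀ := by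
  obtain ⟨D, hD, hbd⟩ := bound_right ν₀
  set u : ℕ → ℝ := fun j => (D * (|ν₀| + 3)) * ((2 * L ^ 2) ^ j / (Nat.factorial j)) with hu_def
  have hu : Summable u := (Real.summable_pow_div_factorial (2 * L ^ 2)).mul_left _
  have habs0 : (0:ℝ) ≤ |ν₀| := abs_nonneg _
  have ueq : ∀ n : ℕ, u n = (L ^ 2) ^ n * (D * (|ν₀| + 3) * 2 ^ n) / (Nat.factorial n) := by
    intro n
    simp only [hu_def, mul_pow]
    ring
  have key : ∀ n : ℕ, ∀ y : ℝ, y ∈ Metric.ball ν₀ 1 →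
      |dG (y + n + 1)| ≤ D * (|ν₀| + 3) * 2 ^ n := by
    intro n y hy
    rw [Metric.mem_ball, Real.dist_eq] at hy
    obtain ⟨hy1, hy2⟩ := abs_lt.mp hy
    have hya : ν₀ ≤ y + n + 1 := by
      have h2 : (0:ℝ) ≤ n := Nat.cast_nonneg n
      linarith
    have hx := (hbd _ hya).2
    have habs : |y + (n:ℝ) + 1| ≤ |ν₀| + (n:ℝ) + 2 := by
      have hb1 : -|ν₀| ≤ ν₀ := neg_abs_le ν₀
      have hb2 : ν₀ ≤ |ν₀| := le_abs_self ν₀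
      have h2 : (0:ℝ) ≤ n := Nat.cast_nonneg n
      rw [abs_le]
      constructor <;> [skip; skip] <;> nlinarith
    have h2n := two_pow_ge n
    have step : |ν₀| + (n:ℝ) + 3 ≤ (|ν₀| + 3) * 2 ^ n := by
      nlinarith [mul_le_mul_of_nonneg_left h2n habs0]
    calc |dG (y + n + 1)| ≤ D * (|y + (n:ℝ) + 1| + 1) := hx
    _ ≤ D * ((|ν₀| + 3) * 2 ^ n) := by
        have : |y + (n:ℝ) + 1| + 1 ≤ (|ν₀| + 3) * 2 ^ n := by linarith
        nlinarith
    _ = D * (|ν₀| + 3) * 2 ^ n := by ring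
  have hbound : ∀ n : ℕ, ∀ y ∈ Metric.ball ν₀ 1, ‖term' L n y‖ ≤ u n := by
    intro n y hy
    rw [abs_term', ueq n]
    gcongr
    exact key n y hy
  have hsum0 : Summable (fun n => term L n ν₀) := by
    refine Summable.of_norm_bounded (g := u) hu ?_
    intro n
    have hya : ν₀ ≤ ν₀ + n + 1 := by
      have : (0:ℝ) ≤ n := Nat.cast_nonneg n; linarith
    have hG1 : |G (ν₀ + n + 1)| ≤ D * (|ν₀| + 3) * 2 ^ n := by
      refine le_trans (hbd _ hya).1 ?_
      have h2p : (1:ℝ) ≤ 2 ^ n := one_le_pow₀ (by norm_num : (1:ℝ) ≤ 2)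
      nlinarith [mul_le_mul_of_nonneg_left h2p hD.le,
        mul_nonneg (mul_nonneg hD.le habs0) (le_trans zero_le_one h2p)]
    rw [abs_term, ueq n]
    gcongr
  exact hasDerivAt_tsum_of_isPreconnected hu Metric.isOpen_ball
    (convex_ball ν₀ 1).isPreconnected (fun n y _ => hasDerivAt_term L n y)
    hbound (Metric.mem_ball_self one_pos) hsum0 (Metric.mem_ball_self one_pos)

lemma bound_at (ν : ℝ) : ∃ D : ℝ, 0 < D ∧ ∀ n : ℕ,
    |G (ν + n + 1)| ≤ D * 2 ^ n ∧ |dG (ν + n + 1)| ≤ D * 2 ^ n := by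
  obtain ⟨D, hD, hbd⟩ := bound_right ν
  have habs0 : (0:ℝ) ≤ |ν| := abs_nonneg _
  refine ⟨D * (|ν| + 3), by positivity, fun n => ?_⟩
  have hn0 : (0:ℝ) ≤ n := Nat.cast_nonneg n
  have hya : ν ≤ ν + n + 1 := by linarith
  have h2n := two_pow_ge n
  have h2p : (0:ℝ) < 2 ^ n := by positivity
  have habs : |ν + (n:ℝ) + 1| ≤ |ν| + n + 1 := by
    calc |ν + (n:ℝ) + 1| ≤ |ν + (n:ℝ)| + 1 := by simpa using abs_add_le (ν + n) 1
    _ ≤ |ν| + |(n:ℝ)| + 1 := by linarith [abs_add_le ν (n:ℝ)]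
    _ = |ν| + n + 1 := by rw [abs_of_nonneg hn0]
  have step : |ν| + (n:ℝ) + 2 ≤ (|ν| + 3) * 2 ^ n := by
    nlinarith [mul_le_mul_of_nonneg_left h2n habs0]
  constructor
  · refine le_trans (hbd _ hya).1 ?_
    nlinarith [mul_le_mul_of_nonneg_left h2n hD.le,
      mul_nonneg (mul_nonneg hD.le habs0) h2p.le]
  · refine le_trans (hbd _ hya).2 ?_
    have h1 : |ν + (n:ℝ) + 1| + 1 ≤ (|ν| + 3) * 2 ^ n := by linarith
    nlinarith

lemma summable_term (L ν : ℝ) : Summable (fun n => term L n ν) := by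
  obtain ⟨D, hD, hbd⟩ := bound_at ν
  refine Summable.of_norm_bounded (g := fun j => D * ((2 * L ^ 2) ^ j / (Nat.factorial j)))
    ((Real.summable_pow_div_factorial (2 * L ^ 2)).mul_left _) fun n => ?_
  rw [abs_term]
  show (L ^ 2) ^ n * |G (ν + n + 1)| / ((Nat.factorial n : ℕ) : ℝ) ≤
    D * ((2 * L ^ 2) ^ n / (Nat.factorial n))
  have heq : D * ((2 * L ^ 2) ^ n / (Nat.factorial n)) =
      (L ^ 2) ^ n * (D * 2 ^ n) / (Nat.factorial n) := by rw [mul_pow]; ring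
  rw [heq]
  gcongr
  exact (hbd n).1

lemma summable_term' (L ν : ℝ) : Summable (fun n => term' L n ν) := by
  obtain ⟨D, hD, hbd⟩ := bound_at ν
  refine Summable.of_norm_bounded (g := fun j => D * ((2 * L ^ 2) ^ j / (Nat.factorial j)))
    ((Real.summable_pow_div_factorial (2 * L ^ 2)).mul_left _) fun n => ?_
  rw [abs_term']
  show (L ^ 2) ^ n * |dG (ν + n + 1)| / ((Nat.factorial n : ℕ) : ℝ) ≤
    D * ((2 * L ^ 2) ^ n / (Nat.factorial n))
  have heq : D * ((2 * L ^ 2) ^ n / (Nat.factorial n)) =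
      (L ^ 2) ^ n * (D * 2 ^ n) / (Nat.factorial n) := by rw [mul_pow]; ring
  rw [heq]
  gcongr
  exact (hbd n).2

noncomputable def W (L : ℝ) : ℝ := ∑' i : ℕ, (2 * L ^ 2) ^ i / (Nat.factorial i)

noncomputable def Q (L : ℝ) (k : ℕ) : ℝ :=
  ∑ j ∈ Finset.range k,
    (L ^ 2) ^ j * ((Nat.factorial (k - 1 - j) : ℕ) : ℝ) / ((Nat.factorial j : ℕ) : ℝ)

lemma harg (k i : ℕ) : (-(k:ℝ)) + ((i + k : ℕ) : ℝ) + 1 = (i : ℝ) + 1 := by push_cast; ring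

lemma harg2 {k j : ℕ} (hjk : j < k) :
    (-(k:ℝ)) + (j : ℝ) + 1 = -(((k - 1 - j : ℕ) : ℕ) : ℝ) := by
  have h1 : (((k - 1 - j : ℕ) : ℕ) : ℝ) = (k : ℝ) - 1 - j := by
    have : k - 1 - j + (j + 1) = k := by omega
    have := congrArg (fun m : ℕ => (m : ℝ)) this
    push_cast at this
    linarith
  rw [h1]; ring

lemma FF_neg (L : ℝ) (k : ℕ) :
    FF L (-(k:ℝ)) = ∑' i : ℕ, term L (i + k) (-(k:ℝ)) := by
  have hs := summable_term L (-(k:ℝ))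
  have h := (Summable.sum_add_tsum_nat_add (f := fun n => term L n (-(k:ℝ))) k hs).symm
  have hzero : ∀ j ∈ Finset.range k, term L j (-(k:ℝ)) = 0 := by
    intro j hj
    rw [Finset.mem_range] at hj
    rw [term, harg2 hj, G_neg_nat]
    ring
  rw [FF, h, Finset.sum_eq_zero hzero, zero_add]

lemma FF'_neg (L : ℝ) {k : ℕ} (hk : 1 ≤ k) :
    FF' L (-(k:ℝ)) = (-1) ^ (k + 1) * Q L k + ∑' i : ℕ, term' L (i + k) (-(k:ℝ)) := by
  have hs := summable_term' L (-(k:ℝ))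
  have h := (Summable.sum_add_tsum_nat_add (f := fun n => term' L n (-(k:ℝ))) k hs).symm
  have hterm : ∀ j ∈ Finset.range k, term' L j (-(k:ℝ)) =
      (-1) ^ (k + 1) * ((L ^ 2) ^ j * ((Nat.factorial (k - 1 - j) : ℕ) : ℝ) /
        ((Nat.factorial j : ℕ) : ℝ)) := by
    intro j hj
    rw [Finset.mem_range] at hj
    rw [term', harg2 hj, dG_neg_nat]
    have hsign : (-1 : ℝ) ^ j * (-1) ^ (k - 1 - j) = (-1) ^ (k + 1) := by
      rw [← pow_add]
      have h1 : (-1 : ℝ) ^ (j + (k - 1 - j)) = (-1) ^ (k - 1) := by congr 1; omega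
      rw [h1]
      have h2 : k + 1 = (k - 1) + 2 := by omega
      rw [h2, pow_add]
      norm_num
    calc (-1:ℝ) ^ j * (L ^ 2) ^ j * ((-1) ^ (k - 1 - j) * ((Nat.factorial (k-1-j) : ℕ) : ℝ)) /
        ((Nat.factorial j : ℕ) : ℝ)
        = ((-1:ℝ) ^ j * (-1) ^ (k - 1 - j)) * ((L ^ 2) ^ j * ((Nat.factorial (k-1-j) : ℕ) : ℝ) /
          ((Nat.factorial j : ℕ) : ℝ)) := by ring
    _ = (-1) ^ (k + 1) * ((L ^ 2) ^ j * ((Nat.factorial (k-1-j) : ℕ) : ℝ) /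
          ((Nat.factorial j : ℕ) : ℝ)) := by rw [hsign]
  rw [FF', h, Finset.sum_congr rfl hterm, ← Finset.mul_sum, Q]

lemma rho_bound (L : ℝ) : ∃ B : ℝ, 0 < B ∧ ∀ k : ℕ,
    ‖FF L (-(k:ℝ))‖ ≤ B * ((L ^ 2) ^ k / (Nat.factorial k)) ∧
    ‖∑' i : ℕ, term' L (i + k) (-(k:ℝ))‖ ≤ B * ((L ^ 2) ^ k / (Nat.factorial k)) := by
  obtain ⟨C, hC, hgr⟩ := growth
  have hWsum : Summable (fun i : ℕ => (2 * L ^ 2) ^ i / ((Nat.factorial i : ℕ) : ℝ)) :=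
    Real.summable_pow_div_factorial (2 * L ^ 2)
  have hW0 : 0 ≤ W L := tsum_nonneg fun i => by positivity
  refine ⟨C * (W L + 1), by positivity, fun k => ?_⟩
  have hfac : ∀ i : ℕ, ((Nat.factorial i : ℕ) : ℝ) * ((Nat.factorial k : ℕ) : ℝ) ≤
      ((Nat.factorial (i + k) : ℕ) : ℝ) := by
    intro i
    exact_mod_cast Nat.le_of_dvd (Nat.factorial_pos _)
      (Nat.factorial_mul_factorial_dvd_factorial_add i k)
  have hdgi : ∀ i : ℕ, |dG ((i:ℝ) + 1)| ≤ C * 2 ^ i := by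
    intro i
    have h1 : (1:ℝ) ≤ (i:ℝ) + 1 := by have : (0:ℝ) ≤ i := Nat.cast_nonneg i; linarith
    exact le_trans (hgr _ h1).2 (mul_le_mul_of_nonneg_left (two_pow_ge i) hC.le)
  have hgi : ∀ i : ℕ, |G ((i:ℝ) + 1)| ≤ C * 2 ^ i := by
    intro i
    have h1 : (1:ℝ) ≤ (i:ℝ) + 1 := by have : (0:ℝ) ≤ i := Nat.cast_nonneg i; linarith
    have h2 : (1:ℝ) ≤ 2 ^ i := one_le_pow₀ (by norm_num : (1:ℝ) ≤ 2)
    refine le_trans (hgr _ h1).1 ?_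
    nlinarith
  have keybound : ∀ (v : ℝ) (i : ℕ), |v| ≤ C * 2 ^ i →
      (L ^ 2) ^ (i + k) * |v| / ((Nat.factorial (i + k) : ℕ) : ℝ) ≤
        (C * ((L ^ 2) ^ k / (Nat.factorial k))) * ((2 * L ^ 2) ^ i / (Nat.factorial i)) := by
    intro v i hv
    have h1 : (L ^ 2) ^ (i + k) * |v| ≤ (L ^ 2) ^ (i + k) * (C * 2 ^ i) := by
      exact mul_le_mul_of_nonneg_left hv (by positivity)
    have h2 : (0:ℝ) < ((Nat.factorial i : ℕ) : ℝ) * ((Nat.factorial k : ℕ) : ℝ) := by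
      have := Nat.factorial_pos i; have := Nat.factorial_pos k
      positivity
    calc (L ^ 2) ^ (i + k) * |v| / ((Nat.factorial (i + k) : ℕ) : ℝ)
        ≤ (L ^ 2) ^ (i + k) * (C * 2 ^ i) /
          (((Nat.factorial i : ℕ) : ℝ) * ((Nat.factorial k : ℕ) : ℝ)) := by
          apply div_le_div₀ (by positivity) h1 h2 (hfac i)
    _ = (C * ((L ^ 2) ^ k / (Nat.factorial k))) * ((2 * L ^ 2) ^ i / (Nat.factorial i)) := by
          rw [pow_add, mul_pow]
          ring
  have hBle : C * ((L ^ 2) ^ k / (Nat.factorial k)) * W L ≤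
      (C * (W L + 1)) * ((L ^ 2) ^ k / (Nat.factorial k)) := by
    have h1 : (0:ℝ) ≤ (L ^ 2) ^ k / (Nat.factorial k) := by positivity
    nlinarith
  constructor
  · rw [FF_neg]
    have hs : Summable (fun i => term L (i + k) (-(k:ℝ))) :=
      (summable_nat_add_iff (f := fun n => term L n (-(k:ℝ))) k).2 (summable_term L _)
    have hsn : Summable (fun i => ‖term L (i + k) (-(k:ℝ))‖) := by
      simpa [Real.norm_eq_abs] using (summable_abs_iff.mpr hs)
    have hptw : ∀ i : ℕ, ‖term L (i + k) (-(k:ℝ))‖ ≤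
        (C * ((L ^ 2) ^ k / (Nat.factorial k))) * ((2 * L ^ 2) ^ i / (Nat.factorial i)) := by
      intro i
      rw [abs_term, harg k i]
      exact keybound _ i (hgi i)
    calc ‖∑' i, term L (i + k) (-(k:ℝ))‖ ≤ ∑' i, ‖term L (i + k) (-(k:ℝ))‖ :=
          norm_tsum_le_tsum_norm hsn
    _ ≤ ∑' i : ℕ, (C * ((L ^ 2) ^ k / (Nat.factorial k))) * ((2 * L ^ 2) ^ i / (Nat.factorial i)) :=
          Summable.tsum_le_tsum hptw hsn (hWsum.mul_left _)
    _ = C * ((L ^ 2) ^ k / (Nat.factorial k)) * W L := tsum_mul_left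
    _ ≤ (C * (W L + 1)) * ((L ^ 2) ^ k / (Nat.factorial k)) := hBle
  · have hs : Summable (fun i => term' L (i + k) (-(k:ℝ))) :=
      (summable_nat_add_iff (f := fun n => term' L n (-(k:ℝ))) k).2 (summable_term' L _)
    have hsn : Summable (fun i => ‖term' L (i + k) (-(k:ℝ))‖) := by
      simpa [Real.norm_eq_abs] using (summable_abs_iff.mpr hs)
    have hptw : ∀ i : ℕ, ‖term' L (i + k) (-(k:ℝ))‖ ≤
        (C * ((L ^ 2) ^ k / (Nat.factorial k))) * ((2 * L ^ 2) ^ i / (Nat.factorial i)) := by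
      intro i
      rw [abs_term', harg k i]
      exact keybound _ i (hdgi i)
    calc ‖∑' i, term' L (i + k) (-(k:ℝ))‖ ≤ ∑' i, ‖term' L (i + k) (-(k:ℝ))‖ :=
          norm_tsum_le_tsum_norm hsn
    _ ≤ ∑' i : ℕ, (C * ((L ^ 2) ^ k / (Nat.factorial k))) * ((2 * L ^ 2) ^ i / (Nat.factorial i)) :=
          Summable.tsum_le_tsum hptw hsn (hWsum.mul_left _)
    _ = C * ((L ^ 2) ^ k / (Nat.factorial k)) * W L := tsum_mul_left
    _ ≤ (C * (W L + 1)) * ((L ^ 2) ^ k / (Nat.factorial k)) := hBle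

lemma tendsto_Q (L : ℝ) :
    Tendsto (fun k : ℕ => Q L k / ((Nat.factorial (k - 1) : ℕ) : ℝ)) atTop (𝓝 1) := by
  classical
  set f : ℕ → ℕ → ℝ := fun k j =>
    if j < k then (L ^ 2) ^ j * ((Nat.factorial (k - 1 - j) : ℕ) : ℝ) /
      (((Nat.factorial j : ℕ) : ℝ) * ((Nat.factorial (k - 1) : ℕ) : ℝ)) else 0 with hf
  have hQ : ∀ k : ℕ, Q L k / ((Nat.factorial (k - 1) : ℕ) : ℝ) = ∑' j, f k j := by
    intro k
    rw [Q, Finset.sum_div]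
    rw [tsum_eq_sum (s := Finset.range k)
      (fun j hj => by rw [hf]; simp only; rw [if_neg (by simpa using hj)])]
    apply Finset.sum_congr rfl
    intro j hj
    rw [Finset.mem_range] at hj
    rw [hf]; simp only; rw [if_pos hj, div_div]
  have hgoal : (∑' j : ℕ, if j = 0 then (1:ℝ) else 0) = 1 := tsum_ite_eq 0 1
  have hmain : Tendsto (fun k => ∑' j, f k j) atTop
      (𝓝 (∑' j : ℕ, if j = 0 then (1:ℝ) else 0)) := by
    apply tendsto_tsum_of_dominated_convergence
      (bound := fun j => (L ^ 2) ^ j / ((Nat.factorial j : ℕ) : ℝ))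
      (Real.summable_pow_div_factorial _)
    · intro j
      rcases Nat.eq_zero_or_pos j with rfl | hj
      · simp only [if_pos rfl]
        apply Tendsto.congr' ?_ (tendsto_const_nhds (x := (1:ℝ)))
        filter_upwards [eventually_ge_atTop 1] with k hk
        rw [hf]; simp only
        rw [if_pos (by omega : 0 < k)]
        have h0 : ((Nat.factorial (k - 1) : ℕ) : ℝ) ≠ 0 := by
          exact_mod_cast (Nat.factorial_pos _).ne'
        simp [Nat.factorial_zero, div_self h0]
      · simp only [if_neg (by omega : ¬ j = 0)]
        apply squeeze_zero' (g := fun k : ℕ => ((L ^ 2) ^ j / ((Nat.factorial j : ℕ) : ℝ)) /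
          ((k - 1 : ℕ) : ℝ))
        · filter_upwards with k
          rw [hf]; simp only
          split
          · positivity
          · exact le_refl 0
        · filter_upwards [eventually_ge_atTop (j + 2)] with k hk
          rw [hf]; simp only
          rw [if_pos (by omega : j < k)]
          have hn : (k - 1) * Nat.factorial (k - 1 - j) ≤ Nat.factorial (k - 1) := by
            have h1 : Nat.factorial (k - 1 - j) ≤ Nat.factorial (k - 2) :=
              Nat.factorial_le (by omega)
            have h2 : (k - 1) * Nat.factorial (k - 2) = Nat.factorial (k - 1) := by
              have he : k - 2 = (k - 1) - 1 := by omega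
              rw [he]
              exact Nat.mul_factorial_pred (by omega)
            calc (k - 1) * Nat.factorial (k - 1 - j)
                ≤ (k - 1) * Nat.factorial (k - 2) := Nat.mul_le_mul_left _ h1
            _ = Nat.factorial (k - 1) := h2
          have hnr : ((k - 1 : ℕ) : ℝ) * ((Nat.factorial (k - 1 - j) : ℕ) : ℝ) ≤
              ((Nat.factorial (k - 1) : ℕ) : ℝ) := by exact_mod_cast hn
          have hpos : (0:ℝ) < ((Nat.factorial j : ℕ) : ℝ) * (((k - 1 : ℕ) : ℝ) *
              ((Nat.factorial (k - 1 - j) : ℕ) : ℝ)) := by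
            have := Nat.factorial_pos j
            have := Nat.factorial_pos (k - 1 - j)
            have : (0:ℕ) < k - 1 := by omega
            positivity
          calc (L ^ 2) ^ j * ((Nat.factorial (k - 1 - j) : ℕ) : ℝ) /
              (((Nat.factorial j : ℕ) : ℝ) * ((Nat.factorial (k - 1) : ℕ) : ℝ))
              ≤ (L ^ 2) ^ j * ((Nat.factorial (k - 1 - j) : ℕ) : ℝ) /
                (((Nat.factorial j : ℕ) : ℝ) * (((k - 1 : ℕ) : ℝ) *
                  ((Nat.factorial (k - 1 - j) : ℕ) : ℝ))) := by
                apply div_le_div_of_nonneg_left (by positivity) hpos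
                exact mul_le_mul_of_nonneg_left hnr (by positivity)
          _ = (L ^ 2) ^ j / ((Nat.factorial j : ℕ) : ℝ) / ((k - 1 : ℕ) : ℝ) := by
                have hfj : ((Nat.factorial (k - 1 - j) : ℕ) : ℝ) ≠ 0 := by
                  exact_mod_cast (Nat.factorial_pos _).ne'
                have hj0 : ((Nat.factorial j : ℕ) : ℝ) ≠ 0 := by
                  exact_mod_cast (Nat.factorial_pos _).ne'
                have hk1 : ((k - 1 : ℕ) : ℝ) ≠ 0 := by
                  have : 0 < k - 1 := by omega
                  exact_mod_cast this.ne'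
                field_simp
        · apply Tendsto.div_atTop (tendsto_const_nhds)
          exact tendsto_natCast_atTop_atTop.comp (tendsto_sub_atTop_nat 1)
    · filter_upwards with k
      intro j
      rw [hf]; simp only
      split
      · rename_i hjk
        rw [Real.norm_eq_abs, abs_of_nonneg (by positivity)]
        have h1 : ((Nat.factorial (k - 1 - j) : ℕ) : ℝ) ≤ ((Nat.factorial (k - 1) : ℕ) : ℝ) := by
          exact_mod_cast Nat.factorial_le (Nat.sub_le _ _)
        have h2 : (0:ℝ) < ((Nat.factorial (k - 1) : ℕ) : ℝ) := by
          exact_mod_cast Nat.factorial_pos _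
        calc (L ^ 2) ^ j * ((Nat.factorial (k - 1 - j) : ℕ) : ℝ) /
            (((Nat.factorial j : ℕ) : ℝ) * ((Nat.factorial (k - 1) : ℕ) : ℝ))
            ≤ (L ^ 2) ^ j * ((Nat.factorial (k - 1) : ℕ) : ℝ) /
              (((Nat.factorial j : ℕ) : ℝ) * ((Nat.factorial (k - 1) : ℕ) : ℝ)) := by
              gcongr
        _ = (L ^ 2) ^ j / ((Nat.factorial j : ℕ) : ℝ) := by
              rw [mul_comm ((Nat.factorial j : ℕ) : ℝ) _, ← div_div]
              rw [mul_div_assoc, div_self h2.ne', mul_one]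
      · simp only [norm_zero]
        positivity
  rw [hgoal] at hmain
  exact Tendsto.congr (fun k => (hQ k).symm) hmain

lemma tendsto_stirling :
    Tendsto (fun k : ℕ => ((Nat.factorial (k - 1) : ℕ) : ℝ) /
      (Real.sqrt (2 * π / k) * ((k : ℝ) / Real.exp 1) ^ k)) atTop (𝓝 1) := by
  have h1 : Tendsto (fun k : ℕ => Stirling.stirlingSeq k / Real.sqrt π) atTop (𝓝 1) := by
    have h := Stirling.tendsto_stirlingSeq_sqrt_pi.div_const (Real.sqrt π)
    rwa [div_self (Real.sqrt_ne_zero'.mpr Real.pi_pos)] at h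
  refine h1.congr' ?_
  filter_upwards [eventually_ge_atTop 1] with k hk
  have hk0 : (0:ℝ) < (k : ℝ) := by exact_mod_cast hk
  have hfk : ((Nat.factorial (k - 1) : ℕ) : ℝ) = ((Nat.factorial k : ℕ) : ℝ) / (k : ℝ) := by
    rw [eq_div_iff hk0.ne']
    exact_mod_cast (by rw [mul_comm]; exact Nat.mul_factorial_pred (Nat.one_le_iff_ne_zero.mp hk) :
      Nat.factorial (k - 1) * k = Nat.factorial k)
  have key : (k : ℝ) * Real.sqrt (2 * π / k) = Real.sqrt π * Real.sqrt (2 * k) := by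
    have h2 : Real.sqrt ((k:ℝ) ^ 2 * (2 * π / k)) = (k:ℝ) * Real.sqrt (2 * π / k) := by
      rw [Real.sqrt_mul (sq_nonneg _), Real.sqrt_sq hk0.le]
    have h3 : (k:ℝ) ^ 2 * (2 * π / k) = π * (2 * k) := by field_simp
    have h4 : Real.sqrt (π * (2 * k)) = Real.sqrt π * Real.sqrt (2 * k) :=
      Real.sqrt_mul Real.pi_pos.le _
    rw [← h2, h3, h4]
  rw [Stirling.stirlingSeq, hfk, div_div, div_div]
  congr 1
  have : (Real.sqrt (2 * (k:ℝ)) * ((k:ℝ) / Real.exp 1) ^ k) * Real.sqrt π =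
      ((k:ℝ) * Real.sqrt (2 * π / k)) * ((k:ℝ) / Real.exp 1) ^ k := by
    rw [key]; ring
  rw [this]
  ring

end BesselAux
namespace BesselAux

lemma besselJ_eq {L : ℝ} (hL : 0 < L) (ν : ℝ) : besselJ L ν = L ^ ν * FF L ν := by
  rw [besselJ, FF, ← tsum_mul_left]
  congr 1
  funext j
  have hpow : L ^ (2 * (j:ℝ) + ν) = (L ^ 2) ^ j * L ^ ν := by
    rw [Real.rpow_add hL]
    congr 1
    rw [show (2 * (j:ℝ)) = ((2 * j : ℕ) : ℝ) by push_cast; ring, Real.rpow_natCast, pow_mul]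
  rw [hpow]
  simp only [term, G]
  ring

lemma hasDerivAt_besselJ {L : ℝ} (hL : 0 < L) (ν : ℝ) :
    HasDerivAt (besselJ L) (L ^ ν * Real.log L * FF L ν + L ^ ν * FF' L ν) ν := by
  have h1 : HasDerivAt (fun x : ℝ => L ^ x) (L ^ ν * Real.log L) ν :=
    (Real.hasStrictDerivAt_const_rpow hL ν).hasDerivAt
  have h2 := h1.mul (hasDerivAt_FF L ν)
  exact h2.congr_of_eventuallyEq
    (Filter.Eventually.of_forall fun x => besselJ_eq hL x)

end BesselAux

open BesselAux

/-- for fixed `L > 0`, the map `ν ↦ J_ν(2L)` is differentiable on `ℝ` and,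
as `k → +∞` through positive integers,
`(d/dν)J_ν(2L)|_{ν=-k} ~ (-1)^{k+1} √(2π/k) (k/(eL))^k`. -/
theorem besselJ_deriv_asymptotic_of_large_negative_order (L : ℝ) (hL : 0 < L) :
    Differentiable ℝ (besselJ L) ∧
    Filter.Tendsto
      (fun k : ℕ =>
        deriv (besselJ L) (-(k : ℝ)) /
          ((-1 : ℝ) ^ (k + 1) * Real.sqrt (2 * Real.pi / k) *
            ((k : ℝ) / (Real.exp 1 * L)) ^ k))
      Filter.atTop (nhds 1) := by
  constructor
  · exact fun ν => (hasDerivAt_besselJ hL ν).differentiableAt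
  obtain ⟨B, hB, hbd⟩ := rho_bound L
  set ρ : ℕ → ℝ := fun k => (-1) ^ (k + 1) *
    (Real.log L * FF L (-(k:ℝ)) + ∑' i : ℕ, term' L (i + k) (-(k:ℝ))) with hρ
  have hrho_le : ∀ k : ℕ, ‖ρ k‖ ≤ (|Real.log L| + 1) * B * ((L ^ 2) ^ k / (Nat.factorial k)) := by
    intro k
    rw [hρ]
    simp only
    rw [norm_mul, norm_pow, norm_neg, norm_one, one_pow, one_mul]
    calc ‖Real.log L * FF L (-(k:ℝ)) + ∑' i : ℕ, term' L (i + k) (-(k:ℝ))‖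
        ≤ ‖Real.log L * FF L (-(k:ℝ))‖ + ‖∑' i : ℕ, term' L (i + k) (-(k:ℝ))‖ := norm_add_le _ _
    _ ≤ |Real.log L| * (B * ((L ^ 2) ^ k / (Nat.factorial k))) +
          B * ((L ^ 2) ^ k / (Nat.factorial k)) := by
        rw [norm_mul]
        exact add_le_add (mul_le_mul_of_nonneg_left (hbd k).1 (abs_nonneg _)) (hbd k).2
    _ = (|Real.log L| + 1) * B * ((L ^ 2) ^ k / (Nat.factorial k)) := by ring
  have hC : Tendsto (fun k : ℕ => ρ k / ((Nat.factorial (k - 1) : ℕ) : ℝ)) atTop (𝓝 0) := by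
    have hgt : Tendsto (fun k : ℕ => (|Real.log L| + 1) * B *
        ((L ^ 2) ^ k / ((Nat.factorial k : ℕ) : ℝ))) atTop (𝓝 0) := by
      have h0 := (Real.summable_pow_div_factorial (L ^ 2)).tendsto_atTop_zero
      have := h0.const_mul ((|Real.log L| + 1) * B)
      simpa using this
    refine squeeze_zero_norm (fun k => ?_) hgt
    · 
      have hfk1 : (1:ℝ) ≤ ((Nat.factorial (k - 1) : ℕ) : ℝ) := by
        exact_mod_cast Nat.one_le_iff_ne_zero.mpr (Nat.factorial_pos _).ne'
      rw [norm_div]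
      calc ‖ρ k‖ / ‖((Nat.factorial (k - 1) : ℕ) : ℝ)‖
          ≤ ‖ρ k‖ := by
            rw [Real.norm_eq_abs ((Nat.factorial (k-1) : ℕ) : ℝ), abs_of_pos (by linarith)]
            exact div_le_self (norm_nonneg _) hfk1
      _ ≤ _ := hrho_le k
  have hQt := tendsto_Q L
  have hSt := tendsto_stirling
  have hlim : Tendsto (fun k : ℕ =>
      ((Q L k + ρ k) / ((Nat.factorial (k - 1) : ℕ) : ℝ)) *
        (((Nat.factorial (k - 1) : ℕ) : ℝ) /
          (Real.sqrt (2 * π / k) * ((k : ℝ) / Real.exp 1) ^ k))) atTop (𝓝 1) := by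
    have h := (hQt.add hC).mul hSt
    rw [add_zero, one_mul] at h
    refine h.congr fun k => ?_
    rw [← add_div]
  refine hlim.congr' ?_
  filter_upwards [eventually_ge_atTop 1] with k hk
  have hk0 : (0:ℝ) < (k:ℝ) := by exact_mod_cast hk
  have hE : (0:ℝ) < Real.sqrt (2 * π / k) * ((k : ℝ) / Real.exp 1) ^ k := by
    apply mul_pos
    · apply Real.sqrt_pos.mpr
      have := Real.pi_pos
      positivity
    · positivity
  have hfk0 : ((Nat.factorial (k - 1) : ℕ) : ℝ) ≠ 0 := by
    exact_mod_cast (Nat.factorial_pos _).ne'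
  have hsgn : ((-1:ℝ)) ^ (k + 1) ≠ 0 := pow_ne_zero _ (by norm_num)
  have hLk : (0:ℝ) < L ^ k := pow_pos hL k
  have hs2 : ((-1:ℝ)) ^ (k + 1) * ((-1:ℝ)) ^ (k + 1) = 1 := by
    rw [← pow_add]
    exact Even.neg_one_pow ⟨k + 1, by ring⟩
  have hder : deriv (besselJ L) (-(k:ℝ)) =
      (-1:ℝ) ^ (k + 1) * (Q L k + ρ k) / L ^ k := by
    rw [(hasDerivAt_besselJ hL (-(k:ℝ))).deriv, FF'_neg L hk]
    have hrpow : L ^ (-(k:ℝ)) = (L ^ k)⁻¹ := by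
      rw [Real.rpow_neg hL.le, Real.rpow_natCast]
    rw [hrpow, hρ]
    simp only
    rw [mul_add ((-1:ℝ) ^ (k + 1)) (Q L k), ← mul_assoc, hs2, one_mul, div_eq_mul_inv]
    ring
  have hden : (-1:ℝ) ^ (k + 1) * Real.sqrt (2 * Real.pi / k) *
      ((k:ℝ) / (Real.exp 1 * L)) ^ k =
      (-1:ℝ) ^ (k + 1) * (Real.sqrt (2 * π / k) * ((k:ℝ) / Real.exp 1) ^ k) / L ^ k := by
    rw [show (k:ℝ) / (Real.exp 1 * L) = ((k:ℝ) / Real.exp 1) / L from (div_div _ _ _).symm,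
      div_pow]
    ring
  rw [div_mul_div_cancel₀ hfk0, hder, hden, div_div_div_comm,
    mul_div_mul_left _ _ hsgn, div_self hLk.ne', div_one]
end

section
/- For every L > 0 and all a, b ∈ ℤ' with a ≠ b, the series Σ_{l∈ℤ'_+} J_{a+l}(2L) J_{b+l}(2L) converges absolutely and equals L·(J_{a−1/2}(2L) J_{b+1/2}(2L) − J_{a+1/2}(2L) J_{b−1/2}(2L)) / (a − b). -/
/-!
Bessel functions of the first kind of integer order and argument `2L`:
`J_n(2L) = ∑_{j≥0} (-1)^j L^{2j+n}/(j!(n+j)!)` for `n ≥ 0`, and `J_{-n} = (-1)^n J_n`.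

We parametrize the half-integers `ℤ' = ℤ + 1/2` by `ℤ`, the half-integer `a = m + 1/2`
corresponding to `m : ℤ`; a half-integer `l ∈ ℤ'_+` is `l = j + 1/2` with `j : ℕ`, so that
`a + l = m + j + 1 ∈ ℤ`, `a - 1/2 = m`, `a + 1/2 = m + 1` and `a - b = m - n`.
-/
noncomputable def besselJnat (L : ℝ) (n : ℕ) : ℝ :=
  ∑' j : ℕ, (-1 : ℝ) ^ j * L ^ (2 * j + n) / (Nat.factorial j * Nat.factorial (n + j))

noncomputable def besselJint (L : ℝ) (n : ℤ) : ℝ :=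
  if 0 ≤ n then besselJnat L n.toNat else (-1 : ℝ) ^ (-n).toNat * besselJnat L (-n).toNat

open Nat Filter Topology Finset

noncomputable def besselTerm (L : ℝ) (n : ℕ) (j : ℕ) : ℝ :=
  (-1 : ℝ) ^ j * L ^ (2 * j + n) / (Nat.factorial j * Nat.factorial (n + j))

lemma besselJnat_eq (L : ℝ) (n : ℕ) : besselJnat L n = ∑' j : ℕ, besselTerm L n j := rfl

noncomputable def bC (L : ℝ) : ℝ := ∑' j : ℕ, L ^ (2 * j) / (Nat.factorial j)
noncomputable def bD (L : ℝ) : ℝ := ∑' j : ℕ, L ^ j / (Nat.factorial j)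

lemma summable_bC (L : ℝ) : Summable (fun j : ℕ => L ^ (2 * j) / (Nat.factorial j)) := by
  simpa [pow_mul] using Real.summable_pow_div_factorial (L ^ 2)

lemma besselTerm_abs (L : ℝ) (hL : 0 < L) (n j : ℕ) :
    |besselTerm L n j| = L ^ (2 * j + n) / (Nat.factorial j * Nat.factorial (n + j)) := by
  rw [besselTerm, abs_div, abs_mul, abs_pow, abs_neg, abs_one, one_pow, one_mul,
    abs_pow, abs_of_pos hL]
  congr 1
  rw [abs_of_pos]
  positivity

lemma besselTerm_abs_le (L : ℝ) (hL : 0 < L) (n j : ℕ) :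
    |besselTerm L n j| ≤ L ^ n / (Nat.factorial n) * (L ^ (2 * j) / (Nat.factorial j)) := by
  rw [besselTerm_abs L hL]
  have h1 : (Nat.factorial n : ℝ) ≤ Nat.factorial (n + j) := by
    exact_mod_cast Nat.factorial_le (Nat.le_add_right n j)
  have h2 : L ^ n / (Nat.factorial n) * (L ^ (2 * j) / (Nat.factorial j))
      = L ^ (2 * j + n) / (Nat.factorial j * Nat.factorial n) := by
    rw [pow_add]; ring
  rw [h2]
  gcongr

lemma summable_abs_besselTerm (L : ℝ) (hL : 0 < L) (n : ℕ) :
    Summable (fun j => |besselTerm L n j|) :=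
  Summable.of_nonneg_of_le (fun _ => abs_nonneg _) (besselTerm_abs_le L hL n)
    ((summable_bC L).mul_left _)

lemma summable_besselTerm (L : ℝ) (hL : 0 < L) (n : ℕ) :
    Summable (fun j => besselTerm L n j) :=
  (summable_abs_besselTerm L hL n).of_abs

lemma bC_nonneg (L : ℝ) (hL : 0 < L) : 0 ≤ bC L :=
  tsum_nonneg (fun j => by positivity)

lemma bD_nonneg (L : ℝ) (hL : 0 < L) : 0 ≤ bD L :=
  tsum_nonneg (fun j => by positivity)

lemma besselJnat_abs_le (L : ℝ) (hL : 0 < L) (n : ℕ) :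
    |besselJnat L n| ≤ bC L * (L ^ n / (Nat.factorial n)) := by
  rw [besselJnat_eq]
  have hn : Summable fun j : ℕ => ‖besselTerm L n j‖ := by
    simpa [Real.norm_eq_abs] using summable_abs_besselTerm L hL n
  have h0 := norm_tsum_le_tsum_norm hn
  simp only [Real.norm_eq_abs] at h0
  calc |∑' j : ℕ, besselTerm L n j| ≤ ∑' j : ℕ, |besselTerm L n j| := h0
    _ ≤ ∑' j : ℕ, L ^ n / (Nat.factorial n) * (L ^ (2 * j) / (Nat.factorial j)) :=
        Summable.tsum_le_tsum (besselTerm_abs_le L hL n) (summable_abs_besselTerm L hL n)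
          ((summable_bC L).mul_left _)
    _ = L ^ n / (Nat.factorial n) * bC L := tsum_mul_left
    _ = bC L * (L ^ n / (Nat.factorial n)) := by ring

lemma pow_div_factorial_le_bD (L : ℝ) (hL : 0 < L) (n : ℕ) :
    L ^ n / (Nat.factorial n) ≤ bD L :=
  Summable.le_tsum (Real.summable_pow_div_factorial L) n (fun j _ => by positivity)

lemma besselJnat_abs_le' (L : ℝ) (hL : 0 < L) (n : ℕ) :
    |besselJnat L n| ≤ bC L * bD L := by
  refine (besselJnat_abs_le L hL n).trans ?_
  exact mul_le_mul_of_nonneg_left (pow_div_factorial_le_bD L hL n) (bC_nonneg L hL)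

lemma besselJnat_rec (L : ℝ) (hL : 0 < L) (n : ℕ) :
    L * besselJnat L n + L * besselJnat L (n + 2) = (n + 1) * besselJnat L (n + 1) := by
  have hs0 := summable_besselTerm L hL n
  have hs1 := summable_besselTerm L hL (n + 1)
  have hs2 := summable_besselTerm L hL (n + 2)
  set g : ℕ → ℝ := fun j => (n + 1 : ℝ) * besselTerm L (n + 1) j - L * besselTerm L n j with hg
  have hsg : Summable g := (hs1.mul_left _).sub (hs0.mul_left _)
  have hg0 : g 0 = 0 := by
    simp only [hg, besselTerm, Nat.factorial, pow_zero, mul_zero, add_zero, Nat.add_zero]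
    push_cast
    field_simp
    ring
  have hgs : ∀ j : ℕ, g (j + 1) = L * besselTerm L (n + 2) j := by
    intro j
    simp only [hg, besselTerm]
    have e1 : 2 * (j + 1) + (n + 1) = 2 * j + n + 3 := by ring
    have e2 : 2 * (j + 1) + n = 2 * j + n + 2 := by ring
    have e3 : 2 * j + (n + 2) = 2 * j + n + 2 := by ring
    have e4 : n + 1 + (j + 1) = n + j + 2 := by ring
    have e5 : n + (j + 1) = n + j + 1 := by ring
    have e6 : n + 2 + j = n + j + 2 := by ring
    rw [e1, e2, e3, e4, e5, e6, Nat.factorial_succ j, Nat.factorial_succ (n + j + 1)]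
    have hfj : (Nat.factorial j : ℝ) ≠ 0 := by exact_mod_cast (Nat.factorial_pos j).ne'
    have hfn1 : (Nat.factorial (n + j + 1) : ℝ) ≠ 0 := by
      exact_mod_cast (Nat.factorial_pos (n + j + 1)).ne'
    have hfn2 : (Nat.factorial (n + j + 2) : ℝ) ≠ 0 := by
      exact_mod_cast (Nat.factorial_pos (n + j + 2)).ne'
    have hfact : ((n + j + 2) : ℝ) * Nat.factorial (n + j + 1) = Nat.factorial (n + j + 2) := by
      exact_mod_cast (Nat.factorial_succ (n + j + 1)).symm
    push_cast
    rw [pow_succ L (2 * j + n + 2), pow_succ (-1 : ℝ) j]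
    field_simp
    ring
  have h1 : ∑' j, g j = (n + 1 : ℝ) * besselJnat L (n + 1) - L * besselJnat L n := by
    rw [hg, Summable.tsum_sub (hs1.mul_left _) (hs0.mul_left _), tsum_mul_left, tsum_mul_left,
      besselJnat_eq, besselJnat_eq]
  have h2 : ∑' j, g j = L * besselJnat L (n + 2) := by
    rw [Summable.tsum_eq_zero_add hsg, hg0, zero_add, tsum_congr hgs, tsum_mul_left, besselJnat_eq]
  rw [h2] at h1
  linarith

lemma besselJint_natCast (L : ℝ) (s : ℕ) : besselJint L s = besselJnat L s := by
  simp [besselJint]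

lemma besselJint_neg_natCast (L : ℝ) (s : ℕ) :
    besselJint L (-(s : ℤ)) = (-1 : ℝ) ^ s * besselJnat L s := by
  rcases Nat.eq_zero_or_pos s with h | h
  · subst h; simp [besselJint]
  · rw [besselJint, if_neg (by omega)]
    simp

lemma besselJint_rec (L : ℝ) (hL : 0 < L) (k : ℤ) :
    L * besselJint L (k - 1) + L * besselJint L (k + 1) = (k : ℝ) * besselJint L k := by
  obtain ⟨s, rfl | rfl⟩ := k.eq_nat_or_neg
  · cases s with
    | zero =>
      have e1 : ((0 : ℕ) : ℤ) - 1 = -((1 : ℕ) : ℤ) := by norm_num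
      have e2 : ((0 : ℕ) : ℤ) + 1 = ((1 : ℕ) : ℤ) := by norm_num
      rw [e1, e2, besselJint_neg_natCast, besselJint_natCast]
      push_cast
      ring
    | succ t =>
      have e1 : ((t + 1 : ℕ) : ℤ) - 1 = ((t : ℕ) : ℤ) := by push_cast; ring
      have e2 : ((t + 1 : ℕ) : ℤ) + 1 = ((t + 2 : ℕ) : ℤ) := by push_cast; ring
      rw [e1, e2, besselJint_natCast, besselJint_natCast, besselJint_natCast]
      have := besselJnat_rec L hL t
      push_cast
      linarith
  · cases s with
    | zero =>
      have e1 : -((0 : ℕ) : ℤ) - 1 = -((1 : ℕ) : ℤ) := by norm_num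
      have e2 : -((0 : ℕ) : ℤ) + 1 = ((1 : ℕ) : ℤ) := by norm_num
      rw [e1, e2, besselJint_neg_natCast, besselJint_natCast]
      push_cast
      ring
    | succ t =>
      have e1 : -((t + 1 : ℕ) : ℤ) - 1 = -((t + 2 : ℕ) : ℤ) := by push_cast; ring
      have e2 : -((t + 1 : ℕ) : ℤ) + 1 = -((t : ℕ) : ℤ) := by push_cast; ring
      rw [e1, e2, besselJint_neg_natCast, besselJint_neg_natCast, besselJint_neg_natCast]
      have h := besselJnat_rec L hL t
      have hp2 : (-1 : ℝ) ^ (t + 2) = (-1 : ℝ) ^ t := by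
        rw [pow_add]; norm_num
      have hp1 : (-1 : ℝ) ^ (t + 1) = -(-1 : ℝ) ^ t := by
        rw [pow_succ]; ring
      rw [hp2, hp1]
      push_cast
      linear_combination ((-1 : ℝ) ^ t) * h

lemma besselJnat_tendsto (L : ℝ) (hL : 0 < L) :
    Tendsto (fun s : ℕ => besselJnat L s) atTop (𝓝 0) := by
  refine squeeze_zero_norm (a := fun s => bC L * (L ^ s / (Nat.factorial s))) ?_ ?_
  · intro s
    simpa [Real.norm_eq_abs] using besselJnat_abs_le L hL s
  · simpa using (FloorSemiring.tendsto_pow_div_factorial_atTop L).const_mul (bC L)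

lemma besselJint_eq_of_nonneg (L : ℝ) (k : ℤ) (hk : 0 ≤ k) :
    besselJint L k = besselJnat L k.toNat := by
  rw [besselJint, if_pos hk]

lemma besselJint_tendsto (L : ℝ) (hL : 0 < L) (m : ℤ) :
    Tendsto (fun j : ℕ => besselJint L (m + j)) atTop (𝓝 0) := by
  have h1 : Tendsto (fun j : ℕ => (m + (j : ℤ)).toNat) atTop atTop := by
    apply tendsto_atTop_atTop.mpr
    intro b
    exact ⟨b + m.natAbs, fun a ha => by omega⟩
  have h2 := (besselJnat_tendsto L hL).comp h1
  apply h2.congr'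
  filter_upwards [eventually_ge_atTop m.natAbs] with j hj
  exact (besselJint_eq_of_nonneg L _ (by omega)).symm

lemma summable_prod_abs (L : ℝ) (hL : 0 < L) (m n : ℤ) :
    Summable (fun j : ℕ => |besselJint L (m + j + 1) * besselJint L (n + j + 1)|) := by
  set K : ℕ := m.natAbs + n.natAbs with hK
  rw [← summable_nat_add_iff K]
  set c : ℕ := (m + K + 1).toNat with hc
  have hsum : Summable (fun j : ℕ => (bC L * (bC L * bD L)) * (L ^ (j + c) / (Nat.factorial (j + c)))) := by
    apply Summable.mul_left
    exact (Real.summable_pow_div_factorial L).comp_injective (add_left_injective c)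
  apply Summable.of_nonneg_of_le (fun _ => abs_nonneg _) _ hsum
  intro j
  have hm1 : (0 : ℤ) ≤ m + (j + K : ℕ) + 1 := by omega
  have hn1 : (0 : ℤ) ≤ n + (j + K : ℕ) + 1 := by omega
  rw [abs_mul, besselJint_eq_of_nonneg L _ hm1, besselJint_eq_of_nonneg L _ hn1]
  have ht : (m + (j + K : ℕ) + 1).toNat = j + c := by omega
  rw [ht]
  have h1 := besselJnat_abs_le L hL (j + c)
  have h2 := besselJnat_abs_le' L hL (n + (j + K : ℕ) + 1).toNat
  calc |besselJnat L (j + c)| * |besselJnat L (n + (j + K : ℕ) + 1).toNat|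
      ≤ (bC L * (L ^ (j + c) / (Nat.factorial (j + c)))) * (bC L * bD L) := by
        exact mul_le_mul h1 h2 (abs_nonneg _) (mul_nonneg (bC_nonneg L hL) (by positivity))
    _ = (bC L * (bC L * bD L)) * (L ^ (j + c) / (Nat.factorial (j + c))) := by ring

lemma telescope_key (L : ℝ) (hL : 0 < L) (m n : ℤ) (j : ℕ) :
    ((m : ℝ) - n) * (besselJint L (m + j + 1) * besselJint L (n + j + 1)) =
    L * ((besselJint L (m + j) * besselJint L (n + j + 1)
          - besselJint L (m + j + 1) * besselJint L (n + j))
       - (besselJint L (m + j + 1) * besselJint L (n + j + 2)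
          - besselJint L (m + j + 2) * besselJint L (n + j + 1))) := by
  have hm := besselJint_rec L hL (m + j + 1)
  have hn := besselJint_rec L hL (n + j + 1)
  have em1 : m + (j : ℤ) + 1 - 1 = m + j := by ring
  have em2 : m + (j : ℤ) + 1 + 1 = m + j + 2 := by ring
  have en1 : n + (j : ℤ) + 1 - 1 = n + j := by ring
  have en2 : n + (j : ℤ) + 1 + 1 = n + j + 2 := by ring
  rw [em1, em2] at hm
  rw [en1, en2] at hn
  push_cast at hm hn
  linear_combination besselJint L (m + j + 1) * hn - besselJint L (n + j + 1) * hm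

/-- for `L > 0` and distinct half-integers `a = m + 1/2`, `b = n + 1/2`,
the series `∑_{l ∈ ℤ'_+} J_{a+l}(2L) J_{b+l}(2L)` converges absolutely and equals
`L (J_{a-1/2} J_{b+1/2} - J_{a+1/2} J_{b-1/2})/(a-b)`. -/
theorem discreteBesselKernel_integrable_form (L : ℝ) (hL : 0 < L) (m n : ℤ) (hmn : m ≠ n) :
    Summable (fun j : ℕ => |besselJint L (m + j + 1) * besselJint L (n + j + 1)|) ∧
    ∑' j : ℕ, besselJint L (m + j + 1) * besselJint L (n + j + 1) =
      L * (besselJint L m * besselJint L (n + 1) - besselJint L (m + 1) * besselJint L n) /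
        ((m : ℝ) - (n : ℝ)) := by
  refine ⟨summable_prod_abs L hL m n, ?_⟩
  have hd : (m : ℝ) - n ≠ 0 := sub_ne_zero.mpr (by exact_mod_cast hmn)
  set J : ℤ → ℝ := besselJint L with hJ
  set A : ℕ → ℝ := fun j => J (m + j) * J (n + j + 1) - J (m + j + 1) * J (n + j) with hA
  set f : ℕ → ℝ := fun j => J (m + j + 1) * J (n + j + 1) with hf
  have hS : Summable f := (summable_prod_abs L hL m n).of_abs
  have hterm : ∀ j : ℕ, f j = L / ((m : ℝ) - n) * (A j - A (j + 1)) := by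
    intro j
    have hk := telescope_key L hL m n j
    have e1 : m + ((j : ℤ) + 1) = m + j + 1 := by ring
    have e2 : n + ((j : ℤ) + 1) + 1 = n + j + 2 := by ring
    have e3 : m + ((j : ℤ) + 1) + 1 = m + j + 2 := by ring
    have e4 : n + ((j : ℤ) + 1) = n + j + 1 := by ring
    simp only [hf, hA, hJ, Nat.cast_add, Nat.cast_one, e1, e2, e3, e4]
    rw [show n + (j : ℤ) + 1 + 1 = n + j + 2 from by ring,
      show m + (j : ℤ) + 1 + 1 = m + j + 2 from by ring]
    field_simp
    linarith [hk]
  have hpsum : ∀ N : ℕ, ∑ j ∈ Finset.range N, f j = L / ((m : ℝ) - n) * (A 0 - A N) := by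
    intro N
    calc ∑ j ∈ Finset.range N, f j
        = ∑ j ∈ Finset.range N, L / ((m : ℝ) - n) * (A j - A (j + 1)) :=
          Finset.sum_congr rfl (fun j _ => hterm j)
      _ = L / ((m : ℝ) - n) * ∑ j ∈ Finset.range N, (A j - A (j + 1)) := by
          rw [Finset.mul_sum]
      _ = L / ((m : ℝ) - n) * (A 0 - A N) := by rw [Finset.sum_range_sub' A N]
  have hAz : Tendsto A atTop (𝓝 0) := by
    have h1 := besselJint_tendsto L hL m
    have h2 := besselJint_tendsto L hL (n + 1)
    have h3 := besselJint_tendsto L hL (m + 1)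
    have h4 := besselJint_tendsto L hL n
    have := ((h1.mul h2).sub (h3.mul h4))
    rw [mul_zero, sub_zero] at this
    apply this.congr
    intro N
    simp only [hA, hJ]
    congr 2 <;> [skip; skip] <;> congr 1 <;> ring
  have hlim1 : Tendsto (fun N => ∑ j ∈ Finset.range N, f j) atTop (𝓝 (∑' j, f j)) :=
    hS.hasSum.tendsto_sum_nat
  have hlim2 : Tendsto (fun N => ∑ j ∈ Finset.range N, f j) atTop
      (𝓝 (L / ((m : ℝ) - n) * (A 0 - 0))) := by
    have : Tendsto (fun N => L / ((m : ℝ) - n) * (A 0 - A N)) atTop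
        (𝓝 (L / ((m : ℝ) - n) * (A 0 - 0))) :=
      ((tendsto_const_nhds.sub hAz).const_mul _)
    exact this.congr (fun N => (hpsum N).symm)
  have hEq := tendsto_nhds_unique hlim1 hlim2
  rw [hEq]
  have hA0 : A 0 = J m * J (n + 1) - J (m + 1) * J n := by
    simp only [hA]
    norm_num
  rw [hA0]
  simp only [hJ]
  field_simp
  ring
end

section
/- For every L > 0 and every a ∈ ℤ', the diagonal value of the discrete Bessel kernel satisfies K^Be(a,a) = L·( J_{a+1/2}(2L) · (d/dν)J_ν(2L)|_{ν=a−1/2} − J_{a−1/2}(2L) · (d/dν)J_ν(2L)|_{ν=a+1/2} ), where the derivatives are with respect to the order ν. -/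
open Complex Metric Filter Finset Topology

noncomputable def bJt (L ν : ℝ) (j : ℕ) : ℝ :=
  (-1 : ℝ) ^ j * L ^ (2 * (j : ℝ) + ν) * (Real.Gamma (ν + j + 1))⁻¹ / (Nat.factorial j)
noncomputable def fC (L : ℝ) (j : ℕ) (s : ℂ) : ℂ :=
  (-1 : ℂ) ^ j * (L : ℂ) ^ (2 * j) * Complex.exp (s * (Real.log L : ℂ)) *
    (Complex.Gamma (s + j + 1))⁻¹ / (Nat.factorial j : ℂ)
noncomputable def FC (L : ℝ) (s : ℂ) : ℂ := ∑' j : ℕ, fC L j s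
lemma rGamma_rec (x : ℝ) : (Real.Gamma x)⁻¹ = x * (Real.Gamma (x + 1))⁻¹ := by
  rcases eq_or_ne x 0 with rfl | hx
  · simp [Real.Gamma_zero]
  · rw [Real.Gamma_add_one hx, mul_inv, ← mul_assoc, mul_inv_cancel₀ hx, one_mul]
lemma fC_ofReal {L : ℝ} (hL : 0 < L) (j : ℕ) (ν : ℝ) :
    fC L j (ν : ℂ) = (bJt L ν j : ℂ) := by
  have h1 : L ^ (2 * (j : ℝ) + ν) = L ^ (2 * j) * Real.exp (ν * Real.log L) := by
    rw [Real.rpow_add hL, ← Real.rpow_natCast L (2 * j)]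
    rw [Real.rpow_def_of_pos hL ν]
    push_cast
    ring_nf
  simp only [fC, bJt, h1]
  have : ((ν : ℂ) + j + 1) = ((ν + j + 1 : ℝ) : ℂ) := by push_cast; ring
  rw [this, Complex.Gamma_ofReal]
  push_cast
  rw [show ((ν:ℂ) * (Real.log L : ℂ)) = ((ν * Real.log L : ℝ) : ℂ) by push_cast; ring,
    ← Complex.ofReal_exp]
  ring
lemma fC_diff (L : ℝ) (j : ℕ) : Differentiable ℂ (fC L j) := by
  unfold fC
  apply Differentiable.div_const
  apply Differentiable.mul
  · apply Differentiable.mul (differentiable_const _)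
    exact Complex.differentiable_exp.comp (differentiable_id.mul (differentiable_const _))
  · exact Complex.differentiable_one_div_Gamma.comp (by fun_prop)
lemma norm_fC {L : ℝ} (hL : 0 < L) (j : ℕ) (s : ℂ) :
    ‖fC L j s‖ = L ^ (2 * j) * Real.exp (s.re * Real.log L) *
      ‖(Complex.Gamma (s + j + 1))⁻¹‖ / (Nat.factorial j) := by
  simp only [fC]
  rw [norm_div, norm_mul, norm_mul, norm_mul]
  simp [Complex.norm_exp, abs_of_pos hL, Complex.mul_re]

lemma Gamma_add_nat' {s : ℂ} (hs : 0 < s.re) (n : ℕ) :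
    Complex.Gamma (s + n) = Complex.Gamma s * ∏ i ∈ Finset.range n, (s + i) := by
  induction n with
  | zero => simp
  | succ n ih =>
    have hne : s + n ≠ 0 := by
      intro h
      have : (s + n).re = 0 := by rw [h]; simp
      simp only [Complex.add_re, Complex.natCast_re] at this
      have : (0:ℝ) < s.re + n := by positivity
      linarith
    have hcast : s + ((n + 1 : ℕ) : ℂ) = (s + n) + 1 := by push_cast; ring
    rw [hcast, Complex.Gamma_add_one _ hne, ih, Finset.prod_range_succ]
    ring
lemma prod_range_add_one (n : ℕ) : ∏ i ∈ Finset.range n, ((i : ℝ) + 1) = (Nat.factorial n : ℝ) := by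
  induction n with
  | zero => simp
  | succ n ih => rw [Finset.prod_range_succ, ih]; push_cast [Nat.factorial_succ]; ring
lemma cG_bound : ∃ C₁ : ℝ, 1 ≤ C₁ ∧ ∀ w : ℂ, ‖w‖ ≤ 1/2 → ∀ n : ℕ,
    ‖(Complex.Gamma (w + 1 + n))⁻¹‖ ≤ C₁ * 2 ^ n / (Nat.factorial n) := by
  obtain ⟨C, hC⟩ := (isCompact_closedBall (0:ℂ) (1/2)).exists_bound_of_continuousOn
    (f := fun w => (Complex.Gamma (w + 1))⁻¹)
    ((Complex.differentiable_one_div_Gamma.comp (by fun_prop)).continuous.continuousOn)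
  refine ⟨max C 1, le_max_right _ _, fun w hw n => ?_⟩
  have hwre : |w.re| ≤ 1/2 := (Complex.abs_re_le_norm w).trans hw
  have hre : ∀ i : ℕ, (1:ℝ)/2 + i ≤ (w + 1 + i).re := by
    intro i
    simp only [Complex.add_re, Complex.one_re, Complex.natCast_re]
    have := abs_le.1 hwre
    linarith [this.1]
  have hrepos : (0:ℝ) < (w + 1).re := by
    have := hre 0; simp at this ⊢; linarith
  have hG : Complex.Gamma (w + 1 + n) = Complex.Gamma (w + 1) * ∏ i ∈ Finset.range n, (w + 1 + i) :=
    Gamma_add_nat' hrepos n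
  rw [hG, mul_inv, norm_mul, ← Finset.prod_inv_distrib, norm_prod]
  have h1 : ‖(Complex.Gamma (w + 1))⁻¹‖ ≤ max C 1 :=
    le_trans (hC w (by simpa using hw)) (le_max_left _ _)
  have h2 : ∏ i ∈ Finset.range n, ‖(w + 1 + (i:ℂ))⁻¹‖ ≤ 2 ^ n / (Nat.factorial n) := by
    have : ∏ i ∈ Finset.range n, ‖(w + 1 + (i:ℂ))⁻¹‖ ≤
        ∏ i ∈ Finset.range n, 2 / ((i : ℝ) + 1) := by
      apply Finset.prod_le_prod (fun i _ => norm_nonneg _)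
      intro i _
      rw [norm_inv]
      have hle : ((i:ℝ) + 1) / 2 ≤ ‖w + 1 + (i:ℂ)‖ := by
        refine le_trans ?_ (Complex.re_le_norm _)
        have := hre i; linarith
      have hpos : (0:ℝ) < ((i:ℝ) + 1) / 2 := by positivity
      rw [inv_le_comm₀ (lt_of_lt_of_le hpos hle) (by positivity),
        show ((2:ℝ) / ((i:ℝ)+1))⁻¹ = ((i:ℝ)+1)/2 by rw [inv_div]]
      exact hle
    refine this.trans (le_of_eq ?_)
    rw [Finset.prod_div_distrib, Finset.prod_const, prod_range_add_one,
      Finset.card_range]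
  calc ‖(Complex.Gamma (w+1))⁻¹‖ * ∏ i ∈ Finset.range n, ‖(w + 1 + (i:ℂ))⁻¹‖
      ≤ max C 1 * (2 ^ n / (Nat.factorial n)) := by
        apply mul_le_mul h1 h2 (Finset.prod_nonneg fun i _ => norm_nonneg _)
        exact le_trans zero_le_one (le_max_right _ _)
    _ = max C 1 * 2 ^ n / (Nat.factorial n) := by ring

lemma tail_bound {L : ℝ} (hL : 0 < L) (p : ℤ) : ∃ K : ℝ, 0 ≤ K ∧
    ∀ i : ℕ, ∀ s ∈ closedBall ((p : ℂ)) (1/2),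
      ‖fC L (i + (-p).toNat) s‖ ≤ K * (2 * L ^ 2) ^ i / (Nat.factorial i) := by
  obtain ⟨C₁, hC₁1, hC₁⟩ := cG_bound
  set q : ℕ := (-p).toNat with hq
  set b : ℕ := (p + q).toNat with hb
  have hpq : (p : ℝ) + q = b := by
    have h0 : (0:ℤ) ≤ p + q := by
      rcases le_or_gt 0 p with h | h
      · positivity
      · have : (q:ℤ) = -p := Int.toNat_of_nonneg (by omega)
        omega
    have h1 : ((p + (q:ℤ)).toNat : ℤ) = p + q := Int.toNat_of_nonneg h0
    rw [hb]
    exact_mod_cast congrArg (fun z : ℤ => (z:ℝ)) h1.symm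
  have hpqC : ((b : ℕ) : ℂ) = (p : ℂ) + (q : ℕ) := by
    exact_mod_cast congrArg (fun t : ℝ => (t : ℂ)) hpq.symm
  set E : ℝ := Real.exp ((|(p:ℝ)| + 1) * |Real.log L|) with hE
  refine ⟨L ^ (2*q) * E * C₁ * 2 ^ b, by positivity, fun i s hs => ?_⟩
  set w : ℂ := s - p with hw
  have hwn : ‖w‖ ≤ 1/2 := by rwa [hw, ← dist_eq_norm, ← mem_closedBall]
  have harg : s + (↑(i + q) : ℂ) + 1 = w + 1 + ((b + i : ℕ) : ℂ) := by
    push_cast [hpqC]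
    ring
  have hGb : ‖(Complex.Gamma (s + (↑(i + q) : ℂ) + 1))⁻¹‖ ≤ C₁ * 2 ^ (b+i) / (Nat.factorial (b+i)) := by
    rw [harg]; exact hC₁ w hwn (b + i)
  have hexp : Real.exp (s.re * Real.log L) ≤ E := by
    apply Real.exp_le_exp.2
    calc s.re * Real.log L ≤ |s.re * Real.log L| := le_abs_self _
      _ = |s.re| * |Real.log L| := abs_mul _ _
      _ ≤ (|(p:ℝ)| + 1) * |Real.log L| := by
          apply mul_le_mul_of_nonneg_right _ (abs_nonneg _)
          have h1 : |s.re - (p:ℝ)| ≤ 1/2 := by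
            calc |s.re - (p:ℝ)| = |w.re| := by rw [hw]; norm_num
              _ ≤ ‖w‖ := Complex.abs_re_le_norm w
              _ ≤ 1/2 := hwn
          calc |s.re| = |(s.re - p) + (p:ℝ)| := by ring_nf
            _ ≤ |s.re - (p:ℝ)| + |(p:ℝ)| := abs_add_le _ _
            _ ≤ |(p:ℝ)| + 1 := by linarith
  rw [norm_fC hL]
  have hfac1 : (Nat.factorial i : ℝ) ≤ Nat.factorial (b + i) := by
    exact_mod_cast Nat.factorial_le (by omega)
  have hfac2 : (1:ℝ) ≤ Nat.factorial (i + q) := by exact_mod_cast (Nat.factorial_pos _)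
  have hfi : (0:ℝ) < Nat.factorial i := by exact_mod_cast Nat.factorial_pos i
  have hfbi : (0:ℝ) < Nat.factorial (b+i) := by exact_mod_cast Nat.factorial_pos (b+i)
  have hfiq : (0:ℝ) < Nat.factorial (i+q) := by exact_mod_cast Nat.factorial_pos (i+q)
  have key : L ^ (2*(i+q)) * Real.exp (s.re * Real.log L) *
      ‖(Complex.Gamma (s + (↑(i + q):ℂ) + 1))⁻¹‖ / (Nat.factorial (i+q)) ≤
      L ^ (2*(i+q)) * E * (C₁ * 2 ^ (b+i) / (Nat.factorial (b+i))) / (Nat.factorial (i+q)) := by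
    apply div_le_div_of_nonneg_right _ hfiq.le
    apply mul_le_mul _ hGb (norm_nonneg _) (by positivity)
    exact mul_le_mul_of_nonneg_left hexp (by positivity)
  refine key.trans ?_
  have hL2 : L ^ (2*(i+q)) = L ^ (2*q) * (L^2)^i := by
    rw [← pow_mul, ← pow_add]; ring_nf
  rw [hL2]
  set X := L ^ (2*q) * (L^2)^i * E * (C₁ * (2^b * 2^i)) with hX
  have e1 : L ^ (2*q) * (L^2)^i * E * (C₁ * 2^(b+i) / ↑(Nat.factorial (b+i))) / ↑(Nat.factorial (i+q))
      = X / (↑(Nat.factorial (b+i)) * ↑(Nat.factorial (i+q))) := by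
    rw [hX, pow_add]
    field_simp
  have e2 : X / (↑(Nat.factorial (b+i)) * ↑(Nat.factorial (i+q))) ≤ X / ↑(Nat.factorial i) := by
    apply div_le_div_of_nonneg_left (by positivity) hfi
    nlinarith
  have e3 : X / ↑(Nat.factorial i) = (L^(2*q) * E * C₁ * 2^b) * (2*L^2)^i / ↑(Nat.factorial i) := by
    rw [hX, mul_pow]
    ring
  rw [e1]
  rw [e3] at e2
  exact e2

lemma summable_Kpow (K L : ℝ) : Summable (fun i : ℕ => K * (2 * L ^ 2) ^ i / (Nat.factorial i)) := by
  have := (Real.summable_pow_div_factorial (2 * L ^ 2)).mul_left K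
  refine this.congr fun i => ?_
  rw [mul_div_assoc]
lemma summable_norm_fC {L : ℝ} (hL : 0 < L) {p : ℤ} {s : ℂ} (hs : s ∈ closedBall ((p : ℂ)) (1/2)) :
    Summable (fun j => ‖fC L j s‖) := by
  obtain ⟨K, hK0, hK⟩ := tail_bound hL p
  rw [← summable_nat_add_iff ((-p).toNat)]
  exact Summable.of_nonneg_of_le (fun i => norm_nonneg _) (fun i => hK i s hs) (summable_Kpow K L)
lemma real_mem_ball (ν : ℝ) : ((ν:ℂ)) ∈ closedBall (((round ν : ℤ) : ℂ)) (1/2) := by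
  rw [mem_closedBall]
  have : ((round ν : ℤ) : ℂ) = ((round ν : ℝ) : ℂ) := by push_cast; ring
  rw [this, Complex.isometry_ofReal.dist_eq, Real.dist_eq]
  exact abs_sub_round ν
lemma summable_bJt {L : ℝ} (hL : 0 < L) (ν : ℝ) : Summable (bJt L ν) := by
  have h := ((summable_norm_fC hL (real_mem_ball ν)).of_norm : Summable (fun j => fC L j (ν:ℂ)))
  rw [funext (fun j => fC_ofReal hL j ν)] at h
  exact Complex.summable_ofReal.1 h
lemma FC_ofReal {L : ℝ} (hL : 0 < L) (ν : ℝ) : FC L (ν : ℂ) = ((besselJ L ν : ℝ) : ℂ) := by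
  rw [show besselJ L ν = ∑' j, bJt L ν j from rfl, Complex.ofReal_tsum]
  exact tsum_congr fun j => fC_ofReal hL j ν
lemma diffOn_FC {L : ℝ} (hL : 0 < L) (p : ℤ) :
    DifferentiableOn ℂ (FC L) (ball ((p : ℂ)) (1/2)) := by
  obtain ⟨K, hK0, hK⟩ := tail_bound hL p
  set q : ℕ := (-p).toNat
  set T : ℂ → ℂ := fun s => ∑' i, fC L (i + q) s with hT
  have tuo : TendstoUniformlyOn (fun N s => ∑ i ∈ Finset.range N, fC L (i + q) s) T atTop
      (closedBall ((p : ℂ)) (1/2)) :=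
    tendstoUniformlyOn_tsum_nat (summable_Kpow K L) (fun i s hs => hK i s hs)
  have Tdiff : DifferentiableOn ℂ T (ball ((p : ℂ)) (1/2)) := by
    refine ((tuo.mono ball_subset_closedBall).tendstoLocallyUniformlyOn).differentiableOn
      (Eventually.of_forall fun N => ?_) isOpen_ball
    exact (Differentiable.fun_sum fun i _ => fC_diff L (i + q)).differentiableOn
  have Gdiff : DifferentiableOn ℂ (fun s => (∑ j ∈ Finset.range q, fC L j s) + T s)
      (ball ((p : ℂ)) (1/2)) :=
    ((Differentiable.fun_sum fun j _ => fC_diff L j).differentiableOn).add Tdiff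
  refine Gdiff.congr fun s hs => ?_
  have hsum : Summable (fun j => fC L j s) :=
    (summable_norm_fC hL (ball_subset_closedBall hs)).of_norm
  exact (hsum.sum_add_tsum_nat_add q).symm
lemma hasDerivAt_besselJ {L : ℝ} (hL : 0 < L) (p : ℤ) :
    HasDerivAt (besselJ L) ((deriv (FC L) ((p : ℂ))).re) ((p : ℤ) : ℝ) := by
  have hd : DifferentiableAt ℂ (FC L) ((p : ℂ)) :=
    (diffOn_FC hL p).differentiableAt (isOpen_ball.mem_nhds (mem_ball_self (by norm_num)))
  have h1 : HasDerivAt (FC L) (deriv (FC L) ((p : ℂ))) (((p:ℝ) : ℂ)) := by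
    rw [show (((p:ℝ)) : ℂ) = ((p : ℂ)) by push_cast; ring]
    exact hd.hasDerivAt
  have h2 := h1.real_of_complex
  have : (fun x : ℝ => (FC L (x : ℂ)).re) = besselJ L := by
    funext x
    rw [FC_ofReal hL x, Complex.ofReal_re]
  rwa [this] at h2

lemma FC_bound {L : ℝ} (hL : 0 < L) : ∃ C₂ : ℝ, 0 ≤ C₂ ∧ ∀ n : ℕ,
    ∀ s ∈ closedBall ((n : ℂ)) (1/2), ‖FC L s‖ ≤ C₂ * (2 * L) ^ n / (Nat.factorial n) := by
  obtain ⟨C₁, hC₁1, hC₁⟩ := cG_bound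
  set M : ℝ := L + L⁻¹ with hM
  have hM0 : 0 < M := by positivity
  set E₀ : ℝ := ∑' j : ℕ, (2 * L ^ 2) ^ j / (Nat.factorial j) with hE₀
  have hE₀0 : 0 ≤ E₀ := tsum_nonneg fun j => by positivity
  refine ⟨M * C₁ * E₀, by positivity, fun n s hs => ?_⟩
  set w : ℂ := s - n with hw
  have hwn : ‖w‖ ≤ 1/2 := by rwa [hw, ← dist_eq_norm, ← mem_closedBall]
  have hexp : Real.exp (s.re * Real.log L) ≤ L ^ n * M := by
    have hsre : s.re = n + w.re := by rw [hw]; simp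
    have hsplit : Real.exp (s.re * Real.log L) =
        Real.exp ((n : ℝ) * Real.log L) * Real.exp (w.re * Real.log L) := by
      rw [← Real.exp_add, hsre]; ring_nf
    have h1 : Real.exp ((n : ℝ) * Real.log L) = L ^ n := by
      rw [Real.exp_nat_mul, Real.exp_log hL]
    have h2 : Real.exp (w.re * Real.log L) ≤ M := by
      have hre : |w.re| ≤ 1/2 := (Complex.abs_re_le_norm w).trans hwn
      have : w.re * Real.log L ≤ |Real.log L| := by
        calc w.re * Real.log L ≤ |w.re * Real.log L| := le_abs_self _
          _ = |w.re| * |Real.log L| := abs_mul _ _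
          _ ≤ 1 * |Real.log L| := by
              apply mul_le_mul_of_nonneg_right _ (abs_nonneg _); linarith
          _ = |Real.log L| := one_mul _
      refine (Real.exp_le_exp.2 this).trans ?_
      rcases le_or_gt 0 (Real.log L) with h | h
      · rw [_root_.abs_of_nonneg h, Real.exp_log hL, hM]
        have : 0 < L⁻¹ := by positivity
        linarith
      · rw [_root_.abs_of_neg h, Real.exp_neg, Real.exp_log hL, hM]
        have : 0 < L := hL
        linarith
    calc Real.exp (s.re * Real.log L) = Real.exp ((n:ℝ) * Real.log L) * Real.exp (w.re * Real.log L) := hsplit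
      _ ≤ L ^ n * M := by
          rw [h1]
          exact mul_le_mul_of_nonneg_left h2 (by positivity)
  have hterm : ∀ j : ℕ, ‖fC L j s‖ ≤
      (M * C₁ * ((2*L) ^ n / (Nat.factorial n))) * ((2 * L ^ 2) ^ j / (Nat.factorial j)) := by
    intro j
    rw [norm_fC hL]
    have harg : s + (j:ℂ) + 1 = w + 1 + ((n + j : ℕ) : ℂ) := by rw [hw]; push_cast; ring
    have hG : ‖(Complex.Gamma (s + (j:ℂ) + 1))⁻¹‖ ≤ C₁ * 2 ^ (n+j) / (Nat.factorial (n+j)) := by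
      rw [harg]; exact hC₁ w hwn (n+j)
    have hfac : (Nat.factorial n : ℝ) * (Nat.factorial j) ≤ Nat.factorial (n+j) := by
      exact_mod_cast Nat.le_of_dvd (Nat.factorial_pos _)
        (Nat.factorial_mul_factorial_dvd_factorial_add n j)
    have hfn : (0:ℝ) < Nat.factorial n := by exact_mod_cast Nat.factorial_pos n
    have hfj : (0:ℝ) < Nat.factorial j := by exact_mod_cast Nat.factorial_pos j
    have step1 : L ^ (2*j) * Real.exp (s.re * Real.log L) *
        ‖(Complex.Gamma (s + (j:ℂ) + 1))⁻¹‖ / (Nat.factorial j) ≤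
        L ^ (2*j) * (L ^ n * M) * (C₁ * 2 ^ (n+j) / (Nat.factorial (n+j))) / (Nat.factorial j) := by
      apply div_le_div_of_nonneg_right _ hfj.le
      apply mul_le_mul _ hG (norm_nonneg _) (by positivity)
      exact mul_le_mul_of_nonneg_left hexp (by positivity)
    refine step1.trans ?_
    have e1 : L ^ (2*j) * (L ^ n * M) * (C₁ * 2 ^ (n+j) / (Nat.factorial (n+j))) / (Nat.factorial j)
        = (M * C₁ * ((2*L)^n) * (2*L^2)^j) / ((Nat.factorial (n+j)) * (Nat.factorial j)) := by
      rw [pow_add, mul_pow, mul_pow, ← pow_mul]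
      field_simp
    rw [e1]
    have e2 : (M * C₁ * ((2*L)^n) * (2*L^2)^j) / ((Nat.factorial (n+j) : ℝ) * (Nat.factorial j)) ≤
        (M * C₁ * ((2*L)^n) * (2*L^2)^j) / ((Nat.factorial n : ℝ) * (Nat.factorial j)) := by
      apply div_le_div_of_nonneg_left (by positivity) (by positivity)
      apply mul_le_mul_of_nonneg_right _ hfj.le
      exact_mod_cast Nat.factorial_le (Nat.le_add_right n j)
    refine e2.trans (le_of_eq ?_)
    field_simp
  have hmem : s ∈ closedBall (((n:ℤ) : ℂ)) (1/2) := by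
    rwa [show ((n:ℤ) : ℂ) = (n : ℂ) by push_cast; ring]
  have hsn : Summable (fun j => ‖fC L j s‖) := summable_norm_fC hL hmem
  have hsu : Summable (fun j : ℕ =>
      (M * C₁ * ((2*L) ^ n / (Nat.factorial n))) * ((2 * L ^ 2) ^ j / (Nat.factorial j))) :=
    (Real.summable_pow_div_factorial (2 * L ^ 2)).mul_left _
  calc ‖FC L s‖ ≤ ∑' j, ‖fC L j s‖ := norm_tsum_le_tsum_norm hsn
    _ ≤ ∑' j : ℕ, (M * C₁ * ((2*L) ^ n / (Nat.factorial n))) * ((2 * L ^ 2) ^ j / (Nat.factorial j)) :=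
        Summable.tsum_le_tsum hterm hsn hsu
    _ = (M * C₁ * ((2*L) ^ n / (Nat.factorial n))) * E₀ := by rw [tsum_mul_left]
    _ = M * C₁ * E₀ * (2*L) ^ n / (Nat.factorial n) := by ring
lemma J_D_bound {L : ℝ} (hL : 0 < L) : ∃ C₃ : ℝ, 0 ≤ C₃ ∧ ∀ n : ℕ,
    |besselJ L ((n : ℕ) : ℝ)| ≤ C₃ * (2*L) ^ n / (Nat.factorial n) ∧
    |deriv (besselJ L) ((n : ℕ) : ℝ)| ≤ C₃ * (2*L) ^ n / (Nat.factorial n) := by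
  obtain ⟨C₂, hC₂0, hC₂⟩ := FC_bound hL
  refine ⟨4 * C₂, by positivity, fun n => ?_⟩
  have hfn : (0:ℝ) < Nat.factorial n := by exact_mod_cast Nat.factorial_pos n
  have hJ : |besselJ L ((n:ℕ) : ℝ)| ≤ C₂ * (2*L) ^ n / (Nat.factorial n) := by
    have hb := hC₂ n (n : ℂ) (mem_closedBall_self (by norm_num))
    have heq : besselJ L ((n:ℕ):ℝ) = (FC L ((n:ℕ):ℂ)).re := by
      rw [show ((n:ℕ):ℂ) = (((n:ℕ):ℝ):ℂ) by push_cast; ring, FC_ofReal hL]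
      simp
    rw [heq]
    exact (Complex.abs_re_le_norm _).trans hb
  have hDeq : deriv (besselJ L) ((n:ℕ):ℝ) = (deriv (FC L) ((n:ℕ):ℂ)).re := by
    have h := (hasDerivAt_besselJ hL (n : ℤ)).deriv
    rw [show (((n:ℕ):ℤ):ℝ) = ((n:ℕ):ℝ) by push_cast; ring,
      show (((n:ℕ):ℤ):ℂ) = ((n:ℕ):ℂ) by push_cast; ring] at h
    exact h.symm ▸ rfl
  have hD : ‖deriv (FC L) ((n:ℕ):ℂ)‖ ≤ (C₂ * (2*L) ^ n / (Nat.factorial n)) / (1/4) := by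
    refine Complex.norm_deriv_le_of_forall_mem_sphere_norm_le (R := 1/4)
      (C := C₂ * (2*L) ^ n / (Nat.factorial n)) (by norm_num) ?_ ?_
    · apply DifferentiableOn.diffContOnCl
      rw [closure_ball _ (by norm_num : (1/4 : ℝ) ≠ 0)]
      have h5 := diffOn_FC hL (n : ℤ)
      rw [show (((n:ℕ):ℤ):ℂ) = ((n:ℕ):ℂ) by push_cast; ring] at h5
      exact h5.mono (closedBall_subset_ball (by norm_num))
    · intro z hz
      apply hC₂ n z
      have := mem_sphere_iff_norm.1 hz
      rw [mem_closedBall, dist_eq_norm, this]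
      norm_num
  constructor
  · refine hJ.trans ?_
    apply div_le_div_of_nonneg_right _ hfn.le
    apply mul_le_mul_of_nonneg_right _ (by positivity)
    linarith
  · rw [hDeq]
    calc |(deriv (FC L) ((n:ℕ):ℂ)).re| ≤ ‖deriv (FC L) ((n:ℕ):ℂ)‖ := Complex.abs_re_le_norm _
      _ ≤ (C₂ * (2*L) ^ n / (Nat.factorial n)) / (1/4) := hD
      _ = 4 * C₂ * (2*L) ^ n / (Nat.factorial n) := by ring

lemma besselJ_tsum (L ν : ℝ) : besselJ L ν = ∑' j, bJt L ν j := rfl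
lemma key0 {L : ℝ} (hL : 0 < L) (ν : ℝ) : (ν+1)/L * bJt L (ν+1) 0 = bJt L ν 0 := by
  simp only [bJt, Nat.cast_zero, mul_zero, zero_add, pow_zero, one_mul, Nat.factorial_zero,
    Nat.cast_one, div_one]
  have e1 : L ^ (ν + 1) = L ^ ν * L := Real.rpow_add_one hL.ne' ν
  have e2 : (Real.Gamma (ν + 0 + 1))⁻¹ = (ν + 1) * (Real.Gamma (ν + 1 + 0 + 1))⁻¹ := by
    rw [show ν + 0 + 1 = ν + 1 by ring, rGamma_rec (ν + 1), show ν + 1 + 1 = ν + 1 + 0 + 1 by ring]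
  rw [e2, show ν + 1 + 0 = ν + 1 by ring, e1]
  set g := (Real.Gamma (ν + 1 + 1))⁻¹ with hg
  field_simp [hL.ne']
lemma key {L : ℝ} (hL : 0 < L) (ν : ℝ) (j : ℕ) :
    (ν+1)/L * bJt L (ν+1) (j+1) = bJt L ν (j+1) + bJt L (ν+2) j := by
  simp only [bJt]
  push_cast
  have hf : ((Nat.factorial (j+1) : ℕ) : ℝ) = ((j:ℝ)+1) * (Nat.factorial j : ℝ) := by
    push_cast [Nat.factorial_succ]; ring
  have e1 : L ^ (2 * ((j:ℝ) + 1) + (ν + 1)) = L ^ (2 * (j:ℝ) + ν + 2) * L := by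
    rw [show 2 * ((j:ℝ) + 1) + (ν + 1) = (2 * (j:ℝ) + ν + 2) + 1 by ring,
      Real.rpow_add_one hL.ne']
  have e2 : L ^ (2 * ((j:ℝ) + 1) + ν) = L ^ (2 * (j:ℝ) + ν + 2) := by
    rw [show 2 * ((j:ℝ) + 1) + ν = 2 * (j:ℝ) + ν + 2 by ring]
  have e3 : L ^ (2 * (j:ℝ) + (ν + 2)) = L ^ (2 * (j:ℝ) + ν + 2) := by
    rw [show 2 * (j:ℝ) + (ν + 2) = 2 * (j:ℝ) + ν + 2 by ring]
  have g1 : (Real.Gamma (ν + 1 + ((j:ℝ) + 1) + 1))⁻¹ = (Real.Gamma (ν + (j:ℝ) + 3))⁻¹ := by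
    rw [show ν + 1 + ((j:ℝ) + 1) + 1 = ν + (j:ℝ) + 3 by ring]
  have g2 : (Real.Gamma (ν + ((j:ℝ) + 1) + 1))⁻¹ =
      (ν + (j:ℝ) + 2) * (Real.Gamma (ν + (j:ℝ) + 3))⁻¹ := by
    rw [show ν + ((j:ℝ) + 1) + 1 = ν + (j:ℝ) + 2 by ring, rGamma_rec (ν + (j:ℝ) + 2),
      show ν + (j:ℝ) + 2 + 1 = ν + (j:ℝ) + 3 by ring]
  have g3 : (Real.Gamma (ν + 2 + (j:ℝ) + 1))⁻¹ = (Real.Gamma (ν + (j:ℝ) + 3))⁻¹ := by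
    rw [show ν + 2 + (j:ℝ) + 1 = ν + (j:ℝ) + 3 by ring]
  rw [e1, e2, e3, g1, g2, g3, hf]
  have hfj : (Nat.factorial j : ℝ) ≠ 0 := by
    have : (0:ℝ) < Nat.factorial j := by exact_mod_cast Nat.factorial_pos j
    linarith
  have hj1 : ((j:ℝ) + 1) ≠ 0 := by positivity
  set g := (Real.Gamma (ν + (j:ℝ) + 3))⁻¹ with hg
  set X := L ^ (2 * (j:ℝ) + ν + 2) with hX
  field_simp [hL.ne']
  ring
lemma recurrence {L : ℝ} (hL : 0 < L) (ν : ℝ) :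
    besselJ L ν + besselJ L (ν+2) = ((ν+1)/L) * besselJ L (ν+1) := by
  have sa := summable_bJt hL ν
  have sa2 := summable_bJt hL (ν+2)
  have sc : Summable (fun j => (ν+1)/L * bJt L (ν+1) j) := (summable_bJt hL (ν+1)).mul_left _
  have sashift : Summable (fun j => bJt L ν (j+1)) := by
    rw [summable_nat_add_iff]; exact sa
  rw [besselJ_tsum, besselJ_tsum, besselJ_tsum, ← tsum_mul_left]
  rw [sc.tsum_eq_zero_add, sa.tsum_eq_zero_add]
  have hsum : ∑' j, (ν+1)/L * bJt L (ν+1) (j+1) = ∑' j, (bJt L ν (j+1) + bJt L (ν+2) j) :=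
    tsum_congr fun j => key hL ν j
  rw [hsum, sashift.tsum_add sa2, key0 hL ν]
  ring

lemma hasDerivAt_besselJ_deriv {L : ℝ} (hL : 0 < L) (p : ℤ) :
    HasDerivAt (besselJ L) (deriv (besselJ L) ((p:ℤ):ℝ)) ((p : ℤ) : ℝ) := by
  exact (hasDerivAt_besselJ hL p).differentiableAt.hasDerivAt
lemma hasDerivAt_shift {L : ℝ} (hL : 0 < L) (p k : ℤ) :
    HasDerivAt (fun ν : ℝ => besselJ L (ν + (k:ℝ))) (deriv (besselJ L) ((p:ℝ) + k)) ((p:ℤ):ℝ) := by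
  have h := hasDerivAt_besselJ_deriv hL (p + k)
  rw [show (((p+k:ℤ)):ℝ) = (p:ℝ) + (k:ℝ) by push_cast; ring] at h
  have h2 := h.comp ((p:ℤ):ℝ) ((hasDerivAt_id ((p:ℤ):ℝ)).add_const (k:ℝ))
  simpa [Function.comp_def] using h2
lemma deriv_rec {L : ℝ} (hL : 0 < L) (p : ℤ) :
    deriv (besselJ L) (p:ℝ) + deriv (besselJ L) ((p:ℝ)+2) =
      (1/L) * besselJ L ((p:ℝ)+1) + (((p:ℝ)+1)/L) * deriv (besselJ L) ((p:ℝ)+1) := by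
  have lhs : HasDerivAt (fun ν : ℝ => besselJ L ν + besselJ L (ν+2))
      (deriv (besselJ L) (p:ℝ) + deriv (besselJ L) ((p:ℝ)+2)) ((p:ℤ):ℝ) := by
    have h1 := hasDerivAt_besselJ_deriv hL p
    have h2 := hasDerivAt_shift hL p 2
    have := h1.fun_add h2
    simpa using this
  have hlin : HasDerivAt (fun ν : ℝ => (ν+1)/L) (1/L) ((p:ℤ):ℝ) := by
    simpa using (((hasDerivAt_id ((p:ℤ):ℝ)).add_const (1:ℝ)).div_const L)
  have hsh := hasDerivAt_shift hL p 1
  have rhs : HasDerivAt (fun ν : ℝ => ((ν+1)/L) * besselJ L (ν+1))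
      ((1/L) * besselJ L ((p:ℝ)+1) + (((p:ℝ)+1)/L) * deriv (besselJ L) ((p:ℝ)+1)) ((p:ℤ):ℝ) := by
    have h3 : HasDerivAt (fun ν : ℝ => besselJ L (ν+1)) (deriv (besselJ L) ((p:ℝ)+1)) ((p:ℤ):ℝ) := by
      simpa using hsh
    have := hlin.fun_mul h3
    simpa using this
  have hfe : (fun ν : ℝ => besselJ L ν + besselJ L (ν+2)) =
      (fun ν : ℝ => ((ν+1)/L) * besselJ L (ν+1)) := funext fun ν => recurrence hL ν
  rw [hfe] at lhs
  exact lhs.unique rhs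
noncomputable def Stel (L : ℝ) (p : ℤ) : ℝ :=
  L * (besselJ L ((p:ℝ)+1) * deriv (besselJ L) (p:ℝ) -
    besselJ L (p:ℝ) * deriv (besselJ L) ((p:ℝ)+1))
lemma S_diff {L : ℝ} (hL : 0 < L) (p : ℤ) :
    Stel L p - Stel L (p+1) = besselJ L ((p:ℝ)+1)^2 := by
  have h1 := deriv_rec hL p
  have h2 := recurrence hL (p:ℝ)
  have h1' : L * (deriv (besselJ L) (p:ℝ) + deriv (besselJ L) ((p:ℝ)+2)) =
      besselJ L ((p:ℝ)+1) + ((p:ℝ)+1) * deriv (besselJ L) ((p:ℝ)+1) := by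
    rw [h1]; field_simp
  have h2' : L * (besselJ L (p:ℝ) + besselJ L ((p:ℝ)+2)) = ((p:ℝ)+1) * besselJ L ((p:ℝ)+1) := by
    rw [h2]; field_simp
  simp only [Stel]
  push_cast
  rw [show (p:ℝ)+1+1 = (p:ℝ)+2 by ring]
  linear_combination besselJ L ((p:ℝ)+1) * h1' - deriv (besselJ L) ((p:ℝ)+1) * h2'
lemma partial_sum_eq {L : ℝ} (hL : 0 < L) (m : ℤ) (N : ℕ) :
    ∑ j ∈ Finset.range N, besselJ L ((m:ℝ) + (j:ℝ) + 1)^2 = Stel L m - Stel L (m + N) := by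
  induction N with
  | zero => simp
  | succ N ih =>
    rw [Finset.sum_range_succ, ih]
    have := S_diff hL (m + N)
    rw [show (((m + (N:ℤ)):ℤ):ℝ) = (m:ℝ) + (N:ℝ) by push_cast; ring] at this
    rw [show ((m:ℤ) + ((N:ℕ)+1:ℕ) : ℤ) = (m + N) + 1 by push_cast; ring]
    rw [show (m:ℝ) + ((N:ℕ):ℝ) + 1 = ((m:ℝ) + (N:ℝ)) + 1 by ring]
    linarith [this]
lemma S_tendsto_zero {L : ℝ} (hL : 0 < L) (m : ℤ) :
    Tendsto (fun N : ℕ => Stel L (m + N)) atTop (𝓝 0) := by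
  obtain ⟨C₃, hC₃0, hC₃⟩ := J_D_bound hL
  set g : ℕ → ℝ := fun n => C₃ * (2*L) ^ n / (Nat.factorial n) with hg
  have hg0 : Tendsto g atTop (𝓝 0) := by
    have := (FloorSemiring.tendsto_pow_div_factorial_atTop (2*L)).const_mul C₃
    simpa [hg, mul_div_assoc] using this
  have htoNat : Tendsto (fun N : ℕ => (m + N).toNat) atTop atTop := by
    apply tendsto_atTop_mono' atTop (show ∀ᶠ N : ℕ in atTop, N - (-m).toNat ≤ (m + N).toNat by
      filter_upwards [eventually_ge_atTop 0] with N _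
      omega)
    exact tendsto_sub_atTop_nat _
  have hb : Tendsto (fun N : ℕ => L * 2 * (g ((m+N).toNat) * g ((m+N).toNat + 1)))
      atTop (𝓝 0) := by
    have h1 : Tendsto (fun N : ℕ => g ((m+N).toNat)) atTop (𝓝 0) := hg0.comp htoNat
    have h2 : Tendsto (fun N : ℕ => g ((m+N).toNat + 1)) atTop (𝓝 0) :=
      (hg0.comp (tendsto_add_atTop_nat 1)).comp htoNat
    have := (h1.mul h2).const_mul (L * 2)
    simpa using this
  apply squeeze_zero_norm' _ hb
  filter_upwards [eventually_ge_atTop ((-m).toNat + 1)] with N hN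
  have hmn : (0:ℤ) ≤ m + N := by omega
  set n : ℕ := (m + N).toNat with hn
  have hcast : ((m:ℝ) + (N:ℝ)) = (n:ℝ) := by
    rw [hn]
    exact_mod_cast congrArg (fun z : ℤ => (z:ℝ)) (Int.toNat_of_nonneg hmn).symm
  have hs : Stel L (m + N) = L * (besselJ L ((n:ℝ)+1) * deriv (besselJ L) (n:ℝ) -
      besselJ L (n:ℝ) * deriv (besselJ L) ((n:ℝ)+1)) := by
    simp only [Stel]
    rw [show (((m + (N:ℤ)):ℤ):ℝ) = ((m:ℝ) + (N:ℝ)) by push_cast; ring, hcast]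
  have hcast2 : ((n:ℝ) + 1) = (((n+1:ℕ)):ℝ) := by push_cast; ring
  obtain ⟨hJn, hDn⟩ := hC₃ n
  obtain ⟨hJn1, hDn1⟩ := hC₃ (n+1)
  rw [hs]
  have e1 : |besselJ L ((n:ℝ)+1)| ≤ g (n+1) := by rw [hcast2]; exact hJn1
  have e2 : |deriv (besselJ L) ((n:ℝ)+1)| ≤ g (n+1) := by rw [hcast2]; exact hDn1
  have hgn0 : 0 ≤ g n := by positivity
  have hgn10 : 0 ≤ g (n+1) := by positivity
  rw [Real.norm_eq_abs]
  calc |L * (besselJ L ((n:ℝ)+1) * deriv (besselJ L) (n:ℝ) -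
      besselJ L (n:ℝ) * deriv (besselJ L) ((n:ℝ)+1))|
      = L * |besselJ L ((n:ℝ)+1) * deriv (besselJ L) (n:ℝ) -
        besselJ L (n:ℝ) * deriv (besselJ L) ((n:ℝ)+1)| := by
        rw [abs_mul, _root_.abs_of_pos hL]
    _ ≤ L * (|besselJ L ((n:ℝ)+1)| * |deriv (besselJ L) (n:ℝ)| +
        |besselJ L (n:ℝ)| * |deriv (besselJ L) ((n:ℝ)+1)|) := by
        apply mul_le_mul_of_nonneg_left _ hL.le
        calc |_ - _| ≤ |besselJ L ((n:ℝ)+1) * deriv (besselJ L) (n:ℝ)| +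
            |besselJ L (n:ℝ) * deriv (besselJ L) ((n:ℝ)+1)| := abs_sub _ _
          _ = _ := by rw [abs_mul, abs_mul]
    _ ≤ L * (g (n+1) * g n + g n * g (n+1)) := by
        apply mul_le_mul_of_nonneg_left _ hL.le
        have := mul_le_mul e1 hDn (abs_nonneg _) hgn10
        have := mul_le_mul hJn e2 (abs_nonneg _) hgn0
        nlinarith [abs_nonneg (besselJ L ((n:ℝ)+1)), abs_nonneg (deriv (besselJ L) (n:ℝ))]
    _ = L * 2 * (g n * g (n+1)) := by ring

/-- for `L > 0` and `a = m + 1/2 ∈ ℤ'`, the diagonal of the discrete Bessel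
kernel `K^Be(a,a) = ∑_{l∈ℤ'_+} J_{a+l}(2L)²` equals
`L (J_{a+1/2}(2L) ∂_ν J_ν(2L)|_{ν=a-1/2} - J_{a-1/2}(2L) ∂_ν J_ν(2L)|_{ν=a+1/2})`. -/
theorem discreteBesselKernel_diagonal (L : ℝ) (hL : 0 < L) (m : ℤ) :
    (∑' j : ℕ, besselJ L ((m : ℝ) + (j : ℝ) + 1) ^ 2) =
      L * (besselJ L ((m : ℝ) + 1) * deriv (besselJ L) (m : ℝ) -
        besselJ L (m : ℝ) * deriv (besselJ L) ((m : ℝ) + 1)) := by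
  have hpart := partial_sum_eq hL m
  have htend : Tendsto (fun N : ℕ => ∑ j ∈ Finset.range N, besselJ L ((m:ℝ) + (j:ℝ) + 1)^2)
      atTop (𝓝 (Stel L m)) := by
    rw [funext hpart]
    have h0 : Tendsto (fun _ : ℕ => Stel L m) atTop (𝓝 (Stel L m)) := tendsto_const_nhds
    have := h0.sub (S_tendsto_zero hL m)
    simpa using this
  have hb0 : ∀ j : ℕ, 0 ≤ besselJ L ((m:ℝ) + (j:ℝ) + 1)^2 := fun j => sq_nonneg _
  have hmono : Monotone (fun N : ℕ => ∑ j ∈ Finset.range N, besselJ L ((m:ℝ) + (j:ℝ) + 1)^2) := by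
    intro a b hab
    exact Finset.sum_le_sum_of_subset_of_nonneg (Finset.range_subset_range.2 hab) fun i _ _ => hb0 i
  have hbound : ∀ N, (∑ j ∈ Finset.range N, besselJ L ((m:ℝ) + (j:ℝ) + 1)^2) ≤ Stel L m :=
    fun N => hmono.ge_of_tendsto htend N
  have hsumm : Summable (fun j : ℕ => besselJ L ((m:ℝ) + (j:ℝ) + 1)^2) :=
    summable_of_sum_range_le hb0 hbound
  have := tendsto_nhds_unique hsumm.hasSum.tendsto_sum_nat htend
  rw [this]
  simp only [Stel]
end

section
/- For every L > 0, the map a ↦ K^Be(a,a) on ℤ' is non-increasing (K^Be(a+1,a+1) ≤ K^Be(a,a) for all a ∈ ℤ'), satisfies K^Be(a,a) < 1 for every a ∈ ℤ', and K^Be(a,a) → 1 as a → −∞ along ℤ'. -/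
/-- Diagonal of the discrete Bessel kernel, `KBeDiag L m = K^Be(m + 1/2, m + 1/2)`. -/
noncomputable def KBeDiag (L : ℝ) (m : ℤ) : ℝ :=
  ∑' j : ℕ, besselJint L (m + j + 1) * besselJint L (m + j + 1)

namespace BesselProof

open Filter Finset

/-- the `j`-th term of the series for `J_n(2L)`, `n : ℕ`. -/
noncomputable def t (L : ℝ) (n j : ℕ) : ℝ :=
  (-1 : ℝ) ^ j * L ^ (2 * j + n) / (Nat.factorial j * Nat.factorial (n + j))

lemma besselJnat_eq (L : ℝ) (n : ℕ) : besselJnat L n = ∑' j, t L n j := rfl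

lemma abs_t (L : ℝ) (hL : 0 < L) (n j : ℕ) :
    |t L n j| = L ^ (2 * j + n) / (Nat.factorial j * Nat.factorial (n + j)) := by
  have hd : (0:ℝ) < (Nat.factorial j : ℝ) * Nat.factorial (n + j) := by positivity
  rw [t, abs_div, abs_mul, abs_pow, abs_neg, abs_one, one_pow, one_mul, abs_pow,
    abs_of_pos hL, abs_of_pos hd]

lemma abs_t_le (L : ℝ) (hL : 0 < L) (n j : ℕ) :
    |t L n j| ≤ L ^ n / Nat.factorial n * ((L ^ 2) ^ j / Nat.factorial j) := by
  rw [abs_t L hL]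
  have h1 : ((Nat.factorial n : ℝ) * Nat.factorial j) ≤ (Nat.factorial j * Nat.factorial (n + j)) := by
    have := Nat.le_of_dvd (Nat.factorial_pos _) (Nat.factorial_mul_factorial_dvd_factorial_add n j)
    calc ((Nat.factorial n : ℝ) * Nat.factorial j) ≤ 1 * ((Nat.factorial n : ℝ) * Nat.factorial j) := by ring_nf; rfl
    _ ≤ (Nat.factorial j : ℝ) * ((Nat.factorial n : ℝ) * Nat.factorial j) := by
        apply mul_le_mul_of_nonneg_right _ (by positivity)
        exact_mod_cast Nat.one_le_iff_ne_zero.2 (Nat.factorial_ne_zero j)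
    _ ≤ (Nat.factorial j : ℝ) * Nat.factorial (n + j) := by
        apply mul_le_mul_of_nonneg_left _ (by positivity)
        exact_mod_cast this
  calc L ^ (2 * j + n) / ((Nat.factorial j : ℝ) * Nat.factorial (n + j))
      ≤ L ^ (2 * j + n) / ((Nat.factorial n : ℝ) * Nat.factorial j) := by
        apply div_le_div_of_nonneg_left (by positivity) (by positivity) h1
    _ = L ^ n / Nat.factorial n * ((L ^ 2) ^ j / Nat.factorial j) := by
        rw [← pow_mul, show 2 * j + n = n + j * 2 by omega, pow_add]
        field_simp; ring

lemma summable_abs_t (L : ℝ) (hL : 0 < L) (n : ℕ) : Summable fun j => |t L n j| :=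
  Summable.of_nonneg_of_le (fun _ => abs_nonneg _) (abs_t_le L hL n)
    ((Real.summable_pow_div_factorial (L ^ 2)).mul_left _)

lemma summable_t (L : ℝ) (hL : 0 < L) (n : ℕ) : Summable (t L n) :=
  (summable_abs_t L hL n).of_abs

/-- `E L = ∑ (L²)^j/j! (= exp L²)`. -/
noncomputable def E (L : ℝ) : ℝ := ∑' j : ℕ, (L ^ 2) ^ j / Nat.factorial j

lemma tsum_abs_t_le (L : ℝ) (hL : 0 < L) (n : ℕ) :
    ∑' j, |t L n j| ≤ L ^ n / Nat.factorial n * E L := by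
  have := Summable.tsum_le_tsum (abs_t_le L hL n) (summable_abs_t L hL n)
    ((Real.summable_pow_div_factorial (L ^ 2)).mul_left _)
  rwa [tsum_mul_left] at this

/-- unified series term for `J_n(2L)`, `n : ℤ`. -/
noncomputable def g (L : ℝ) (n : ℤ) (j : ℕ) : ℝ :=
  if 0 ≤ n + j then
    (-1 : ℝ) ^ j * L ^ (j + (n + j).toNat) / (Nat.factorial j * Nat.factorial (n + j).toNat)
  else 0

lemma g_ofNat (L : ℝ) (n j : ℕ) : g L (n : ℤ) j = t L n j := by
  have h0 : (0:ℤ) ≤ (n:ℤ) + j := by positivity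
  have h1 : ((n:ℤ) + j).toNat = n + j := by omega
  rw [g, if_pos h0, h1, t, show j + (n + j) = 2 * j + n by omega]

lemma g_neg_shift (L : ℝ) (k j : ℕ) : g L (-(k : ℤ)) (j + k) = (-1 : ℝ) ^ k * t L k j := by
  have h0 : (0:ℤ) ≤ -(k:ℤ) + (j + k : ℕ) := by push_cast; omega
  have h1 : (-(k:ℤ) + (j + k : ℕ)).toNat = j := by omega
  rw [g, if_pos h0, h1, t, show j + k + j = 2 * j + k by omega, pow_add]
  rw [mul_comm (Nat.factorial (j + k) : ℝ), Nat.add_comm k j]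
  ring

lemma g_neg_zero (L : ℝ) (k j : ℕ) (h : j < k) : g L (-(k : ℤ)) j = 0 := by
  rw [g, if_neg (by omega)]

lemma inj_add_right (k : ℕ) : Function.Injective fun j : ℕ => j + k :=
  add_left_injective k

lemma g_neg_support (L : ℝ) (k : ℕ) :
    Function.support (g L (-(k : ℤ))) ⊆ Set.range fun j : ℕ => j + k := by
  intro j hj
  by_cases h : j < k
  · exact absurd (g_neg_zero L k j h) hj
  · exact ⟨j - k, show j - k + k = j by omega⟩

lemma tsum_g (L : ℝ) (hL : 0 < L) (n : ℤ) : ∑' j, g L n j = besselJint L n := by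
  rcases le_or_gt 0 n with h | h
  · rw [besselJint, if_pos h, besselJnat_eq]
    have : n = ((n.toNat : ℕ) : ℤ) := by omega
    rw [this]
    exact tsum_congr fun j => g_ofNat L n.toNat j
  · set k := (-n).toNat with hk
    have hn : n = -(k : ℤ) := by omega
    rw [besselJint, if_neg (by omega), ← hk]
    rw [hn]
    rw [← Function.Injective.tsum_eq (inj_add_right k) (g_neg_support L k)]
    calc ∑' j, g L (-(k:ℤ)) (j + k) = ∑' j, (-1:ℝ)^k * t L k j :=
          tsum_congr fun j => g_neg_shift L k j
      _ = (-1:ℝ)^k * besselJnat L k := by rw [tsum_mul_left, besselJnat_eq]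

lemma summable_abs_g (L : ℝ) (hL : 0 < L) (n : ℤ) : Summable fun j => |g L n j| := by
  rcases le_or_gt 0 n with h | h
  · have : n = ((n.toNat : ℕ) : ℤ) := by omega
    rw [this]
    exact (summable_abs_t L hL n.toNat).congr fun j => by rw [g_ofNat]
  · set k := (-n).toNat with hk
    have hn : n = -(k : ℤ) := by omega
    rw [hn]
    have hsupp : ∀ x ∉ Set.range (fun j : ℕ => j + k), |g L (-(k:ℤ)) x| = 0 := by
      intro x hx
      have : g L (-(k:ℤ)) x = 0 :=
        Function.notMem_support.1 fun hs => hx (g_neg_support L k hs)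
      rw [this, abs_zero]
    refine ((inj_add_right k).summable_iff hsupp).1 ?_
    apply (summable_abs_t L hL k).congr fun j => ?_
    show |t L k j| = |g L (-(k:ℤ)) (j + k)|
    rw [g_neg_shift, abs_mul, abs_pow, abs_neg, abs_one, one_pow, one_mul]

lemma summable_g (L : ℝ) (hL : 0 < L) (n : ℤ) : Summable (g L n) :=
  (summable_abs_g L hL n).of_abs

lemma tsum_abs_g_le (L : ℝ) (hL : 0 < L) (n : ℤ) :
    ∑' j, |g L n j| ≤ L ^ n.natAbs / Nat.factorial n.natAbs * E L := by
  rcases le_or_gt 0 n with h | h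
  · have hna : n.natAbs = n.toNat := by omega
    have : n = ((n.toNat : ℕ) : ℤ) := by omega
    rw [hna, this]
    calc ∑' j, |g L ((n.toNat : ℕ) : ℤ) j| = ∑' j, |t L n.toNat j| :=
          tsum_congr fun j => by rw [g_ofNat]
      _ ≤ _ := tsum_abs_t_le L hL n.toNat
  · set k := (-n).toNat with hk
    have hna : n.natAbs = k := by omega
    have hn : n = -(k : ℤ) := by omega
    rw [hna, hn]
    have hsupp : Function.support (fun j => |g L (-(k:ℤ)) j|) ⊆ Set.range fun j : ℕ => j + k := by
      intro j hj
      apply g_neg_support L k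
      intro hz
      exact hj (by simp [hz])
    rw [← Function.Injective.tsum_eq (inj_add_right k) hsupp]
    calc ∑' j, |g L (-(k:ℤ)) (j + k)| = ∑' j, |t L k j| := by
          refine tsum_congr fun j => ?_
          rw [g_neg_shift, abs_mul, abs_pow, abs_neg, abs_one, one_pow, one_mul]
      _ ≤ _ := tsum_abs_t_le L hL k


/-- `F L n = J_n(2L)²`. -/
noncomputable def F (L : ℝ) (n : ℤ) : ℝ := besselJint L n * besselJint L n

/-- `G` : unfolded triple-sum term. -/
noncomputable def G (L : ℝ) (p : ℤ × ℕ × ℕ) : ℝ := g L p.1 p.2.1 * g L p.1 p.2.2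

lemma summable_int_aux (L : ℝ) (hL : 0 < L) :
    Summable fun n : ℤ => (L ^ 2) ^ n.natAbs / Nat.factorial n.natAbs * (E L * E L) := by
  apply Summable.mul_right
  apply Summable.of_nat_of_neg
  · exact (Real.summable_pow_div_factorial (L ^ 2)).congr fun n => by simp
  · exact (Real.summable_pow_div_factorial (L ^ 2)).congr fun n => by simp

lemma abs_g_sq_le (L : ℝ) (hL : 0 < L) (n : ℤ) :
    (∑' j, |g L n j|) * (∑' j, |g L n j|) ≤
      (L ^ 2) ^ n.natAbs / Nat.factorial n.natAbs * (E L * E L) := by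
  have h1 := tsum_abs_g_le L hL n
  have h0 : (0:ℝ) ≤ ∑' j, |g L n j| := tsum_nonneg fun j => abs_nonneg _
  have hE : (0:ℝ) ≤ E L := tsum_nonneg fun j => by positivity
  have h2 : (∑' j, |g L n j|) * (∑' j, |g L n j|) ≤
      (L ^ n.natAbs / Nat.factorial n.natAbs * E L) * (L ^ n.natAbs / Nat.factorial n.natAbs * E L) :=
    mul_le_mul h1 h1 h0 (by positivity)
  refine h2.trans ?_
  have hfac : (1:ℝ) ≤ Nat.factorial n.natAbs := by exact_mod_cast Nat.one_le_iff_ne_zero.2 (Nat.factorial_ne_zero _)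
  have hfp : (0:ℝ) < Nat.factorial n.natAbs := by positivity
  have : L ^ n.natAbs / Nat.factorial n.natAbs * (L ^ n.natAbs / Nat.factorial n.natAbs) ≤
      (L ^ 2) ^ n.natAbs / Nat.factorial n.natAbs := by
    rw [div_mul_div_comm, ← pow_add, show n.natAbs + n.natAbs = 2 * n.natAbs by ring, pow_mul]
    apply div_le_div_of_nonneg_left (by positivity) hfp
    nlinarith [hfp, hfac]
  calc L ^ n.natAbs / Nat.factorial n.natAbs * E L * (L ^ n.natAbs / Nat.factorial n.natAbs * E L)
      = L ^ n.natAbs / Nat.factorial n.natAbs * (L ^ n.natAbs / Nat.factorial n.natAbs) * (E L * E L) := by ring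
    _ ≤ (L ^ 2) ^ n.natAbs / Nat.factorial n.natAbs * (E L * E L) := by
        apply mul_le_mul_of_nonneg_right this (by positivity)

lemma abs_G_eq (L : ℝ) : (fun p => |G L p|) =
    fun p : ℤ × ℕ × ℕ => |g L p.1 p.2.1| * |g L p.1 p.2.2| :=
  funext fun p => abs_mul _ _

lemma summable_inner_abs (L : ℝ) (hL : 0 < L) (n : ℤ) :
    Summable fun q : ℕ × ℕ => |g L n q.1| * |g L n q.2| :=
  Summable.mul_of_nonneg (f := fun j => |g L n j|) (g := fun j => |g L n j|)
    (summable_abs_g L hL n) (summable_abs_g L hL n)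
    (fun _ => abs_nonneg _) (fun _ => abs_nonneg _)

lemma tsum_inner_abs (L : ℝ) (hL : 0 < L) (n : ℤ) :
    ∑' q : ℕ × ℕ, |g L n q.1| * |g L n q.2| = (∑' j, |g L n j|) * (∑' j, |g L n j|) := by
  rw [tsum_mul_tsum_of_summable_norm
    ((summable_abs_g L hL n).congr fun j => by rw [Real.norm_eq_abs, abs_abs])
    ((summable_abs_g L hL n).congr fun j => by rw [Real.norm_eq_abs, abs_abs])]

lemma summable_abs_G (L : ℝ) (hL : 0 < L) : Summable fun p => |G L p| := by
  rw [abs_G_eq]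
  refine (summable_prod_of_nonneg fun p => by positivity).2 ⟨fun n => summable_inner_abs L hL n, ?_⟩
  apply Summable.of_nonneg_of_le (fun n => tsum_nonneg fun q => by positivity)
    (fun n => ?_) (summable_int_aux L hL)
  rw [tsum_inner_abs L hL n]
  exact abs_g_sq_le L hL n

lemma summable_G (L : ℝ) (hL : 0 < L) : Summable (G L) := (summable_abs_G L hL).of_abs

lemma tsum_G_eq_tsum_F (L : ℝ) (hL : 0 < L) : ∑' p, G L p = ∑' n, F L n := by
  rw [Summable.tsum_prod' (summable_G L hL) (fun n => ((summable_inner_abs L hL n).congr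
    (fun q => (abs_mul _ _).symm)).of_abs)]
  refine tsum_congr fun n => ?_
  have : ∑' q : ℕ × ℕ, G L (n, q) = (∑' j, g L n j) * (∑' j, g L n j) := by
    rw [tsum_mul_tsum_of_summable_norm
      ((summable_abs_g L hL n).congr fun j => (Real.norm_eq_abs _).symm)
      ((summable_abs_g L hL n).congr fun j => (Real.norm_eq_abs _).symm)]
    rfl
  rw [this, tsum_g L hL n, F]

/-- reindexing map for the diagonal sum. -/
def e : ℕ × ℕ × ℕ → ℤ × ℕ × ℕ := fun q => ((q.1 : ℤ) - q.2.1 - q.2.2, q.2.1, q.2.2)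

lemma e_inj : Function.Injective e := by
  intro a b h
  rw [e, e, Prod.ext_iff, Prod.ext_iff] at h
  obtain ⟨h1, h2, h3⟩ := h
  simp only at h1 h2 h3
  obtain ⟨a1, a2, a3⟩ := a; obtain ⟨b1, b2, b3⟩ := b
  simp only at h1 h2 h3 ⊢
  refine Prod.ext ?_ (Prod.ext h2 h3)
  simp only at h1 ⊢
  omega

lemma g_ne_zero_nonneg {L : ℝ} {n : ℤ} {j : ℕ} (h : g L n j ≠ 0) : 0 ≤ n + j := by
  by_contra hc
  exact h (by rw [g, if_neg hc])

lemma e_support (L : ℝ) : Function.support (G L) ⊆ Set.range e := by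
  rintro ⟨n, j, j'⟩ h
  have h1 : g L n j ≠ 0 := fun hz => h (by rw [G]; simp [hz])
  have h2 : g L n j' ≠ 0 := fun hz => h (by rw [G]; simp [hz])
  have hj : 0 ≤ n + j := g_ne_zero_nonneg h1
  have hj' : 0 ≤ n + j' := g_ne_zero_nonneg h2
  refine ⟨((n + j + j').toNat, j, j'), ?_⟩
  rw [e]
  simp only
  refine Prod.ext ?_ rfl
  simp only
  omega

lemma g_eval (L : ℝ) (N j j' : ℕ) (hj : j ≤ N) (hj' : j' ≤ N) :
    g L ((N : ℤ) - j - j') j = (-1:ℝ)^j * L ^ (j + (N - j')) / (Nat.factorial j * Nat.factorial (N - j')) := by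
  have h0 : (0:ℤ) ≤ ((N : ℤ) - j - j') + j := by omega
  have h1 : (((N : ℤ) - j - j') + j).toNat = N - j' := by omega
  rw [g, if_pos h0, h1]

lemma term_eval (L : ℝ) (hL : 0 < L) (N j j' : ℕ) (hj : j ≤ N) (hj' : j' ≤ N) :
    G L (e (N, j, j')) =
      ((-1:ℝ)^j * L ^ N / (Nat.factorial j * Nat.factorial (N - j))) *
      ((-1:ℝ)^j' * L ^ N / (Nat.factorial j' * Nat.factorial (N - j'))) := by
  have hb : ((N : ℤ) - j - j') + j' = ((N : ℤ) - j' - j) + j' := by ring_nf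
  rw [G, e]
  simp only
  rw [g_eval L N j j' hj hj']
  have : g L ((N : ℤ) - j - j') j' = g L ((N : ℤ) - j' - j) j' := by
    rw [show (N : ℤ) - j - j' = (N : ℤ) - j' - j by ring]
  rw [this, g_eval L N j' j hj' hj]
  have hexp : (j + (N - j')) + (j' + (N - j)) = N + N := by omega
  have hLpow : L ^ (j + (N - j')) * L ^ (j' + (N - j)) = L ^ N * L ^ N := by
    rw [← pow_add, hexp, pow_add]
  rw [div_mul_div_comm, div_mul_div_comm]
  have hnum : (-1:ℝ)^j * L ^ (j + (N - j')) * ((-1:ℝ)^j' * L ^ (j' + (N - j)))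
      = (-1:ℝ)^j * L ^ N * ((-1:ℝ)^j' * L ^ N) := by
    calc (-1:ℝ)^j * L ^ (j + (N - j')) * ((-1:ℝ)^j' * L ^ (j' + (N - j)))
        = (-1:ℝ)^j * (-1:ℝ)^j' * (L ^ (j + (N - j')) * L ^ (j' + (N - j))) := by ring
      _ = (-1:ℝ)^j * L ^ N * ((-1:ℝ)^j' * L ^ N) := by rw [hLpow]; ring
  rw [hnum]
  ring

lemma term_zero (L : ℝ) (N : ℕ) (q : ℕ × ℕ)
    (hq : q ∉ Finset.range (N+1) ×ˢ Finset.range (N+1)) : G L (e (N, q)) = 0 := by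
  obtain ⟨j, j'⟩ := q
  rw [Finset.mem_product] at hq
  simp only [Finset.mem_range, not_and_or, not_lt] at hq
  rw [G, e]
  simp only
  rcases hq with h | h
  · have : g L ((N : ℤ) - j - j') j' = 0 := by
      rw [g, if_neg (by omega)]
    rw [this, mul_zero]
  · have : g L ((N : ℤ) - j - j') j = 0 := by
      rw [g, if_neg (by omega)]
    rw [this, zero_mul]

lemma alt_sum (L : ℝ) (N : ℕ) :
    ∑ j ∈ Finset.range (N + 1), ((-1:ℝ)^j * L ^ N / (Nat.factorial j * Nat.factorial (N - j)))
      = if N = 0 then 1 else 0 := by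
  have key : ∀ j ∈ Finset.range (N + 1),
      ((-1:ℝ)^j * L ^ N / (Nat.factorial j * Nat.factorial (N - j)))
        = L ^ N / Nat.factorial N * ((-1:ℝ)^j * (N.choose j)) := by
    intro j hj
    rw [Finset.mem_range] at hj
    have hle : j ≤ N := by omega
    have hc : (N.choose j : ℝ) * (Nat.factorial j * Nat.factorial (N - j)) = Nat.factorial N := by
      exact_mod_cast congrArg (Nat.cast (R := ℝ))
        (by rw [← Nat.choose_mul_factorial_mul_factorial hle]; ring)
    have hne : ((Nat.factorial j : ℝ) * Nat.factorial (N - j)) ≠ 0 := by positivity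
    have hNe : (Nat.factorial N : ℝ) ≠ 0 := by positivity
    field_simp
    linear_combination (-(L^N)) * hc
  rw [Finset.sum_congr rfl key, ← Finset.mul_sum]
  have halt : ∑ j ∈ Finset.range (N + 1), ((-1:ℝ)^j * (N.choose j)) =
      if N = 0 then 1 else 0 := by
    have h := Int.alternating_sum_range_choose (n := N)
    have h2 : ∑ j ∈ Finset.range (N + 1), ((-1:ℝ)^j * (N.choose j))
        = ((∑ m ∈ Finset.range (N + 1), (-1:ℤ) ^ m * (N.choose m) : ℤ) : ℝ) := by
      push_cast; rfl
    rw [h2, h]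
    split <;> norm_num
  rw [halt]
  split
  · subst ‹N = 0›; norm_num
  · rw [mul_zero]

lemma tsum_G_eq_one (L : ℝ) (hL : 0 < L) : ∑' p, G L p = 1 := by
  rw [← Function.Injective.tsum_eq e_inj (e_support L)]
  have hsum : Summable fun q : ℕ × ℕ × ℕ => G L (e q) := (summable_G L hL).comp_injective e_inj
  rw [Summable.tsum_prod' hsum (fun N => summable_of_ne_finset_zero (term_zero L N))]
  have hN : ∀ N : ℕ, ∑' q : ℕ × ℕ, G L (e (N, q)) = if N = 0 then (1:ℝ) else 0 := by
    intro N
    rw [tsum_eq_sum (term_zero L N), Finset.sum_product]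
    have : ∀ j ∈ Finset.range (N+1), ∀ j' ∈ Finset.range (N+1),
        G L (e (N, j, j')) =
        ((-1:ℝ)^j * L ^ N / (Nat.factorial j * Nat.factorial (N - j))) *
        ((-1:ℝ)^j' * L ^ N / (Nat.factorial j' * Nat.factorial (N - j'))) := by
      intro j hj j' hj'
      rw [Finset.mem_range] at hj hj'
      exact term_eval L hL N j j' (by omega) (by omega)
    calc ∑ j ∈ Finset.range (N+1), ∑ j' ∈ Finset.range (N+1), G L (e (N, j, j'))
        = ∑ j ∈ Finset.range (N+1), ∑ j' ∈ Finset.range (N+1),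
            ((-1:ℝ)^j * L ^ N / (Nat.factorial j * Nat.factorial (N - j))) *
            ((-1:ℝ)^j' * L ^ N / (Nat.factorial j' * Nat.factorial (N - j'))) := by
          refine Finset.sum_congr rfl fun j hj => Finset.sum_congr rfl fun j' hj' => this j hj j' hj'
      _ = (∑ j ∈ Finset.range (N+1), ((-1:ℝ)^j * L ^ N / (Nat.factorial j * Nat.factorial (N - j)))) *
          (∑ j' ∈ Finset.range (N+1), ((-1:ℝ)^j' * L ^ N / (Nat.factorial j' * Nat.factorial (N - j')))) := by
          rw [Finset.sum_mul_sum]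
      _ = if N = 0 then (1:ℝ) else 0 := by
          rw [alt_sum L N]
          split <;> norm_num
  calc ∑' N : ℕ, ∑' q : ℕ × ℕ, G L (e (N, q)) = ∑' N : ℕ, if N = 0 then (1:ℝ) else 0 :=
        tsum_congr hN
    _ = 1 := tsum_ite_eq 0 1

lemma F_nonneg (L : ℝ) (n : ℤ) : 0 ≤ F L n := mul_self_nonneg _

lemma summable_F (L : ℝ) (hL : 0 < L) : Summable (F L) := by
  apply Summable.of_nonneg_of_le (F_nonneg L) (fun n => ?_)
    ((summable_int_aux L hL))
  calc F L n = |besselJint L n| * |besselJint L n| := by rw [F, ← abs_mul, abs_mul_self]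
    _ ≤ (∑' j, |g L n j|) * (∑' j, |g L n j|) := by
        have h : |besselJint L n| ≤ ∑' j, |g L n j| := by
          rw [← tsum_g L hL n]
          have := norm_tsum_le_tsum_norm
            ((summable_abs_g L hL n).congr fun j => (Real.norm_eq_abs _).symm)
          simpa [Real.norm_eq_abs] using this
        exact mul_le_mul h h (abs_nonneg _) (tsum_nonneg fun j => abs_nonneg _)
    _ ≤ _ := abs_g_sq_le L hL n

lemma hasSum_F (L : ℝ) (hL : 0 < L) : HasSum (F L) 1 := by
  have : ∑' n, F L n = 1 := by rw [← tsum_G_eq_tsum_F L hL, tsum_G_eq_one L hL]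
  exact this ▸ (summable_F L hL).hasSum


/-! ### Positivity of `J_k(2L)` for large `k` -/

lemma fact_ge (k j : ℕ) : (k + 1) ^ j * Nat.factorial k ≤ Nat.factorial (k + j) := by
  induction j with
  | zero => simp
  | succ j ih =>
    calc (k + 1) ^ (j + 1) * Nat.factorial k = (k + 1) * ((k + 1) ^ j * Nat.factorial k) := by ring
      _ ≤ (k + 1) * Nat.factorial (k + j) := Nat.mul_le_mul_left _ ih
      _ ≤ (k + j + 1) * Nat.factorial (k + j) := Nat.mul_le_mul_right _ (by omega)
      _ = Nat.factorial (k + j + 1) := (Nat.factorial_succ _).symm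

lemma abs_t_le_geom (L : ℝ) (hL : 0 < L) (k j : ℕ) :
    |t L k j| ≤ (L ^ k / Nat.factorial k) * (L ^ 2 / ((k : ℝ) + 1)) ^ j := by
  rw [abs_t L hL]
  have h1 : (((k:ℝ) + 1) ^ j * Nat.factorial k) ≤ (Nat.factorial j * Nat.factorial (k + j)) := by
    have h2 : ((k + 1) ^ j * Nat.factorial k : ℕ) ≤ Nat.factorial j * Nat.factorial (k + j) := by
      calc ((k + 1) ^ j * Nat.factorial k : ℕ) ≤ Nat.factorial (k + j) := fact_ge k j
        _ ≤ Nat.factorial j * Nat.factorial (k + j) :=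
            Nat.le_mul_of_pos_left _ (Nat.factorial_pos j)
    exact_mod_cast h2
  calc L ^ (2 * j + k) / ((Nat.factorial j : ℝ) * Nat.factorial (k + j))
      ≤ L ^ (2 * j + k) / (((k:ℝ) + 1) ^ j * Nat.factorial k) := by
        apply div_le_div_of_nonneg_left (by positivity) (by positivity) h1
    _ = (L ^ k / Nat.factorial k) * (L ^ 2 / ((k : ℝ) + 1)) ^ j := by
        rw [div_pow, ← pow_mul, show 2 * j + k = k + j * 2 by omega, pow_add, pow_mul]
        field_simp; ring

lemma besselJnat_pos (L : ℝ) (hL : 0 < L) (k : ℕ) (hk : 3 * L ^ 2 ≤ (k : ℝ) + 1) :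
    0 < besselJnat L k := by
  set q : ℝ := L ^ 2 / ((k : ℝ) + 1) with hqdef
  have hk1 : (0:ℝ) < (k : ℝ) + 1 := by positivity
  have hq0 : 0 < q := by positivity
  have hq3 : q ≤ 1/3 := by
    rw [hqdef, div_le_iff₀ hk1]; linarith
  have hqlt : q < 1 := by linarith
  set t0 : ℝ := L ^ k / Nat.factorial k with ht0def
  have ht0 : 0 < t0 := by positivity
  have ht00 : t L k 0 = t0 := by
    rw [t, ht0def]; norm_num
  have hs1 : Summable fun j => |t L k (j + 1)| :=
    ((summable_abs_t L hL k).comp_injective (add_left_injective 1))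
  have hgeom : Summable fun j : ℕ => t0 * q * q ^ j :=
    (summable_geometric_of_lt_one hq0.le hqlt).mul_left _
  have hbound : ∀ j : ℕ, |t L k (j + 1)| ≤ t0 * q * q ^ j := by
    intro j
    calc |t L k (j + 1)| ≤ t0 * q ^ (j + 1) := abs_t_le_geom L hL k (j + 1)
      _ = t0 * q * q ^ j := by rw [pow_succ]; ring
  have hR : |∑' j, t L k (j + 1)| ≤ t0 * q * (1 - q)⁻¹ := by
    have h1 : |∑' j, t L k (j + 1)| ≤ ∑' j, |t L k (j + 1)| := by
      have := norm_tsum_le_tsum_norm (hs1.congr fun j => (Real.norm_eq_abs _).symm)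
      simpa [Real.norm_eq_abs] using this
    have h2 : ∑' j, |t L k (j + 1)| ≤ ∑' j : ℕ, t0 * q * q ^ j :=
      Summable.tsum_le_tsum hbound hs1 hgeom
    have h3 : ∑' j : ℕ, t0 * q * q ^ j = t0 * q * (1 - q)⁻¹ := by
      rw [tsum_mul_left, tsum_geometric_of_lt_one hq0.le hqlt]
    linarith
  have hhalf : t0 * q * (1 - q)⁻¹ ≤ t0 / 2 := by
    have h23 : (2/3 : ℝ) ≤ 1 - q := by linarith
    have hinv : (1 - q)⁻¹ ≤ (2/3 : ℝ)⁻¹ := by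
      apply inv_anti₀ (by norm_num) h23
    calc t0 * q * (1 - q)⁻¹ ≤ t0 * (1/3) * (2/3 : ℝ)⁻¹ := by
          apply mul_le_mul (mul_le_mul le_rfl hq3 hq0.le ht0.le) hinv (by positivity) (by positivity)
      _ = t0 / 2 := by ring
  have hbj : besselJnat L k = t L k 0 + ∑' j, t L k (j + 1) := by
    rw [besselJnat_eq, Summable.tsum_eq_zero_add (summable_t L hL k)]
  rw [hbj, ht00]
  have := neg_abs_le (∑' j, t L k (j + 1))
  linarith

/-! ### The tail sum `T` and final assembly -/

noncomputable def T (L : ℝ) (m : ℤ) : ℝ :=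
  ∑' n : ℤ, Set.indicator {x : ℤ | x ≤ m} (F L) n

lemma inj_shift (m : ℤ) : Function.Injective fun j : ℕ => m + j + 1 := by
  intro a b h
  simp only at h
  omega

lemma KBeDiag_eq (L : ℝ) (m : ℤ) : KBeDiag L m = ∑' j : ℕ, F L (m + j + 1) := rfl

lemma summable_F_shift (L : ℝ) (hL : 0 < L) (m : ℤ) :
    Summable fun j : ℕ => F L (m + j + 1) :=
  (summable_F L hL).comp_injective (inj_shift m)

lemma KBeDiag_step (L : ℝ) (hL : 0 < L) (m : ℤ) :
    KBeDiag L m = F L (m + 1) + KBeDiag L (m + 1) := by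
  rw [KBeDiag_eq, KBeDiag_eq, Summable.tsum_eq_zero_add (summable_F_shift L hL m)]
  congr 1
  · congr 1; push_cast; ring
  · exact tsum_congr fun j => by congr 1; push_cast; ring

lemma KBeDiag_eq_indicator (L : ℝ) (hL : 0 < L) (m : ℤ) :
    KBeDiag L m = ∑' n : ℤ, Set.indicator {x : ℤ | m < x} (F L) n := by
  have hsupp : Function.support (Set.indicator {x : ℤ | m < x} (F L)) ⊆
      Set.range fun j : ℕ => m + j + 1 := by
    intro n hn
    have hmn : m < n := by
      by_contra hc
      exact hn (Set.indicator_of_notMem hc _)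
    exact ⟨(n - m - 1).toNat, by simp only; omega⟩
  rw [← Function.Injective.tsum_eq (inj_shift m) hsupp, KBeDiag_eq]
  refine tsum_congr fun j => ?_
  rw [Set.indicator_of_mem (show (m + (j:ℤ) + 1) ∈ {x : ℤ | m < x} from by simp only [Set.mem_setOf_eq]; omega)]

lemma KBeDiag_add_T (L : ℝ) (hL : 0 < L) (m : ℤ) : KBeDiag L m + T L m = 1 := by
  rw [KBeDiag_eq_indicator L hL m, T,
    ← Summable.tsum_add ((summable_F L hL).indicator _) ((summable_F L hL).indicator _)]
  have : ∀ n : ℤ, Set.indicator {x : ℤ | m < x} (F L) n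
      + Set.indicator {x : ℤ | x ≤ m} (F L) n = F L n := by
    intro n
    by_cases h : m < n
    · rw [Set.indicator_of_mem (show n ∈ {x : ℤ | m < x} from h),
        Set.indicator_of_notMem (show n ∉ {x : ℤ | x ≤ m} from by
          simp only [Set.mem_setOf_eq]; omega), add_zero]
    · rw [Set.indicator_of_notMem (show n ∉ {x : ℤ | m < x} from h),
        Set.indicator_of_mem (show n ∈ {x : ℤ | x ≤ m} from by
          simp only [Set.mem_setOf_eq]; omega), zero_add]
  rw [tsum_congr this, (hasSum_F L hL).tsum_eq]

lemma T_nonneg (L : ℝ) (m : ℤ) : 0 ≤ T L m :=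
  tsum_nonneg fun n => Set.indicator_nonneg (fun x _ => F_nonneg L x) n

lemma T_pos (L : ℝ) (hL : 0 < L) (m : ℤ) : 0 < T L m := by
  set k0 : ℕ := max (m.natAbs + 1) ⌈3 * L ^ 2⌉₊ with hk0
  have hk3 : 3 * L ^ 2 ≤ (k0 : ℝ) + 1 := by
    have h1 : (⌈3 * L ^ 2⌉₊ : ℝ) ≤ k0 := by exact_mod_cast Nat.cast_le.2 (le_max_right _ _)
    have := Nat.le_ceil (3 * L ^ 2)
    linarith
  have hk1 : m.natAbs + 1 ≤ k0 := le_max_left _ _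
  set n0 : ℤ := -(k0 : ℤ) with hn0
  have hn0m : n0 ≤ m := by omega
  have hneg : ¬ (0 ≤ n0) := by omega
  have hFpos : 0 < F L n0 := by
    have hbj : besselJint L n0 = (-1 : ℝ) ^ k0 * besselJnat L k0 := by
      rw [besselJint, if_neg hneg]
      congr 2 <;> omega
    have hb := besselJnat_pos L hL k0 hk3
    rw [F]
    apply mul_self_pos.2
    rw [hbj]
    intro hc
    rcases mul_eq_zero.1 hc with h | h
    · exact absurd h (pow_ne_zero _ (by norm_num))
    · linarith
  have hle : F L n0 ≤ T L m := by
    have := Summable.le_tsum ((summable_F L hL).indicator {x : ℤ | x ≤ m}) n0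
      (fun j _ => Set.indicator_nonneg (fun x _ => F_nonneg L x) j)
    rwa [Set.indicator_of_mem (show n0 ∈ {x : ℤ | x ≤ m} from hn0m)] at this
  linarith

lemma tendsto_T (L : ℝ) (hL : 0 < L) : Filter.Tendsto (T L) Filter.atBot (nhds 0) := by
  rw [Metric.tendsto_nhds]
  intro ε hε
  have h2 : Filter.Tendsto (fun s : Finset ℤ => ∑ n ∈ s, F L n) Filter.atTop (nhds 1) :=
    hasSum_F L hL
  have h3 := h2.eventually (eventually_gt_nhds (show (1:ℝ) - ε < 1 by linarith))
  rw [Filter.eventually_atTop] at h3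
  obtain ⟨s0, hs0⟩ := h3
  set M : ℤ := -(1 + ((s0.sup Int.natAbs : ℕ) : ℤ)) with hM
  filter_upwards [Filter.eventually_le_atBot M] with m hm
  rw [Real.dist_eq, sub_zero, abs_of_nonneg (T_nonneg L m)]
  have h4 : 1 - ε < ∑ n ∈ s0, F L n := hs0 s0 le_rfl
  have h5 : ∑ n ∈ s0, F L n ≤ KBeDiag L m := by
    rw [KBeDiag_eq_indicator L hL m]
    have hcongr : ∑ n ∈ s0, F L n = ∑ n ∈ s0, Set.indicator {x : ℤ | m < x} (F L) n := by
      refine Finset.sum_congr rfl fun n hn => ?_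
      have hna : (n.natAbs : ℤ) ≤ ((s0.sup Int.natAbs : ℕ) : ℤ) := by
        exact_mod_cast Finset.le_sup hn
      rw [Set.indicator_of_mem (show n ∈ {x : ℤ | m < x} from by
        simp only [Set.mem_setOf_eq]; omega)]
    rw [hcongr]
    exact Summable.sum_le_tsum s0 (fun i _ => Set.indicator_nonneg (fun x _ => F_nonneg L x) i)
      ((summable_F L hL).indicator _)
  have h6 := KBeDiag_add_T L hL m
  linarith

end BesselProof

/-- for `L > 0`, the map `a ↦ K^Be(a,a)` on `ℤ'` is non-increasing, is
everywhere `< 1`, and tends to `1` as `a → -∞` along `ℤ'`. -/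
theorem discreteBesselKernel_diagonal_monotonicity (L : ℝ) (hL : 0 < L) :
    (∀ m : ℤ, KBeDiag L (m + 1) ≤ KBeDiag L m) ∧
    (∀ m : ℤ, KBeDiag L m < 1) ∧
    Filter.Tendsto (fun m : ℤ => KBeDiag L m) Filter.atBot (nhds 1) := by
  refine ⟨fun m => ?_, fun m => ?_, ?_⟩
  · have := BesselProof.KBeDiag_step L hL m
    have hF := BesselProof.F_nonneg L (m + 1)
    linarith
  · have h1 := BesselProof.KBeDiag_add_T L hL m
    have h2 := BesselProof.T_pos L hL m
    linarith
  · have heq : (fun m : ℤ => KBeDiag L m) = fun m : ℤ => 1 - BesselProof.T L m := by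
      funext m
      have := BesselProof.KBeDiag_add_T L hL m
      linarith
    rw [heq]
    have := (BesselProof.tendsto_T L hL).const_sub 1
    simpa using this
end

section
/- Fix L > 0. For every square-summable ψ : ℤ' → ℝ and every a ∈ ℤ', the series (𝒥ψ)(a) := Σ_{b∈ℤ'} J_{a+b}(2L) ψ(b) converges absolutely; moreover the resulting function 𝒥ψ : ℤ' → ℝ is square-summable with Σ_{a∈ℤ'} (𝒥ψ)(a)² = Σ_{b∈ℤ'} ψ(b)², and 𝒥(𝒥ψ) = ψ. (In other words, the kernel J_{a+b}(2L) induces a unitary involution of ℓ²(ℤ').) -/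
noncomputable def bA (L : ℝ) (pq : ℕ × ℕ) : ℝ :=
  (-1 : ℝ) ^ pq.2 * L ^ (pq.1 + pq.2) / (Nat.factorial pq.1 * Nat.factorial pq.2)

noncomputable def bAf (L : ℝ) (n : ℤ) (pq : ℕ × ℕ) : ℝ :=
  if (pq.1 : ℤ) - pq.2 = n then bA L pq else 0

lemma abs_bA (L : ℝ) (pq : ℕ × ℕ) :
    |bA L pq| = (|L| ^ pq.1 / Nat.factorial pq.1) * (|L| ^ pq.2 / Nat.factorial pq.2) := by
  rw [bA, abs_div, abs_mul, abs_pow, abs_pow, abs_neg, abs_one, one_pow, one_mul, pow_add,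
    abs_mul, Nat.abs_cast, Nat.abs_cast, div_mul_div_comm]

lemma summable_abs_bA (L : ℝ) : Summable (fun pq : ℕ × ℕ => |bA L pq|) := by
  have h := (Real.summable_pow_div_factorial |L|).mul_of_nonneg
    (Real.summable_pow_div_factorial |L|) (fun n => by positivity) (fun n => by positivity)
  exact h.congr fun pq => (abs_bA L pq).symm

lemma summable_bA (L : ℝ) : Summable (bA L) := (summable_abs_bA L).of_abs

lemma abs_bAf_le (L : ℝ) (n : ℤ) (pq : ℕ × ℕ) : |bAf L n pq| ≤ |bA L pq| := by
  rw [bAf]; split <;> simp [abs_nonneg]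

lemma summable_abs_bAf (L : ℝ) (n : ℤ) : Summable (fun pq => |bAf L n pq|) :=
  (summable_abs_bA L).of_nonneg_of_le (fun _ => abs_nonneg _) (abs_bAf_le L n)

lemma summable_bAf (L : ℝ) (n : ℤ) : Summable (bAf L n) := (summable_abs_bAf L n).of_abs

lemma besselJnat_eq_s7 (L : ℝ) (m : ℕ) : besselJnat L m = ∑' pq : ℕ × ℕ, bAf L m pq := by
  rw [besselJnat]
  have hkey : ∀ j : ℕ, bAf L (m : ℤ) (m + j, j)
      = (-1 : ℝ) ^ j * L ^ (2 * j + m) / (Nat.factorial j * Nat.factorial (m + j)) := by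
    intro j
    simp only [bAf, bA]
    rw [if_pos (by push_cast; ring)]
    push_cast
    ring
  refine (tsum_eq_tsum_of_ne_zero_bij (fun j => (m + j.1, j.1)) ?_ ?_ ?_).symm
  · intro x y hxy
    exact Subtype.ext (congrArg Prod.snd hxy)
  · rintro ⟨p, q⟩ hpq
    have hpq' : bAf L (m : ℤ) (p, q) ≠ 0 := hpq
    have hcond : (p : ℤ) - q = m := by
      by_contra h
      exact hpq' (by simp [bAf, h])
    have hp : p = m + q := by omega
    subst hp
    refine ⟨⟨q, ?_⟩, rfl⟩
    have h2 := hpq'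
    rw [hkey q] at h2
    exact h2
  · rintro ⟨j, hj⟩
    exact hkey j

lemma besselJint_eq (L : ℝ) (n : ℤ) : besselJint L n = ∑' pq : ℕ × ℕ, bAf L n pq := by
  rcases le_or_gt 0 n with hn | hn
  · rw [besselJint, if_pos hn, besselJnat_eq_s7]
    refine tsum_congr fun pq => ?_
    rw [bAf, bAf]
    congr 1
    simp only [eq_iff_iff]
    omega
  · have hm : (((-n).toNat : ℤ)) = -n := Int.toNat_of_nonneg (by omega)
    set m := (-n).toNat with hmdef
    rw [besselJint, if_neg (not_le.mpr hn), besselJnat_eq_s7, ← tsum_mul_left,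
      ← (Equiv.prodComm ℕ ℕ).tsum_eq (bAf L n)]
    refine tsum_congr fun pq => ?_
    rcases pq with ⟨p, q⟩
    show (-1 : ℝ) ^ m * bAf L (m : ℤ) (p, q) = bAf L n (q, p)
    by_cases hc : (p : ℤ) - q = (m : ℤ)
    · rw [bAf, bAf, if_pos hc, if_pos (show (q : ℤ) - p = n by omega), bA, bA]
      have hp : p = q + m := by omega
      subst hp
      push_cast
      ring
    · rw [bAf, bAf, if_neg hc, if_neg (show ¬((q : ℤ) - p = n) by omega), mul_zero]

lemma key_fin (L : ℝ) (N : ℕ) :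
    ∑ x ∈ Finset.HasAntidiagonal.antidiagonal N,
      (-1 : ℝ) ^ x.1 * L ^ N / (Nat.factorial x.1 * Nat.factorial x.2)
      = if N = 0 then 1 else 0 := by
  rw [Finset.Nat.sum_antidiagonal_eq_sum_range_succ_mk]
  have hstep : ∀ k ∈ Finset.range (N + 1),
      (-1 : ℝ) ^ k * L ^ N / (Nat.factorial k * Nat.factorial (N - k))
        = (L ^ N / Nat.factorial N) * ((-1) ^ k * (N.choose k : ℝ)) := by
    intro k hk
    have hkN : k ≤ N := Nat.lt_succ_iff.mp (Finset.mem_range.mp hk)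
    rw [Nat.cast_choose ℝ hkN]
    have h1 : (Nat.factorial k : ℝ) ≠ 0 := Nat.cast_ne_zero.mpr (Nat.factorial_ne_zero k)
    have h2 : (Nat.factorial (N - k) : ℝ) ≠ 0 := Nat.cast_ne_zero.mpr (Nat.factorial_ne_zero _)
    have h3 : (Nat.factorial N : ℝ) ≠ 0 := Nat.cast_ne_zero.mpr (Nat.factorial_ne_zero N)
    field_simp
  rw [Finset.sum_congr rfl hstep, ← Finset.mul_sum]
  have halt : ∑ k ∈ Finset.range (N + 1), ((-1 : ℝ)) ^ k * (N.choose k : ℝ)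
      = if N = 0 then 1 else 0 := by
    have h := Int.alternating_sum_range_choose (n := N)
    have := congrArg (fun z : ℤ => (z : ℝ)) h
    push_cast at this
    simpa using this
  rw [halt]
  by_cases hN : N = 0
  · subst hN; simp
  · simp [hN]

lemma key_tsum (L : ℝ) (N : ℤ) :
    ∑' v : ℕ × ℕ, (if (v.1 : ℤ) + v.2 = N then bA L (v.2, v.1) else 0)
      = if N = 0 then 1 else 0 := by
  rcases lt_or_ge N 0 with hN | hN
  · rw [if_neg (by omega)]
    rw [show (fun v : ℕ × ℕ => if (v.1 : ℤ) + v.2 = N then bA L (v.2, v.1) else 0) = fun _ => 0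
      from funext fun v => if_neg (by omega)]
    exact tsum_zero
  · obtain ⟨M, rfl⟩ : ∃ M : ℕ, (M : ℤ) = N := ⟨N.toNat, Int.toNat_of_nonneg hN⟩
    rw [tsum_eq_sum (s := Finset.HasAntidiagonal.antidiagonal M)
      (fun x hx => if_neg fun hc => hx (Finset.HasAntidiagonal.mem_antidiagonal.mpr (by exact_mod_cast hc)))]
    have : ∀ x ∈ Finset.HasAntidiagonal.antidiagonal M,
        (if (x.1 : ℤ) + x.2 = (M : ℤ) then bA L (x.2, x.1) else 0)
          = (-1 : ℝ) ^ x.1 * L ^ M / (Nat.factorial x.1 * Nat.factorial x.2) := by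
      intro x hx
      have hxm : x.1 + x.2 = M := Finset.HasAntidiagonal.mem_antidiagonal.mp hx
      rw [if_pos (by exact_mod_cast hxm), bA]
      simp only
      rw [show x.2 + x.1 = M from by omega, mul_comm ((Nat.factorial x.2 : ℝ))]
    rw [Finset.sum_congr rfl this, key_fin]
    simp [Int.natCast_eq_zero]

noncomputable def bB (L : ℝ) (n : ℤ) : ℝ := ∑' pq : ℕ × ℕ, |bAf L n pq|

lemma bB_nonneg (L : ℝ) (n : ℤ) : 0 ≤ bB L n := tsum_nonneg fun _ => abs_nonneg _

lemma abs_besselJint_le (L : ℝ) (n : ℤ) : |besselJint L n| ≤ bB L n := by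
  rw [besselJint_eq]
  simpa [Real.norm_eq_abs, bB] using
    norm_tsum_le_tsum_norm (f := bAf L n)
      (by simpa [Real.norm_eq_abs] using summable_abs_bAf L n)

lemma summable_abs_bAf_prod (L : ℝ) :
    Summable (fun x : ℤ × ℕ × ℕ => |bAf L x.1 x.2|) := by
  have hinj : Function.Injective
      (fun pq : ℕ × ℕ => ((((pq.1 : ℤ) - pq.2 : ℤ), pq) : ℤ × ℕ × ℕ)) :=
    fun x y h => (Prod.ext_iff.mp h).2
  refine (Function.Injective.summable_iff hinj ?_).mp ?_
  · rintro ⟨n, pq⟩ hx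
    by_cases h : (pq.1 : ℤ) - pq.2 = n
    · exact absurd ⟨pq, by simp [h]⟩ hx
    · simp [bAf, h]
  · refine (summable_abs_bA L).congr fun pq => ?_
    simp [bAf]

lemma summable_bB (L : ℝ) : Summable (bB L) :=
  ((summable_prod_of_nonneg (fun _ => abs_nonneg _)).mp (summable_abs_bAf_prod L)).2

noncomputable def bS (L : ℝ) : ℝ := ∑' n : ℤ, bB L n

lemma bB_le_bS (L : ℝ) (n : ℤ) : bB L n ≤ bS L :=
  Summable.le_tsum (summable_bB L) n fun j _ => bB_nonneg L j

lemma bS_nonneg (L : ℝ) : 0 ≤ bS L := tsum_nonneg fun n => bB_nonneg L n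

lemma summable_bB_shift (L : ℝ) (k : ℤ) : Summable fun n : ℤ => bB L (k + n) :=
  ((Equiv.addLeft k).summable_iff (f := bB L)).mpr (summable_bB L)

lemma tsum_bB_shift (L : ℝ) (k : ℤ) : ∑' n : ℤ, bB L (k + n) = bS L :=
  (Equiv.addLeft k).tsum_eq (bB L)

lemma summable_abs_bA_swap (L : ℝ) : Summable fun v : ℕ × ℕ => |bA L (v.2, v.1)| :=
  ((Equiv.prodComm ℕ ℕ).summable_iff (f := fun pq => |bA L pq|)).mpr (summable_abs_bA L)

lemma summable_bAf_mul (L : ℝ) (n n' : ℤ) :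
    Summable (fun y : (ℕ × ℕ) × (ℕ × ℕ) => bAf L n y.1 * bAf L n' y.2) := by
  refine Summable.of_abs (Summable.of_nonneg_of_le (fun _ => abs_nonneg _) (fun y => ?_)
    ((summable_abs_bA L).mul_of_nonneg (summable_abs_bA L)
      (fun _ => abs_nonneg _) (fun _ => abs_nonneg _)))
  rw [abs_mul]
  exact mul_le_mul (abs_bAf_le L n y.1) (abs_bAf_le L n' y.2) (abs_nonneg _) (abs_nonneg _)

def shuffleE : ((ℕ × ℕ) × (ℕ × ℕ)) ≃ ((ℕ × ℕ) × (ℕ × ℕ)) where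
  toFun z := ((z.1.1, z.2.1), (z.2.2, z.1.2))
  invFun y := ((y.1.1, y.2.2), (y.1.2, y.2.1))
  left_inv z := rfl
  right_inv y := rfl

lemma ortho (L : ℝ) (d : ℤ) :
    ∑' j : ℤ, besselJint L j * besselJint L (j + d) = if d = 0 then 1 else 0 := by
  classical
  set f : ((ℕ × ℕ) × (ℕ × ℕ)) → ℤ → ℝ :=
    fun y j => bAf L j y.1 * bAf L (j + d) y.2 with hf
  have hfy : ∀ y : (ℕ × ℕ) × (ℕ × ℕ), f y = (fun j =>
      if j = ((y.1.1 : ℤ) - y.1.2) then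
        bA L y.1 * bAf L (((y.1.1 : ℤ) - y.1.2) + d) y.2 else 0) := by
    intro y
    funext j
    by_cases h : j = (y.1.1 : ℤ) - y.1.2
    · subst h
      simp [hf, bAf]
    · rw [if_neg h, hf]
      simp only [bAf]
      rw [if_neg (fun hc => h hc.symm), zero_mul]
  have huncurry : Summable (Function.uncurry f) := by
    have hinj : Function.Injective
        (fun y : (ℕ × ℕ) × (ℕ × ℕ) => ((y, (y.1.1 : ℤ) - y.1.2) : ((ℕ × ℕ) × (ℕ × ℕ)) × ℤ)) :=
      fun x y h => (Prod.ext_iff.mp h).1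
    refine (Function.Injective.summable_iff hinj ?_).mp ?_
    · rintro ⟨y, j⟩ hx
      by_cases h : j = (y.1.1 : ℤ) - y.1.2
      · exact absurd ⟨y, by simp [h]⟩ hx
      · show f y j = 0
        simp only [hfy y]
        exact if_neg h
    · refine Summable.of_abs (Summable.of_nonneg_of_le (fun _ => abs_nonneg _) (fun y => ?_)
        ((summable_abs_bA L).mul_of_nonneg (summable_abs_bA L)
          (fun _ => abs_nonneg _) (fun _ => abs_nonneg _)))
      show |bAf L _ y.1 * bAf L _ y.2| ≤ _
      rw [abs_mul]
      exact mul_le_mul (abs_bAf_le L _ y.1) (abs_bAf_le L _ y.2) (abs_nonneg _) (abs_nonneg _)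
  have h₁ : ∀ y, Summable (f y) := fun y => by
    rw [hfy y]; exact (hasSum_ite_eq _ _).summable
  have h₂ : ∀ j, Summable fun y => f y j := fun j => summable_bAf_mul L j (j + d)
  have hsummable2 : Summable (fun z : (ℕ × ℕ) × (ℕ × ℕ) =>
      (if ((z.2.1 : ℤ) + z.2.2) = ((z.1.1 : ℤ) + z.1.2 + d) then
        bA L z.1 * bA L (z.2.2, z.2.1) else 0)) := by
    refine Summable.of_abs (Summable.of_nonneg_of_le (fun _ => abs_nonneg _) (fun z => ?_)
      ((summable_abs_bA L).mul_of_nonneg (summable_abs_bA_swap L)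
        (fun _ => abs_nonneg _) (fun _ => abs_nonneg _)))
    split
    · rw [abs_mul]
    · simpa using mul_nonneg (abs_nonneg (bA L z.1)) (abs_nonneg (bA L (z.2.2, z.2.1)))
  calc ∑' j : ℤ, besselJint L j * besselJint L (j + d)
      = ∑' j, ∑' y, f y j := tsum_congr fun j => by
        rw [besselJint_eq, besselJint_eq]
        exact Summable.tsum_mul_tsum (summable_bAf L j) (summable_bAf L (j + d))
          (summable_bAf_mul L j (j + d))
    _ = ∑' y, ∑' j, f y j := Summable.tsum_comm' huncurry h₁ h₂
    _ = ∑' y : (ℕ × ℕ) × (ℕ × ℕ), bA L y.1 * bAf L (((y.1.1 : ℤ) - y.1.2) + d) y.2 :=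
        tsum_congr fun y => by rw [hfy y]; exact (hasSum_ite_eq _ _).tsum_eq
    _ = ∑' z : (ℕ × ℕ) × (ℕ × ℕ),
        (if ((z.2.1 : ℤ) + z.2.2) = ((z.1.1 : ℤ) + z.1.2 + d) then
          bA L z.1 * bA L (z.2.2, z.2.1) else 0) := by
        rw [← shuffleE.tsum_eq
          (fun y : (ℕ × ℕ) × (ℕ × ℕ) => bA L y.1 * bAf L (((y.1.1 : ℤ) - y.1.2) + d) y.2)]
        refine tsum_congr fun z => ?_
        rcases z with ⟨⟨p, s⟩, ⟨q, r⟩⟩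
        show bA L (p, q) * bAf L ((p : ℤ) - q + d) (r, s) = _
        simp only [bAf]
        by_cases hc : (r : ℤ) - s = (p : ℤ) - q + d
        · rw [if_pos hc, if_pos (by omega)]
          show bA L (p, q) * bA L (r, s) = bA L (p, s) * bA L (r, q)
          simp only [bA]
          push_cast
          ring
        · rw [if_neg hc, if_neg (by omega), mul_zero]
    _ = ∑' u : ℕ × ℕ, ∑' v : ℕ × ℕ,
        (if ((v.1 : ℤ) + v.2) = ((u.1 : ℤ) + u.2 + d) then bA L u * bA L (v.2, v.1) else 0) := by
        refine Summable.tsum_prod' hsummable2 fun u => ?_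
        refine Summable.of_abs (Summable.of_nonneg_of_le (fun _ => abs_nonneg _) (fun v => ?_)
          ((summable_abs_bA_swap L).mul_left |bA L u|))
        split
        · rw [abs_mul]
        · simpa using mul_nonneg (abs_nonneg (bA L u)) (abs_nonneg (bA L (v.2, v.1)))
    _ = ∑' u : ℕ × ℕ, (if ((u.1 : ℤ) + u.2) = -d then bA L u else 0) := by
        refine tsum_congr fun u => ?_
        rw [show (fun v : ℕ × ℕ =>
            (if ((v.1 : ℤ) + v.2) = ((u.1 : ℤ) + u.2 + d) then bA L u * bA L (v.2, v.1) else 0))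
          = (fun v : ℕ × ℕ => bA L u *
            (if ((v.1 : ℤ) + v.2) = ((u.1 : ℤ) + u.2 + d) then bA L (v.2, v.1) else 0))
          from funext fun v => by split <;> simp]
        rw [tsum_mul_left, key_tsum L ((u.1 : ℤ) + u.2 + d)]
        by_cases hc : (u.1 : ℤ) + u.2 = -d
        · rw [if_pos hc, if_pos (by omega), mul_one]
        · rw [if_neg hc, if_neg (by omega), mul_zero]
    _ = if -d = 0 then 1 else 0 := by
        rw [← key_tsum L (-d), ← (Equiv.prodComm ℕ ℕ).tsum_eq
          (fun v : ℕ × ℕ => if (v.1 : ℤ) + v.2 = -d then bA L (v.2, v.1) else 0)]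
        refine tsum_congr fun u => ?_
        rcases u with ⟨p, q⟩
        show (if (p : ℤ) + q = -d then bA L (p, q) else 0)
          = (if (q : ℤ) + p = -d then bA L (p, q) else 0)
        rw [show ((q : ℤ) + p) = (p : ℤ) + q from by ring]
    _ = if d = 0 then 1 else 0 := by simp [neg_eq_zero]

lemma tsum_cs {w x : ℤ → ℝ} (hw : ∀ n, 0 ≤ w n) (hws : Summable w)
    (hwx2 : Summable fun n => w n * x n ^ 2) (hwx : Summable fun n => w n * |x n|) :
    (∑' n, w n * |x n|) ^ 2 ≤ (∑' n, w n) * ∑' n, w n * x n ^ 2 := by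
  set W := ∑' n, w n with hW
  set G := ∑' n, w n * x n ^ 2 with hG
  have hW0 : 0 ≤ W := tsum_nonneg hw
  have hG0 : 0 ≤ G := tsum_nonneg fun n => mul_nonneg (hw n) (sq_nonneg _)
  have hbound : ∀ s : Finset ℤ, ∑ n ∈ s, w n * |x n| ≤ Real.sqrt (W * G) := by
    intro s
    rw [Real.le_sqrt (Finset.sum_nonneg fun n _ => mul_nonneg (hw n) (abs_nonneg _))
      (mul_nonneg hW0 hG0)]
    have hcs := Finset.sum_mul_sq_le_sq_mul_sq s (fun n => Real.sqrt (w n))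
      (fun n => Real.sqrt (w n) * |x n|)
    have h1 : ∀ n, Real.sqrt (w n) * (Real.sqrt (w n) * |x n|) = w n * |x n| := fun n => by
      rw [← mul_assoc, Real.mul_self_sqrt (hw n)]
    have h2 : ∀ n, Real.sqrt (w n) ^ 2 = w n := fun n => Real.sq_sqrt (hw n)
    have h3 : ∀ n, (Real.sqrt (w n) * |x n|) ^ 2 = w n * x n ^ 2 := fun n => by
      rw [mul_pow, Real.sq_sqrt (hw n), sq_abs]
    simp only [h1, h2, h3] at hcs
    refine hcs.trans (mul_le_mul ?_ ?_ ?_ hW0)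
    · exact Summable.sum_le_tsum s (fun n _ => hw n) hws
    · exact Summable.sum_le_tsum s (fun n _ => mul_nonneg (hw n) (sq_nonneg _)) hwx2
    · exact Finset.sum_nonneg fun n _ => mul_nonneg (hw n) (sq_nonneg _)
  have hle : ∑' n, w n * |x n| ≤ Real.sqrt (W * G) := Summable.tsum_le_of_sum_le hwx hbound
  have h0 : 0 ≤ ∑' n, w n * |x n| := tsum_nonneg fun n => mul_nonneg (hw n) (abs_nonneg _)
  calc (∑' n, w n * |x n|) ^ 2 ≤ Real.sqrt (W * G) ^ 2 := pow_le_pow_left₀ h0 hle 2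
    _ = W * G := Real.sq_sqrt (mul_nonneg hW0 hG0)



section Main

variable (L : ℝ) (ψ : ℤ → ℝ)

lemma hrowM (m : ℤ) : Summable fun n : ℤ => bB L (m + n + 1) :=
  (summable_bB_shift L (m + 1)).congr fun n => by
    rw [show m + 1 + n = m + n + 1 from by ring]

lemma hrowsumM (m : ℤ) : ∑' n : ℤ, bB L (m + n + 1) = bS L := by
  rw [← tsum_bB_shift L (m + 1)]
  exact tsum_congr fun n => by rw [show m + n + 1 = m + 1 + n from by ring]

noncomputable def psiM : ℝ := Real.sqrt (∑' k : ℤ, ψ k ^ 2)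

lemma psiM_nonneg : 0 ≤ psiM ψ := Real.sqrt_nonneg _

lemma abs_psi_le (hψ : Summable (fun n : ℤ => (ψ n) ^ 2)) (n : ℤ) : |ψ n| ≤ psiM ψ := by
  rw [psiM, ← Real.sqrt_sq_eq_abs]
  exact Real.sqrt_le_sqrt (Summable.le_tsum hψ n fun j _ => sq_nonneg _)

lemma part1M (hψ : Summable (fun n : ℤ => (ψ n) ^ 2)) : ∀ m : ℤ, Summable fun n : ℤ => |besselJint L (m + n + 1) * ψ n| := by
  intro m
  refine Summable.of_nonneg_of_le (fun _ => abs_nonneg _) (fun n => ?_)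
    ((hrowM L m).mul_right (psiM ψ))
  rw [abs_mul]
  exact mul_le_mul (abs_besselJint_le L _) (abs_psi_le ψ hψ n) (abs_nonneg _) (bB_nonneg L _)

lemma summable_wpsi (hψ : Summable (fun n : ℤ => (ψ n) ^ 2)) (m : ℤ) : Summable fun n => bB L (m + n + 1) * |ψ n| :=
  Summable.of_nonneg_of_le (fun n => mul_nonneg (bB_nonneg _ _) (abs_nonneg _))
    (fun n => mul_le_mul_of_nonneg_left (abs_psi_le ψ hψ n) (bB_nonneg _ _))
    ((hrowM L m).mul_right (psiM ψ))

lemma summable_wpsi2 (hψ : Summable (fun n : ℤ => (ψ n) ^ 2)) (m : ℤ) : Summable fun n => bB L (m + n + 1) * ψ n ^ 2 :=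
  Summable.of_nonneg_of_le (fun n => mul_nonneg (bB_nonneg _ _) (sq_nonneg _))
    (fun n => mul_le_mul_of_nonneg_left
      (by rw [← sq_abs]; exact pow_le_pow_left₀ (abs_nonneg _) (abs_psi_le ψ hψ n) 2)
      (bB_nonneg _ _))
    ((hrowM L m).mul_right (psiM ψ ^ 2))

lemma Phi_abs_le (hψ : Summable (fun n : ℤ => (ψ n) ^ 2)) (m : ℤ) :
    |∑' n : ℤ, besselJint L (m + n + 1) * ψ n| ≤ ∑' n, bB L (m + n + 1) * |ψ n| := by
  calc |∑' n : ℤ, besselJint L (m + n + 1) * ψ n|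
      ≤ ∑' n, |besselJint L (m + n + 1) * ψ n| := by
        have h := norm_tsum_le_tsum_norm (f := fun n : ℤ => besselJint L (m + n + 1) * ψ n)
          ((part1M L ψ hψ m).congr fun n => (Real.norm_eq_abs _).symm)
        simpa only [Real.norm_eq_abs] using h
    _ ≤ ∑' n, bB L (m + n + 1) * |ψ n| := Summable.tsum_le_tsum (fun n => by
          rw [abs_mul]
          exact mul_le_mul_of_nonneg_right (abs_besselJint_le L _) (abs_nonneg _))
        (part1M L ψ hψ m) (summable_wpsi L ψ hψ m)

lemma Phi_bound (hψ : Summable (fun n : ℤ => (ψ n) ^ 2)) (m : ℤ) :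
    |∑' n : ℤ, besselJint L (m + n + 1) * ψ n| ≤ bS L * psiM ψ := by
  refine (Phi_abs_le L ψ hψ m).trans ?_
  calc ∑' k, bB L (m + k + 1) * |ψ k|
      ≤ ∑' k, bB L (m + k + 1) * psiM ψ := Summable.tsum_le_tsum
        (fun k => mul_le_mul_of_nonneg_left (abs_psi_le ψ hψ k) (bB_nonneg _ _))
        (summable_wpsi L ψ hψ m) ((hrowM L m).mul_right (psiM ψ))
    _ = bS L * psiM ψ := by rw [tsum_mul_right, hrowsumM L m]

lemma Phi_sq_le (hψ : Summable (fun n : ℤ => (ψ n) ^ 2)) (m : ℤ) :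
    (∑' n : ℤ, besselJint L (m + n + 1) * ψ n) ^ 2
      ≤ bS L * ∑' n, bB L (m + n + 1) * ψ n ^ 2 := by
  have h1 : (∑' n : ℤ, besselJint L (m + n + 1) * ψ n) ^ 2
      ≤ (∑' n, bB L (m + n + 1) * |ψ n|) ^ 2 := by
    rw [← sq_abs (∑' n : ℤ, besselJint L (m + n + 1) * ψ n)]
    exact pow_le_pow_left₀ (abs_nonneg _) (Phi_abs_le L ψ hψ m) 2
  refine h1.trans ?_
  have h2 := tsum_cs (w := fun n => bB L (m + n + 1)) (x := ψ)
    (fun n => bB_nonneg _ _) (hrowM L m) (summable_wpsi2 L ψ hψ m) (summable_wpsi L ψ hψ m)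
  rwa [hrowsumM L m] at h2

lemma summable_bB_psisq (hψ : Summable (fun n : ℤ => (ψ n) ^ 2)) : Summable (fun x : ℤ × ℤ => bB L (x.1 + x.2 + 1) * ψ x.2 ^ 2) := by
  have hsum0 : Summable (fun x : ℤ × ℤ => bB L x.1 * ψ x.2 ^ 2) :=
    (summable_bB L).mul_of_nonneg hψ (fun n => bB_nonneg L n) (fun n => sq_nonneg _)
  exact (Equiv.summable_iff
    { toFun := fun x : ℤ × ℤ => (x.1 + x.2 + 1, x.2)
      invFun := fun x : ℤ × ℤ => (x.1 - x.2 - 1, x.2)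
      left_inv := by rintro ⟨a, b⟩; simp [Prod.ext_iff]; ring
      right_inv := by rintro ⟨a, b⟩; simp [Prod.ext_iff]; ring }
    (f := fun x : ℤ × ℤ => bB L x.1 * ψ x.2 ^ 2)).mpr hsum0

lemma part2M (hψ : Summable (fun n : ℤ => (ψ n) ^ 2)) : Summable (fun m : ℤ => (∑' n : ℤ, besselJint L (m + n + 1) * ψ n) ^ 2) := by
  have part2' : Summable fun m : ℤ => ∑' n : ℤ, bB L (m + n + 1) * ψ n ^ 2 :=
    ((summable_prod_of_nonneg
      (fun x => mul_nonneg (bB_nonneg _ _) (sq_nonneg _))).mp (summable_bB_psisq L ψ hψ)).2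
  exact Summable.of_nonneg_of_le (fun m => sq_nonneg _) (Phi_sq_le L ψ hψ)
    (part2'.mul_left (bS L))

lemma deltaM (m k : ℤ) :
    ∑' n : ℤ, besselJint L (m + n + 1) * besselJint L (n + k + 1)
      = if k = m then 1 else 0 := by
  have hreindex : ∑' n : ℤ, besselJint L (m + n + 1) * besselJint L (n + k + 1)
      = ∑' j : ℤ, besselJint L j * besselJint L (j + (k - m)) := by
    rw [← ((Equiv.subRight (m + 1)).tsum_eq
      (fun n : ℤ => besselJint L (m + n + 1) * besselJint L (n + k + 1)))]
    refine tsum_congr fun j => ?_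
    show besselJint L (m + (j - (m + 1)) + 1) * besselJint L ((j - (m + 1)) + k + 1) = _
    rw [show m + (j - (m + 1)) + 1 = j from by ring,
      show (j - (m + 1)) + k + 1 = j + (k - m) from by ring]
  rw [hreindex, ortho L (k - m)]
  by_cases hk : k = m
  · rw [if_pos (by omega), if_pos hk]
  · rw [if_neg (by omega), if_neg hk]

lemma part4M (hψ : Summable (fun n : ℤ => (ψ n) ^ 2)) (m : ℤ) :
    (∑' n : ℤ, besselJint L (m + n + 1) * (∑' k : ℤ, besselJint L (n + k + 1) * ψ k))
      = ψ m := by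
  classical
  set f : ℤ → ℤ → ℝ :=
    fun n k => besselJint L (m + n + 1) * (besselJint L (n + k + 1) * ψ k) with hfdef
  have hslice : ∀ n : ℤ, Summable fun k : ℤ =>
      bB L (m + n + 1) * (bB L (n + k + 1) * psiM ψ) := fun n =>
    (((hrowM L n).mul_right (psiM ψ))).mul_left (bB L (m + n + 1))
  have hP : Summable (Function.uncurry f) := by
    have hbound : Summable (fun x : ℤ × ℤ =>
        bB L (m + x.1 + 1) * (bB L (x.1 + x.2 + 1) * psiM ψ)) := by
      refine (summable_prod_of_nonneg (fun x => mul_nonneg (bB_nonneg _ _)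
        (mul_nonneg (bB_nonneg _ _) (psiM_nonneg ψ)))).mpr
        ⟨fun n => (hslice n).congr fun k => rfl, ?_⟩
      refine (((hrowM L m).mul_right (bS L * psiM ψ)).congr (fun n => ?_))
      show bB L (m + n + 1) * (bS L * psiM ψ)
        = ∑' k : ℤ, bB L (m + n + 1) * (bB L (n + k + 1) * psiM ψ)
      rw [tsum_mul_left, show (∑' k : ℤ, bB L (n + k + 1) * psiM ψ) = bS L * psiM ψ from by
        rw [tsum_mul_right, hrowsumM L n]]
    refine Summable.of_abs (Summable.of_nonneg_of_le (fun _ => abs_nonneg _)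
      (fun x => ?_) hbound)
    show |besselJint L (m + x.1 + 1) * (besselJint L (x.1 + x.2 + 1) * ψ x.2)| ≤ _
    rw [abs_mul, abs_mul]
    exact mul_le_mul (abs_besselJint_le L _)
      (mul_le_mul (abs_besselJint_le L _) (abs_psi_le ψ hψ _) (abs_nonneg _) (bB_nonneg _ _))
      (by positivity) (bB_nonneg _ _)
  have h₁ : ∀ n, Summable (f n) := fun n =>
    ((part1M L ψ hψ n).of_abs).mul_left (besselJint L (m + n + 1))
  have h₂ : ∀ k, Summable fun n => f n k := by
    intro k
    refine Summable.of_abs (Summable.of_nonneg_of_le (fun _ => abs_nonneg _) (fun n => ?_)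
      ((hrowM L m).mul_right (bS L * psiM ψ)))
    show |besselJint L (m + n + 1) * (besselJint L (n + k + 1) * ψ k)|
      ≤ bB L (m + n + 1) * (bS L * psiM ψ)
    rw [abs_mul, abs_mul]
    refine mul_le_mul (abs_besselJint_le L _)
      (mul_le_mul ((abs_besselJint_le L _).trans (bB_le_bS L _)) (abs_psi_le ψ hψ _)
        (abs_nonneg _) (bS_nonneg L)) (by positivity) (bB_nonneg _ _)
  calc ∑' n : ℤ, besselJint L (m + n + 1) * (∑' k : ℤ, besselJint L (n + k + 1) * ψ k)
      = ∑' n : ℤ, ∑' k : ℤ, f n k := tsum_congr fun n => tsum_mul_left.symm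
    _ = ∑' k : ℤ, ∑' n : ℤ, f n k := (Summable.tsum_comm' hP h₁ h₂).symm
    _ = ∑' k : ℤ, (∑' n : ℤ, besselJint L (m + n + 1) * besselJint L (n + k + 1)) * ψ k :=
        tsum_congr fun k => by
          rw [← tsum_mul_right]
          exact tsum_congr fun n => by rw [hfdef]; ring
    _ = ∑' k : ℤ, (if k = m then ψ m else 0) := tsum_congr fun k => by
        rw [deltaM L m k]
        by_cases hk : k = m
        · subst hk; simp
        · simp [hk]
    _ = ψ m := (hasSum_ite_eq m (ψ m)).tsum_eq

lemma summable_bB_Phisq (hψ : Summable (fun n : ℤ => (ψ n) ^ 2)) : Summable (fun x : ℤ × ℤ =>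
    bB L (x.1 + x.2 + 1) * (∑' n : ℤ, besselJint L (x.1 + n + 1) * ψ n) ^ 2) := by
  have hsum0 : Summable (fun x : ℤ × ℤ =>
      bB L x.1 * (∑' n : ℤ, besselJint L (x.2 + n + 1) * ψ n) ^ 2) :=
    (summable_bB L).mul_of_nonneg (part2M L ψ hψ) (fun n => bB_nonneg L n)
      (fun n => sq_nonneg _)
  exact (Equiv.summable_iff
    { toFun := fun x : ℤ × ℤ => (x.1 + x.2 + 1, x.1)
      invFun := fun x : ℤ × ℤ => (x.2, x.1 - x.2 - 1)
      left_inv := by rintro ⟨a, b⟩; simp [Prod.ext_iff]; ring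
      right_inv := by rintro ⟨a, b⟩; simp [Prod.ext_iff]; ring }
    (f := fun x : ℤ × ℤ =>
      bB L x.1 * (∑' n : ℤ, besselJint L (x.2 + n + 1) * ψ n) ^ 2)).mpr hsum0

set_option maxHeartbeats 1000000 in
lemma part3M (hψ : Summable (fun n : ℤ => (ψ n) ^ 2)) :
    (∑' m : ℤ, (∑' n : ℤ, besselJint L (m + n + 1) * ψ n) ^ 2) = ∑' n : ℤ, (ψ n) ^ 2 := by
  classical
  set g : ℤ → ℤ → ℝ := fun m n => besselJint L (m + n + 1) * ψ n *
    (∑' j : ℤ, besselJint L (m + j + 1) * ψ j) with hgdef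
  have habsg : ∀ m n : ℤ, |g m n| ≤ bB L (m + n + 1) * (psiM ψ * (bS L * psiM ψ)) := by
    intro m n
    rw [hgdef]
    show |besselJint L (m + n + 1) * ψ n * (∑' j : ℤ, besselJint L (m + j + 1) * ψ j)| ≤ _
    rw [abs_mul, abs_mul, mul_assoc]
    exact mul_le_mul (abs_besselJint_le L _)
      (mul_le_mul (abs_psi_le ψ hψ n) (Phi_bound L ψ hψ m) (abs_nonneg _) (psiM_nonneg ψ))
      (mul_nonneg (abs_nonneg _) (abs_nonneg _)) (bB_nonneg _ _)
  have hR : Summable (Function.uncurry g) := by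
    have hbound : Summable (fun x : ℤ × ℤ =>
        bB L (x.1 + x.2 + 1) * ψ x.2 ^ 2 / 2
          + bB L (x.1 + x.2 + 1) * (∑' n : ℤ, besselJint L (x.1 + n + 1) * ψ n) ^ 2 / 2) :=
      (((summable_bB_psisq L ψ hψ).div_const 2).add
        ((summable_bB_Phisq L ψ hψ).div_const 2))
    refine Summable.of_abs (Summable.of_nonneg_of_le (fun _ => abs_nonneg _)
      (fun x => ?_) hbound)
    show |besselJint L (x.1 + x.2 + 1) * ψ x.2 *
      (∑' j : ℤ, besselJint L (x.1 + j + 1) * ψ j)| ≤ _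
    rw [abs_mul, abs_mul]
    set P := ∑' j : ℤ, besselJint L (x.1 + j + 1) * ψ j with hP
    have h1 : |ψ x.2| * |P| ≤ (ψ x.2 ^ 2 + P ^ 2) / 2 := by
      nlinarith [sq_nonneg (|ψ x.2| - |P|), sq_abs (ψ x.2), sq_abs P]
    calc |besselJint L (x.1 + x.2 + 1)| * |ψ x.2| * |P|
        ≤ bB L (x.1 + x.2 + 1) * ((ψ x.2 ^ 2 + P ^ 2) / 2) := by
          rw [mul_assoc]
          exact mul_le_mul (abs_besselJint_le L _) h1
            (mul_nonneg (abs_nonneg _) (abs_nonneg _)) (bB_nonneg _ _)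
      _ = bB L (x.1 + x.2 + 1) * ψ x.2 ^ 2 / 2 + bB L (x.1 + x.2 + 1) * P ^ 2 / 2 := by
          ring
  have h₁ : ∀ m, Summable (g m) := fun m =>
    Summable.of_abs (Summable.of_nonneg_of_le (fun _ => abs_nonneg _) (habsg m)
      ((hrowM L m).mul_right (psiM ψ * (bS L * psiM ψ))))
  have h₂ : ∀ n, Summable fun m => g m n := by
    intro n
    have hrow2 : Summable fun m : ℤ => bB L (m + n + 1) :=
      (summable_bB_shift L (n + 1)).congr fun m => by
        rw [show n + 1 + m = m + n + 1 from by ring]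
    exact Summable.of_abs (Summable.of_nonneg_of_le (fun _ => abs_nonneg _)
      (fun m => habsg m n) (hrow2.mul_right (psiM ψ * (bS L * psiM ψ))))
  calc ∑' m : ℤ, (∑' n : ℤ, besselJint L (m + n + 1) * ψ n) ^ 2
      = ∑' m : ℤ, ∑' n : ℤ, g m n := tsum_congr fun m => by
        rw [hgdef, pow_two]
        exact tsum_mul_right.symm
    _ = ∑' n : ℤ, ∑' m : ℤ, g m n := (Summable.tsum_comm' hR h₁ h₂).symm
    _ = ∑' n : ℤ, ψ n * ψ n := tsum_congr fun n => by
        have hswap : ∑' m : ℤ, g m n = ψ n * ∑' m : ℤ, besselJint L (n + m + 1) *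
            (∑' j : ℤ, besselJint L (m + j + 1) * ψ j) := by
          rw [← tsum_mul_left]
          refine tsum_congr fun m => ?_
          rw [hgdef, show n + m + 1 = m + n + 1 from by ring]
          ring
        rw [hswap, part4M L ψ hψ n]
    _ = ∑' n : ℤ, ψ n ^ 2 := tsum_congr fun n => (pow_two _).symm

end Main

/-- for fixed `L > 0` and square-summable `ψ : ℤ' → ℝ`, the series
`(𝒥ψ)(a) = ∑_{b∈ℤ'} J_{a+b}(2L) ψ(b)` converges absolutely for every `a ∈ ℤ'`; the function
`𝒥ψ` is square-summable with `∑_a (𝒥ψ)(a)² = ∑_b ψ(b)²`, and `𝒥(𝒥ψ) = ψ`: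
the kernel `J_{a+b}(2L)` induces a unitary involution of `ℓ²(ℤ')`. -/
theorem besselJ_kernel_unitary_involution (L : ℝ) (hL : 0 < L) (ψ : ℤ → ℝ)
    (hψ : Summable (fun n : ℤ => (ψ n) ^ 2)) :
    (∀ m : ℤ, Summable (fun n : ℤ => |besselJint L (m + n + 1) * ψ n|)) ∧
    Summable (fun m : ℤ => (∑' n : ℤ, besselJint L (m + n + 1) * ψ n) ^ 2) ∧
    ((∑' m : ℤ, (∑' n : ℤ, besselJint L (m + n + 1) * ψ n) ^ 2) = (∑' n : ℤ, (ψ n) ^ 2)) ∧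
    (∀ m : ℤ,
      (∑' n : ℤ, besselJint L (m + n + 1) * (∑' k : ℤ, besselJint L (n + k + 1) * ψ k)) =
        ψ m) :=
  ⟨part1M L ψ hψ, part2M L ψ hψ, part3M L ψ hψ, part4M L ψ hψ⟩
end

section
/- Let σ : ℤ' → [0,1] satisfy Σ_{l∈ℤ', l<0} σ(l) < ∞. Then for every L > 0 and every s ∈ ℤ', the double series Σ_{a∈ℤ', a>s} Σ_{b∈ℤ'} J_{a+b}(2L)² σ(b) is finite. (This is the Hilbert–Schmidt bound showing that the truncated finite-temperature discrete Bessel operator P_s K_σ^Be P_s is trace class.) -/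
lemma abs_besselJnat_le (L : ℝ) (hL : 0 < L) (n : ℕ) :
    |besselJnat L n| ≤ (∑' j : ℕ, (L ^ 2) ^ j / (Nat.factorial j)) * (L ^ n / Nat.factorial n) := by
  have hE : Summable (fun j : ℕ => (L ^ 2) ^ j / (Nat.factorial j)) :=
    Real.summable_pow_div_factorial _
  have hmaj : ∀ j : ℕ,
      |(-1 : ℝ) ^ j * L ^ (2 * j + n) / (Nat.factorial j * Nat.factorial (n + j))|
        ≤ (L ^ 2) ^ j / (Nat.factorial j) * (L ^ n / Nat.factorial n) := by
    intro j
    have h1 : |(-1 : ℝ) ^ j * L ^ (2 * j + n) / (Nat.factorial j * Nat.factorial (n + j))|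
        = L ^ (2 * j + n) / (Nat.factorial j * Nat.factorial (n + j)) := by
      rw [abs_div, abs_mul, abs_pow, abs_neg, abs_one, one_pow, one_mul,
        abs_of_nonneg (by positivity : (0:ℝ) ≤ L ^ (2 * j + n)),
        abs_of_nonneg (by positivity : (0:ℝ) ≤ (Nat.factorial j : ℝ) * Nat.factorial (n + j))]
    rw [h1]
    have hnum : L ^ (2 * j + n) = (L ^ 2) ^ j * L ^ n := by
      rw [pow_add, pow_mul]
    have h2 : (Nat.factorial n : ℝ) ≤ Nat.factorial (n + j) := by
      exact_mod_cast Nat.factorial_le (Nat.le_add_right n j)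
    calc L ^ (2 * j + n) / (Nat.factorial j * Nat.factorial (n + j))
        ≤ L ^ (2 * j + n) / (Nat.factorial j * Nat.factorial n) := by
          have hd0 : (0:ℝ) < (Nat.factorial j : ℝ) * Nat.factorial n := by positivity
          apply div_le_div_of_nonneg_left (by positivity) hd0
          exact mul_le_mul_of_nonneg_left h2 (by positivity)
        _ = (L ^ 2) ^ j / (Nat.factorial j) * (L ^ n / Nat.factorial n) := by
          rw [hnum]; field_simp
  have hmaj_sum : Summable (fun j : ℕ => (L ^ 2) ^ j / (Nat.factorial j) * (L ^ n / Nat.factorial n)) :=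
    hE.mul_right _
  have habs : Summable (fun j : ℕ =>
      |(-1 : ℝ) ^ j * L ^ (2 * j + n) / (Nat.factorial j * Nat.factorial (n + j))|) :=
    Summable.of_nonneg_of_le (fun j => abs_nonneg _) hmaj hmaj_sum
  have habs' : Summable (fun j : ℕ =>
      ‖(-1 : ℝ) ^ j * L ^ (2 * j + n) / (Nat.factorial j * Nat.factorial (n + j))‖) := by
    simpa only [Real.norm_eq_abs] using habs
  have hkey := norm_tsum_le_tsum_norm habs'
  simp only [Real.norm_eq_abs] at hkey
  calc |besselJnat L n| ≤ ∑' j : ℕ,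
        |(-1 : ℝ) ^ j * L ^ (2 * j + n) / (Nat.factorial j * Nat.factorial (n + j))| := by
        rw [besselJnat]; exact hkey
    _ ≤ ∑' j : ℕ, (L ^ 2) ^ j / (Nat.factorial j) * (L ^ n / Nat.factorial n) :=
        Summable.tsum_le_tsum hmaj habs hmaj_sum
    _ = (∑' j : ℕ, (L ^ 2) ^ j / (Nat.factorial j)) * (L ^ n / Nat.factorial n) :=
        hE.tsum_mul_right _

lemma bessel_sq_bound (L : ℝ) (hL : 0 < L) :
    ∃ C : ℝ, 0 ≤ C ∧ ∀ k : ℤ, besselJint L k ^ 2 ≤ C * (1/4 : ℝ) ^ k.natAbs := by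
  set E : ℝ := ∑' j : ℕ, (L ^ 2) ^ j / (Nat.factorial j) with hEdef
  set D : ℝ := ∑' n : ℕ, (2 * L) ^ n / (Nat.factorial n) with hDdef
  have hD : Summable (fun n : ℕ => (2 * L) ^ n / (Nat.factorial n)) :=
    Real.summable_pow_div_factorial _
  have hE0 : 0 ≤ E := tsum_nonneg fun j => by positivity
  have hD0 : 0 ≤ D := tsum_nonneg fun j => by positivity
  have hstep2 : ∀ n : ℕ, L ^ n / Nat.factorial n ≤ D * (1/2 : ℝ) ^ n := by
    intro n
    have h1 : (2 * L) ^ n / Nat.factorial n ≤ D :=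
      Summable.le_tsum hD n fun j _ => by positivity
    have h2 : L ^ n / Nat.factorial n = (2 * L) ^ n / Nat.factorial n * (1/2 : ℝ) ^ n := by
      rw [mul_pow]
      field_simp
      ring_nf
      rw [← mul_pow]; norm_num
    rw [h2]
    have : (0:ℝ) ≤ (1/2 : ℝ) ^ n := by positivity
    exact mul_le_mul_of_nonneg_right h1 this
  have hnat : ∀ n : ℕ, |besselJnat L n| ≤ E * D * (1/2 : ℝ) ^ n := by
    intro n
    calc |besselJnat L n| ≤ E * (L ^ n / Nat.factorial n) := abs_besselJnat_le L hL n
      _ ≤ E * (D * (1/2 : ℝ) ^ n) := by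
          exact mul_le_mul_of_nonneg_left (hstep2 n) hE0
      _ = E * D * (1/2 : ℝ) ^ n := by ring
  have hint : ∀ k : ℤ, |besselJint L k| ≤ E * D * (1/2 : ℝ) ^ k.natAbs := by
    intro k
    unfold besselJint
    split_ifs with h
    · have : k.toNat = k.natAbs := Int.toNat_of_nonneg h ▸ by omega
      rw [this]; exact hnat _
    · rw [abs_mul, abs_pow, abs_neg, abs_one, one_pow, one_mul]
      have : (-k).toNat = k.natAbs := by omega
      rw [this]; exact hnat _
  refine ⟨(E * D) ^ 2, by positivity, fun k => ?_⟩
  have h1 : besselJint L k ^ 2 = |besselJint L k| ^ 2 := (sq_abs _).symm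
  rw [h1]
  calc |besselJint L k| ^ 2 ≤ (E * D * (1/2 : ℝ) ^ k.natAbs) ^ 2 := by
        exact pow_le_pow_left₀ (abs_nonneg _) (hint k) 2
    _ = (E * D) ^ 2 * (1/4 : ℝ) ^ k.natAbs := by
        rw [mul_pow, ← pow_mul, Nat.mul_comm, pow_mul]
        norm_num

noncomputable def Haux : ℤ → ℝ := fun k => (1/4 : ℝ) ^ k.natAbs

lemma Haux_summable : Summable Haux := by
  apply Summable.of_nat_of_neg
  · simpa [Haux] using
      summable_geometric_of_lt_one (by norm_num : (0:ℝ) ≤ 1/4) (by norm_num)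
  · simpa [Haux] using
      summable_geometric_of_lt_one (by norm_num : (0:ℝ) ≤ 1/4) (by norm_num)

lemma Haux_nonneg (k : ℤ) : 0 ≤ Haux k := by unfold Haux; positivity

lemma Haux_zpow (k : ℤ) : Haux k = (4:ℝ) ^ (-(k.natAbs : ℤ)) := by
  rw [zpow_neg, zpow_natCast]
  simp only [Haux, one_div, inv_pow]

lemma Haux_le (k : ℤ) : Haux k ≤ (4:ℝ) ^ (-k) := by
  rw [Haux_zpow]
  exact zpow_le_zpow_right₀ (by norm_num) (by omega)

lemma Haux_eq (k : ℤ) (hk : 0 ≤ k) : (4:ℝ) ^ (-k) = Haux k := by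
  rw [Haux_zpow]
  congr 1
  omega

set_option maxHeartbeats 1000000 in
lemma aux_pos (u σ : ℤ → ℝ) (C : ℝ) (hC0 : 0 ≤ C)
    (hub : ∀ k, u k ≤ C * Haux k) (hσ0 : ∀ k, 0 ≤ σ k) (hσ1 : ∀ k, σ k ≤ 1)
    (hu0 : ∀ k, 0 ≤ u k) (t : ℤ) :
    Summable (fun p : {m : ℤ // t < m} × ℤ =>
      if p.2 < 0 then 0 else u ((p.1 : ℤ) + p.2 + 1) * σ p.2) := by
  have hinj : Function.Injective (fun m : {m : ℤ // t < m} => (m : ℤ) - t - 1) := by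
    intro a b hab
    have h2 : (a : ℤ) - t - 1 = (b : ℤ) - t - 1 := hab
    exact Subtype.ext (by omega)
  have hsub : Summable (fun m : {m : ℤ // t < m} => Haux ((m : ℤ) - t - 1)) :=
    (Haux_summable.comp_injective hinj).congr fun _ => rfl
  have hmul : Summable (fun p : {m : ℤ // t < m} × ℤ =>
      Haux ((p.1 : ℤ) - t - 1) * Haux p.2) :=
    Summable.mul_of_nonneg hsub Haux_summable (fun m => Haux_nonneg _) (fun n => Haux_nonneg _)
  apply Summable.of_nonneg_of_le
    (f := fun p : {m : ℤ // t < m} × ℤ =>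
      (C * (4:ℝ) ^ (-(t+2))) * (Haux ((p.1 : ℤ) - t - 1) * Haux p.2))
  · intro p
    by_cases h : p.2 < 0 <;>
      simp [h, mul_nonneg (hu0 _) (hσ0 _)]
  · rintro ⟨⟨m, hm⟩, n⟩
    by_cases h : n < 0
    · simp only [if_pos h]
      have := Haux_nonneg ((m : ℤ) - t - 1)
      have := Haux_nonneg n
      have : (0:ℝ) < (4:ℝ) ^ (-(t+2)) := zpow_pos (by norm_num) _
      positivity
    · push_neg at h
      simp only [if_neg (not_lt.mpr h)]
      have step1 : u (m + n + 1) * σ n ≤ C * Haux (m + n + 1) := by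
        calc u (m + n + 1) * σ n ≤ u (m + n + 1) * 1 :=
              mul_le_mul_of_nonneg_left (hσ1 n) (hu0 _)
          _ = u (m + n + 1) := mul_one _
          _ ≤ C * Haux (m + n + 1) := hub _
      have step2 : Haux (m + n + 1) ≤ (4:ℝ) ^ (-(t+2)) * (Haux (m - t - 1) * Haux n) := by
        calc Haux (m + n + 1) ≤ (4:ℝ) ^ (-(m + n + 1)) := Haux_le _
          _ = (4:ℝ) ^ (-(t+2)) * ((4:ℝ) ^ (-(m - t - 1)) * (4:ℝ) ^ (-n)) := by
              rw [← zpow_add₀ (by norm_num : (4:ℝ) ≠ 0),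
                ← zpow_add₀ (by norm_num : (4:ℝ) ≠ 0)]
              ring_nf
          _ = (4:ℝ) ^ (-(t+2)) * (Haux (m - t - 1) * Haux n) := by
              rw [Haux_eq (m - t - 1) (by omega), Haux_eq n h]
      calc u ((m : ℤ) + n + 1) * σ n ≤ C * Haux (m + n + 1) := step1
        _ ≤ C * ((4:ℝ) ^ (-(t+2)) * (Haux (m - t - 1) * Haux n)) :=
            mul_le_mul_of_nonneg_left step2 hC0
        _ = (C * (4:ℝ) ^ (-(t+2))) * (Haux (m - t - 1) * Haux n) := by ring
  · exact hmul.mul_left _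

lemma aux_neg (u σ : ℤ → ℝ) (C : ℝ) (hC0 : 0 ≤ C)
    (hub : ∀ k, u k ≤ C * Haux k) (hσ0 : ∀ k, 0 ≤ σ k)
    (hu0 : ∀ k, 0 ≤ u k)
    (hsum : Summable (fun k : {k : ℤ // k < 0} => σ k)) (t : ℤ) :
    Summable (fun p : {m : ℤ // t < m} × ℤ =>
      if p.2 < 0 then u ((p.1 : ℤ) + p.2 + 1) * σ p.2 else 0) := by
  set F : ℤ × {m : ℤ // t < m} → ℝ :=
    fun q => if q.1 < 0 then u ((q.2 : ℤ) + q.1 + 1) * σ q.1 else 0 with hFdef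
  have hF0 : ∀ q, 0 ≤ F q := by
    intro q
    by_cases h : q.1 < 0 <;> simp [hFdef, h, mul_nonneg (hu0 _) (hσ0 _)]
  have hFb : ∀ (n : ℤ) (m : {m : ℤ // t < m}),
      F (n, m) ≤ Set.indicator {k : ℤ | k < 0} σ n * (C * Haux ((m : ℤ) + n + 1)) := by
    intro n m
    by_cases h : n < 0
    · rw [hFdef]
      simp only [if_pos h]
      rw [Set.indicator_of_mem (show n ∈ {k : ℤ | k < 0} from h)]
      calc u ((m : ℤ) + n + 1) * σ n ≤ (C * Haux ((m : ℤ) + n + 1)) * σ n :=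
            mul_le_mul_of_nonneg_right (hub _) (hσ0 _)
        _ = σ n * (C * Haux ((m : ℤ) + n + 1)) := by ring
    · rw [hFdef]
      simp only [if_neg h]
      rw [Set.indicator_of_notMem (show n ∉ {k : ℤ | k < 0} from h)]
      simp
  have hfib : ∀ n : ℤ, Summable (fun m : {m : ℤ // t < m} =>
      C * Haux ((m : ℤ) + n + 1)) := by
    intro n
    have hinj : Function.Injective (fun m : {m : ℤ // t < m} => (m : ℤ) + n + 1) := by
      intro a b hab
      have h2 : (a : ℤ) + n + 1 = (b : ℤ) + n + 1 := hab
      exact Subtype.ext (by omega)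
    exact (((Haux_summable.mul_left C).comp_injective hinj).congr fun _ => rfl)
  have hfibind : ∀ n : ℤ, Summable (fun m : {m : ℤ // t < m} =>
      Set.indicator {k : ℤ | k < 0} σ n * (C * Haux ((m : ℤ) + n + 1))) :=
    fun n => (hfib n).mul_left _
  have hFfib : ∀ n : ℤ, Summable (fun m : {m : ℤ // t < m} => F (n, m)) :=
    fun n => Summable.of_nonneg_of_le (fun m => hF0 _) (hFb n) (hfibind n)
  have hS : Summable (fun k : ℤ => C * Haux k) := Haux_summable.mul_left C
  have htsum : ∀ n : ℤ, ∑' m : {m : ℤ // t < m}, F (n, m) ≤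
      Set.indicator {k : ℤ | k < 0} σ n * ∑' k : ℤ, C * Haux k := by
    intro n
    have hind0 : 0 ≤ Set.indicator {k : ℤ | k < 0} σ n :=
      Set.indicator_nonneg (fun k _ => hσ0 k) n
    calc ∑' m : {m : ℤ // t < m}, F (n, m)
        ≤ ∑' m : {m : ℤ // t < m},
            Set.indicator {k : ℤ | k < 0} σ n * (C * Haux ((m : ℤ) + n + 1)) :=
          Summable.tsum_le_tsum (hFb n) (hFfib n) (hfibind n)
      _ = Set.indicator {k : ℤ | k < 0} σ n *
            ∑' m : {m : ℤ // t < m}, C * Haux ((m : ℤ) + n + 1) :=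
          (hfib n).tsum_mul_left _
      _ ≤ Set.indicator {k : ℤ | k < 0} σ n * ∑' k : ℤ, C * Haux k := by
          apply mul_le_mul_of_nonneg_left _ hind0
          have hinj : Function.Injective (fun m : {m : ℤ // t < m} => (m : ℤ) + n + 1) := by
            intro a b hab
            have h2 : (a : ℤ) + n + 1 = (b : ℤ) + n + 1 := hab
            exact Subtype.ext (by omega)
          exact tsum_comp_le_tsum_of_inj hS (fun k => mul_nonneg hC0 (Haux_nonneg k)) hinj
  have houter : Summable (fun n : ℤ =>
      Set.indicator {k : ℤ | k < 0} σ n * ∑' k : ℤ, C * Haux k) := by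
    have hind : Summable (Set.indicator {k : ℤ | k < 0} σ) :=
      summable_subtype_iff_indicator.mp hsum
    exact hind.mul_right _
  have hFsum : Summable F :=
    (summable_prod_of_nonneg hF0).mpr
      ⟨hFfib, Summable.of_nonneg_of_le (fun n => tsum_nonneg fun m => hF0 _) htsum houter⟩
  have h2 := (Equiv.prodComm {m : ℤ // t < m} ℤ).summable_iff.mpr hFsum
  exact h2.congr fun p => rfl

/-- if `σ : ℤ' → [0,1]` satisfies `∑_{l<0} σ(l) < ∞`, then for every `L > 0`
and `s ∈ ℤ'`, the double series `∑_{a>s} ∑_{b∈ℤ'} J_{a+b}(2L)² σ(b)` is finite (the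
Hilbert–Schmidt bound showing `P_s K_σ^Be P_s` is trace class). -/
theorem hilbertSchmidt_bound (σ : ℤ → ℝ) (hσ : ∀ k : ℤ, σ k ∈ Set.Icc (0 : ℝ) 1)
    (hsum : Summable (fun k : {k : ℤ // k < 0} => σ k)) (L : ℝ) (hL : 0 < L) (t : ℤ) :
    Summable (fun p : {m : ℤ // t < m} × ℤ =>
      besselJint L ((p.1 : ℤ) + p.2 + 1) ^ 2 * σ p.2) := by
  obtain ⟨C, hC0, hCb⟩ := bessel_sq_bound L hL
  have hub : ∀ k : ℤ, besselJint L k ^ 2 ≤ C * Haux k := fun k => hCb k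
  have hu0 : ∀ k : ℤ, 0 ≤ besselJint L k ^ 2 := fun k => sq_nonneg _
  have hσ0 : ∀ k, 0 ≤ σ k := fun k => (hσ k).1
  have hσ1 : ∀ k, σ k ≤ 1 := fun k => (hσ k).2
  have hneg := aux_neg (fun k => besselJint L k ^ 2) σ C hC0 hub hσ0 hu0 hsum t
  have hpos := aux_pos (fun k => besselJint L k ^ 2) σ C hC0 hub hσ0 hσ1 hu0 t
  exact (hneg.add hpos).congr fun p => by by_cases h : p.2 < 0 <;> simp [h]
end
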